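/- arXiv:2302.08781 — 6 statements merged into one kernel-verified Lean document; each statement's English description precedes it below -/
import Mathlib

section
/- Let X be a real n×N₁ matrix, Y a real m×N₁ matrix, U a real m×N₂ matrix, V a real n×N₂ matrix, and L ≥ 0. There exists a real m×n matrix M with σ_max(M) ≤ L (equivalently, MᵀM ⪯ L²·I) such that Y = M·X and V = Mᵀ·U if and only if the following three conditions hold: Xᵀ·V = Yᵀ·U, Yᵀ·Y ⪯ L²·Xᵀ·X, and Vᵀ·V ⪯ L²·Uᵀ·U. -/
open Matrix LinearMap




variable {E F G : Type*}
  [NormedAddCommGroup E] [InnerProductSpace ℝ E] [FiniteDimensional ℝ E]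
  [NormedAddCommGroup F] [InnerProductSpace ℝ F] [FiniteDimensional ℝ F]
  [NormedAddCommGroup G] [InnerProductSpace ℝ G] [FiniteDimensional ℝ G]

local notation "⟪" x ", " y "⟫" => inner (𝕜 := ℝ) x y

/-- Workhorse: lift a norm-dominated map through another map, getting a contraction. -/
lemma lift_contraction (g : E →ₗ[ℝ] F) (f : E →ₗ[ℝ] G) (h : ∀ w, ‖f w‖ ≤ ‖g w‖) :
    ∃ H : F →ₗ[ℝ] G, (∀ z, ‖H z‖ ≤ ‖z‖) ∧ H ∘ₗ g = f ∧
      (∀ z ∈ (LinearMap.range g)ᗮ, H z = 0) ∧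
      (∀ z, ∃ w, H z = f w) := by
  have hker : LinearMap.ker g ≤ LinearMap.ker f := by
    intro w hw
    simp only [LinearMap.mem_ker] at *
    have h2 := h w
    rw [hw, norm_zero] at h2
    exact norm_eq_zero.mp (le_antisymm h2 (norm_nonneg _))
  set K := LinearMap.range g with hK
  let fbar : (E ⧸ LinearMap.ker g) →ₗ[ℝ] G := (LinearMap.ker g).liftQ f hker
  let geq : (E ⧸ LinearMap.ker g) ≃ₗ[ℝ] K := g.quotKerEquivRange
  let H₀ : K →ₗ[ℝ] G := fbar ∘ₗ (geq.symm : K →ₗ[ℝ] (E ⧸ LinearMap.ker g))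
  let H : F →ₗ[ℝ] G := H₀ ∘ₗ (Submodule.orthogonalProjectionOnto K).toLinearMap
  have key : ∀ k : K, ∃ w, g w = (k : F) ∧ H₀ k = f w := by
    rintro ⟨kk, wk, rfl⟩
    refine ⟨wk, rfl, ?_⟩
    show fbar (geq.symm ⟨g wk, _⟩) = f wk
    rw [show (geq.symm ⟨g wk, by exact ⟨wk, rfl⟩⟩) = (LinearMap.ker g).mkQ wk from
      g.quotKerEquivRange_symm_apply_image wk _]
    simp [fbar]
  have happ : ∀ z : F, ∃ w, g w = ((Submodule.orthogonalProjectionOnto K z : K) : F) ∧ H z = f w := by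
    intro z
    obtain ⟨w, hw1, hw2⟩ := key (Submodule.orthogonalProjectionOnto K z)
    exact ⟨w, hw1, hw2⟩
  refine ⟨H, ?_, ?_, ?_, ?_⟩
  · intro z
    obtain ⟨w, hw1, hw2⟩ := happ z
    rw [hw2]
    calc ‖f w‖ ≤ ‖g w‖ := h w
      _ = ‖((Submodule.orthogonalProjectionOnto K z : K) : F)‖ := by rw [hw1]
      _ = ‖(Submodule.orthogonalProjectionOnto K z : K)‖ := rfl
      _ ≤ ‖z‖ := by
          have := (Submodule.orthogonalProjectionOnto K).le_opNorm z
          have h1 := Submodule.orthogonalProjectionOnto_norm_le K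
          nlinarith [norm_nonneg z]
  · ext w
    show H (g w) = f w
    have hm : g w ∈ K := ⟨w, rfl⟩
    have hself : ((Submodule.orthogonalProjectionOnto K (g w) : K) : F) = g w :=
      Submodule.starProjection_eq_self_iff.mpr hm
    obtain ⟨w', hw1, hw2⟩ := happ (g w)
    rw [hw2]
    have hgw : g w' = g w := by rw [hw1, hself]
    have : w' - w ∈ LinearMap.ker g := by simp [LinearMap.mem_ker, map_sub, hgw]
    have := hker this
    simp only [LinearMap.mem_ker, map_sub, sub_eq_zero] at this
    exact this
  · intro z hz
    show H₀ (Submodule.orthogonalProjectionOnto K z) = 0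
    rw [Submodule.orthogonalProjectionOnto_apply_of_mem_orthogonal hz]
    simp
  · intro z
    obtain ⟨w, _, hw2⟩ := happ z
    exact ⟨w, hw2⟩

lemma norm_le_of_sq_le_sq {a b : ℝ} (hb : 0 ≤ b) (h : a * a ≤ b * b) (ha : 0 ≤ a) : a ≤ b := by
  nlinarith

lemma adjoint_contraction (T : E →ₗ[ℝ] F) (h : ∀ z, ‖T z‖ ≤ ‖z‖) :
    ∀ w, ‖LinearMap.adjoint T w‖ ≤ ‖w‖ := by
  intro w
  set s := LinearMap.adjoint T w with hs
  have h1 : ‖s‖ * ‖s‖ = ⟪T s, w⟫ := by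
    rw [← LinearMap.adjoint_inner_right]
    exact (real_inner_self_eq_norm_mul_norm s).symm
  have h2 : ⟪T s, w⟫ ≤ ‖T s‖ * ‖w‖ := real_inner_le_norm _ _
  have h3 : ‖T s‖ ≤ ‖s‖ := h s
  rcases eq_or_lt_of_le (norm_nonneg s) with h4 | h4
  · rw [← h4]; exact norm_nonneg w
  · have : ‖s‖ * ‖s‖ ≤ ‖s‖ * ‖w‖ := by
      calc ‖s‖ * ‖s‖ = ⟪T s, w⟫ := h1
        _ ≤ ‖T s‖ * ‖w‖ := h2
        _ ≤ ‖s‖ * ‖w‖ := by nlinarith [norm_nonneg w]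
    exact le_of_mul_le_mul_left this h4

lemma exists_sqrt (T2 : E →ₗ[ℝ] E) (hsym : T2.IsSymmetric) (hpsd : ∀ v, 0 ≤ ⟪T2 v, v⟫) :
    ∃ T : E →ₗ[ℝ] E, T.IsSymmetric ∧ (∀ v, 0 ≤ ⟪T v, v⟫) ∧ T ∘ₗ T = T2 := by
  classical
  have hn : Module.finrank ℝ E = Module.finrank ℝ E := rfl
  let b := hsym.eigenvectorBasis hn
  let μ := hsym.eigenvalues hn
  have hb : ∀ i, T2 (b i) = μ i • b i := fun i => hsym.apply_eigenvectorBasis hn i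
  have hortho : ∀ i j, ⟪b i, b j⟫ = if i = j then (1:ℝ) else 0 :=
    fun i j => orthonormal_iff_ite.mp b.orthonormal i j
  have hμ : ∀ i, 0 ≤ μ i := by
    intro i
    have h1 := hpsd (b i)
    rw [hb i, real_inner_smul_left, hortho i i] at h1
    simpa using h1
  let T : E →ₗ[ℝ] E := b.toBasis.constr ℝ (fun i => Real.sqrt (μ i) • b i)
  have hT : ∀ i, T (b i) = Real.sqrt (μ i) • b i := fun i => by
    simpa [T] using b.toBasis.constr_basis ℝ (fun i => Real.sqrt (μ i) • b i) i
  have hadj : T = LinearMap.adjoint T := by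
    rw [LinearMap.eq_adjoint_iff_basis b.toBasis b.toBasis]
    intro i j
    simp only [OrthonormalBasis.coe_toBasis, hT, real_inner_smul_left, real_inner_smul_right,
      hortho]
    by_cases hij : i = j
    · subst hij; ring
    · simp only [if_neg hij]; ring
  have hTsym : T.IsSymmetric := (LinearMap.isSymmetric_iff_isSelfAdjoint T).mpr
    (LinearMap.isSelfAdjoint_iff'.mpr hadj.symm)
  refine ⟨T, hTsym, ?_, ?_⟩
  · intro v
    have hrepr : (∑ i, b.repr v i • b i) = v := b.sum_repr v
    have hTv : T v = ∑ i, b.repr v i • (Real.sqrt (μ i) • b i) := by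
      conv_lhs => rw [← hrepr]
      rw [map_sum]
      simp [hT]
    have key : ⟪T v, v⟫ = ∑ i, Real.sqrt (μ i) * (b.repr v i * b.repr v i) := by
      rw [hTv, sum_inner]
      apply Finset.sum_congr rfl
      intro i _
      rw [real_inner_smul_left, real_inner_smul_left, ← OrthonormalBasis.repr_apply_apply]
      ring
    rw [key]
    apply Finset.sum_nonneg
    intro i _
    have := Real.sqrt_nonneg (μ i)
    nlinarith [mul_self_nonneg (b.repr v i)]
  · apply Module.Basis.ext b.toBasis
    intro i
    have h2 : T (T (b i)) = μ i • b i := by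
      rw [hT i, LinearMap.map_smul, hT i, smul_smul, Real.mul_self_sqrt (hμ i)]
    simpa [hb i] using h2

lemma sqrt_intertwine (S : F →ₗ[ℝ] F) (T : E →ₗ[ℝ] E) (A : E →ₗ[ℝ] F)
    (hSsym : S.IsSymmetric) (hSpsd : ∀ v, 0 ≤ ⟪S v, v⟫)
    (hTsym : T.IsSymmetric) (hTpsd : ∀ v, 0 ≤ ⟪T v, v⟫)
    (h : ∀ z, S (S (A z)) = A (T (T z))) : ∀ z, S (A z) = A (T z) := by
  classical
  have hn : Module.finrank ℝ E = Module.finrank ℝ E := rfl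
  let b := hTsym.eigenvectorBasis hn
  let μ := hTsym.eigenvalues hn
  have hb : ∀ i, T (b i) = μ i • b i := fun i => hTsym.apply_eigenvectorBasis hn i
  have hμ : ∀ i, 0 ≤ μ i := by
    intro i
    have h1 := hTpsd (b i)
    rw [hb i, real_inner_smul_left, orthonormal_iff_ite.mp b.orthonormal i i] at h1
    simpa using h1
  have key : ∀ i, S (A (b i)) = μ i • A (b i) := by
    intro i
    have hsq : S (S (A (b i))) = (μ i * μ i) • A (b i) := by
      rw [h (b i), hb i, LinearMap.map_smul, hb i, smul_smul, LinearMap.map_smul]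
    rcases eq_or_lt_of_le (hμ i) with h0 | h0
    · -- μ i = 0
      have hSS : S (S (A (b i))) = 0 := by rw [hsq, ← h0]; simp
      have : ‖S (A (b i))‖ ^ 2 = 0 := by
        rw [← real_inner_self_eq_norm_sq, ← hSsym (S (A (b i))) (A (b i)), hSS,
          inner_zero_left]
      have h2 : S (A (b i)) = 0 := by
        have := pow_eq_zero_iff (n := 2) (by norm_num) |>.mp this
        exact norm_eq_zero.mp this
      rw [h2, ← h0]; simp
    · -- μ i > 0
      set z := S (A (b i)) - μ i • A (b i) with hz
      have hz1 : S z + μ i • z = 0 := by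
        rw [hz]
        simp only [map_sub, LinearMap.map_smul, smul_sub, hsq, smul_smul]
        abel
      have hz2 : ⟪S z, z⟫ + μ i * ⟪z, z⟫ = 0 := by
        have := congrArg (fun w => ⟪w, z⟫) hz1
        simpa [inner_add_left, real_inner_smul_left] using this
      have hz3 : ⟪z, z⟫ ≤ 0 := by nlinarith [hSpsd z, real_inner_self_nonneg (x := z)]
      have hz0 : z = 0 := by
        rw [← inner_self_eq_zero (𝕜 := ℝ)]
        exact le_antisymm hz3 real_inner_self_nonneg
      have := sub_eq_zero.mp (hz ▸ hz0)
      exact this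
  have hcomp : S ∘ₗ A = A ∘ₗ T := by
    apply Module.Basis.ext b.toBasis
    intro i
    simp only [OrthonormalBasis.coe_toBasis, LinearMap.comp_apply, key i, hb i,
      LinearMap.map_smul]
  intro z
  exact LinearMap.ext_iff.mp hcomp z




variable {E F G : Type*}
  [NormedAddCommGroup E] [InnerProductSpace ℝ E] [FiniteDimensional ℝ E]
  [NormedAddCommGroup F] [InnerProductSpace ℝ F] [FiniteDimensional ℝ F]
  [NormedAddCommGroup G] [InnerProductSpace ℝ G] [FiniteDimensional ℝ G]



lemma proj_pyth (P : E →ₗ[ℝ] E) (hsym : ∀ z w, ⟪P z, w⟫ = ⟪z, P w⟫)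
    (hid : ∀ z, P (P z) = P z) (z : E) :
    ‖z‖ ^ 2 = ‖P z‖ ^ 2 + ‖z - P z‖ ^ 2 := by
  have horth : ⟪P z, z - P z⟫ = 0 := by
    rw [hsym]
    simp [map_sub, hid]
  have hz : z = P z + (z - P z) := by abel
  calc ‖z‖ ^ 2 = ‖P z + (z - P z)‖ ^ 2 := by rw [← hz]
    _ = ‖P z‖ ^ 2 + 2 * ⟪P z, z - P z⟫ + ‖z - P z‖ ^ 2 := norm_add_sq_real _ _
    _ = ‖P z‖ ^ 2 + ‖z - P z‖ ^ 2 := by rw [horth]; ring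

variable {E₁ E₂ F₁ F₂ : Type*}
  [NormedAddCommGroup E₁] [InnerProductSpace ℝ E₁] [FiniteDimensional ℝ E₁]
  [NormedAddCommGroup E₂] [InnerProductSpace ℝ E₂] [FiniteDimensional ℝ E₂]
  [NormedAddCommGroup F₁] [InnerProductSpace ℝ F₁] [FiniteDimensional ℝ F₁]
  [NormedAddCommGroup F₂] [InnerProductSpace ℝ F₂] [FiniteDimensional ℝ F₂]

set_option maxHeartbeats 10000000 in
theorem core_interpolation
    (x : F₁ →ₗ[ℝ] E₁) (y : F₁ →ₗ[ℝ] E₂) (u : F₂ →ₗ[ℝ] E₂) (v : F₂ →ₗ[ℝ] E₁)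
    (h1 : ∀ c d, ⟪x c, v d⟫ = ⟪y c, u d⟫)
    (h2 : ∀ c, ‖y c‖ ≤ ‖x c‖) (h3 : ∀ d, ‖v d‖ ≤ ‖u d‖) :
    ∃ M : E₁ →ₗ[ℝ] E₂, (∀ z, ‖M z‖ ≤ ‖z‖) ∧ (∀ c, M (x c) = y c) ∧
      (∀ d, LinearMap.adjoint M (u d) = v d) := by
  classical
  obtain ⟨M₀, hM₀c, hM₀x, hM₀perp, _⟩ := lift_contraction x y h2
  obtain ⟨N₀, hN₀c, hN₀u, hN₀perp, _⟩ := lift_contraction u v h3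
  have hM₀x' : ∀ c, M₀ (x c) = y c := fun c => LinearMap.ext_iff.mp hM₀x c
  have hN₀u' : ∀ d, N₀ (u d) = v d := fun d => LinearMap.ext_iff.mp hN₀u d
  set K₁ := LinearMap.range x with hK₁
  set K₂ := LinearMap.range u with hK₂
  set Pl : E₁ →ₗ[ℝ] E₁ := K₁.subtype ∘ₗ (Submodule.orthogonalProjectionOnto K₁).toLinearMap with hPl
  set Ql : E₂ →ₗ[ℝ] E₂ := K₂.subtype ∘ₗ (Submodule.orthogonalProjectionOnto K₂).toLinearMap with hQl
  -- basic projection facts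
  have hPmem : ∀ z, ∃ c, x c = Pl z := fun z => (Submodule.orthogonalProjectionOnto K₁ z).2
  have hQmem : ∀ z, ∃ d, u d = Ql z := fun z => (Submodule.orthogonalProjectionOnto K₂ z).2
  have hPfix : ∀ z, z ∈ K₁ → Pl z = z := fun z hz =>
    Submodule.starProjection_eq_self_iff.mpr hz
  have hQfix : ∀ z, z ∈ K₂ → Ql z = z := fun z hz =>
    Submodule.starProjection_eq_self_iff.mpr hz
  have hPx : ∀ c, Pl (x c) = x c := fun c => hPfix _ ⟨c, rfl⟩
  have hQu : ∀ d, Ql (u d) = u d := fun d => hQfix _ ⟨d, rfl⟩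
  have hPid : ∀ z, Pl (Pl z) = Pl z := by
    intro z; obtain ⟨c, hc⟩ := hPmem z; rw [← hc, hPx]
  have hQid : ∀ z, Ql (Ql z) = Ql z := by
    intro z; obtain ⟨d, hd⟩ := hQmem z; rw [← hd, hQu]
  have hPsym : ∀ z w, ⟪Pl z, w⟫ = ⟪z, Pl w⟫ := fun z w =>
    Submodule.inner_starProjection_left_eq_right (K := K₁) z w
  have hQsym : ∀ z w, ⟪Ql z, w⟫ = ⟪z, Ql w⟫ := fun z w =>
    Submodule.inner_starProjection_left_eq_right (K := K₂) z w
  have hPperp : ∀ z, z - Pl z ∈ K₁ᗮ := fun z => Submodule.sub_starProjection_mem_orthogonal (K := K₁) z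
  have hQperp : ∀ z, z - Ql z ∈ K₂ᗮ := fun z => Submodule.sub_starProjection_mem_orthogonal (K := K₂) z
  have hPpyth : ∀ z, ‖z‖ ^ 2 = ‖Pl z‖ ^ 2 + ‖z - Pl z‖ ^ 2 :=
    proj_pyth Pl hPsym hPid
  have hQpyth : ∀ z, ‖z‖ ^ 2 = ‖Ql z‖ ^ 2 + ‖z - Ql z‖ ^ 2 :=
    proj_pyth Ql hQsym hQid
  have hQcon : ∀ z, ‖Ql z‖ ≤ ‖z‖ := by
    intro z
    have := hQpyth z
    nlinarith [sq_nonneg ‖z - Ql z‖, norm_nonneg (Ql z), norm_nonneg z]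
  have hPnorm : ∀ a, ⟪a, Pl a⟫ = ‖Pl a‖ ^ 2 := by
    intro a
    calc ⟪a, Pl a⟫ = ⟪a, Pl (Pl a)⟫ := by rw [hPid]
      _ = ⟪Pl a, Pl a⟫ := (hPsym _ _).symm
      _ = ‖Pl a‖ ^ 2 := real_inner_self_eq_norm_sq _
  have hQnorm : ∀ a, ⟪a, Ql a⟫ = ‖Ql a‖ ^ 2 := by
    intro a
    calc ⟪a, Ql a⟫ = ⟪a, Ql (Ql a)⟫ := by rw [hQid]
      _ = ⟪Ql a, Ql a⟫ := (hQsym _ _).symm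
      _ = ‖Ql a‖ ^ 2 := real_inner_self_eq_norm_sq _
  -- M₀, N₀ interplay with projections
  have hM₀P : ∀ z, M₀ (Pl z) = M₀ z := by
    intro z
    have h0 : M₀ (z - Pl z) = 0 := hM₀perp _ (hPperp z)
    rw [map_sub, sub_eq_zero] at h0
    exact h0.symm
  have hN₀Q : ∀ w, N₀ (Ql w) = N₀ w := by
    intro w
    have h0 : N₀ (w - Ql w) = 0 := hN₀perp _ (hQperp w)
    rw [map_sub, sub_eq_zero] at h0
    exact h0.symm
  set M₀t := LinearMap.adjoint M₀ with hM₀t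
  set N₀t := LinearMap.adjoint N₀ with hN₀t
  have hM₀t_l : ∀ a b, ⟪M₀t a, b⟫ = ⟪a, M₀ b⟫ := fun a b => by
    rw [hM₀t]; exact LinearMap.adjoint_inner_left _ _ _
  have hM₀t_r : ∀ a b, ⟪a, M₀t b⟫ = ⟪M₀ a, b⟫ := fun a b => by
    rw [hM₀t]; exact LinearMap.adjoint_inner_right _ _ _
  have hN₀t_l : ∀ a b, ⟪N₀t a, b⟫ = ⟪a, N₀ b⟫ := fun a b => by
    rw [hN₀t]; exact LinearMap.adjoint_inner_left _ _ _
  have hM₀tc : ∀ w, ‖M₀t w‖ ≤ ‖w‖ := adjoint_contraction M₀ hM₀c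
  have hPM₀t : ∀ ζ, Pl (M₀t ζ) = M₀t ζ := by
    intro ζ
    apply ext_inner_right ℝ
    intro w
    rw [hPsym, hM₀t_l, hM₀t_l, hM₀P]
  have hQN₀t : ∀ ζ, Ql (N₀t ζ) = N₀t ζ := by
    intro ζ
    apply ext_inner_right ℝ
    intro w
    rw [hQsym, hN₀t_l, hN₀t_l, hN₀Q]
  -- compatibility
  have hcompat : ∀ z, Ql (M₀ (Pl z)) = Ql (N₀t (Pl z)) := by
    intro z
    obtain ⟨c, hc⟩ := hPmem z
    rw [← hc]
    set g := M₀ (x c) - N₀t (x c) with hg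
    obtain ⟨d, hd⟩ := hQmem g
    have e0 : ⟪g, u d⟫ = 0 := by
      rw [hg, inner_sub_left, hM₀x' c, hN₀t_l, hN₀u' d, h1 c d, sub_self]
    have e1 : ⟪Ql g, Ql g⟫ = 0 := by
      calc ⟪Ql g, Ql g⟫ = ⟪g, Ql (Ql g)⟫ := hQsym _ _
        _ = ⟪g, Ql g⟫ := by rw [hQid]
        _ = ⟪g, u d⟫ := by rw [hd]
        _ = 0 := e0
    have e2 : Ql g = 0 := inner_self_eq_zero.mp e1
    have e3 : Ql (M₀ (x c)) - Ql (N₀t (x c)) = 0 := by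
      rw [← map_sub, ← hg]
      exact e2
    exact sub_eq_zero.mp e3
  -- the square operators
  set Tsq : E₁ →ₗ[ℝ] E₁ := Pl - M₀t ∘ₗ (Ql ∘ₗ M₀) with hTsqdef
  set Ssq : E₂ →ₗ[ℝ] E₂ := Ql - Ql ∘ₗ (M₀ ∘ₗ (M₀t ∘ₗ Ql)) with hSsqdef
  have hTsqa : ∀ z, Tsq z = Pl z - M₀t (Ql (M₀ z)) := fun z => rfl
  have hSsqa : ∀ w, Ssq w = Ql w - Ql (M₀ (M₀t (Ql w))) := fun w => rfl
  have hQMQ : ∀ w, ⟪w, M₀t (Ql (M₀ w))⟫ = ‖Ql (M₀ w)‖ ^ 2 := by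
    intro w
    rw [hM₀t_r, hQnorm]
  have hMMQ : ∀ w, ⟪w, Ql (M₀ (M₀t (Ql w)))⟫ = ‖M₀t (Ql w)‖ ^ 2 := by
    intro w
    calc ⟪w, Ql (M₀ (M₀t (Ql w)))⟫ = ⟪Ql w, M₀ (M₀t (Ql w))⟫ := (hQsym _ _).symm
      _ = ⟪M₀t (Ql w), M₀t (Ql w)⟫ := (hM₀t_l _ _).symm
      _ = ‖M₀t (Ql w)‖ ^ 2 := real_inner_self_eq_norm_sq _
  have hTsqval : ∀ z, ⟪Tsq z, z⟫ = ‖Pl z‖ ^ 2 - ‖Ql (M₀ z)‖ ^ 2 := by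
    intro z
    have e0 : ⟪Tsq z, z⟫ = ⟪z, Tsq z⟫ := real_inner_comm _ _
    rw [e0, hTsqa, inner_sub_right, hPnorm, hQMQ]
  have hSsqval : ∀ w, ⟪Ssq w, w⟫ = ‖Ql w‖ ^ 2 - ‖M₀t (Ql w)‖ ^ 2 := by
    intro w
    have e0 : ⟪Ssq w, w⟫ = ⟪w, Ssq w⟫ := real_inner_comm _ _
    rw [e0, hSsqa, inner_sub_right, hQnorm, hMMQ]
  have hTsqsym : Tsq.IsSymmetric := by
    intro z w
    rw [hTsqa, hTsqa, inner_sub_left, inner_sub_right, hPsym]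
    congr 1
    rw [hM₀t_l, hM₀t_r, hQsym]
  have hSsqsym : Ssq.IsSymmetric := by
    intro z w
    rw [hSsqa, hSsqa, inner_sub_left, inner_sub_right, hQsym]
    congr 1
    rw [hQsym, ← hM₀t_r, hM₀t_l, hQsym]
  have hTsqpsd : ∀ z, 0 ≤ ⟪Tsq z, z⟫ := by
    intro z
    rw [hTsqval]
    have e1 : ‖Ql (M₀ z)‖ ≤ ‖Pl z‖ := by
      calc ‖Ql (M₀ z)‖ ≤ ‖M₀ z‖ := hQcon _
        _ = ‖M₀ (Pl z)‖ := by rw [hM₀P]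
        _ ≤ ‖Pl z‖ := hM₀c _
    nlinarith [norm_nonneg (Ql (M₀ z)), norm_nonneg (Pl z)]
  have hSsqpsd : ∀ w, 0 ≤ ⟪Ssq w, w⟫ := by
    intro w
    rw [hSsqval]
    have e1 : ‖M₀t (Ql w)‖ ≤ ‖Ql w‖ := hM₀tc _
    nlinarith [norm_nonneg (M₀t (Ql w)), norm_nonneg (Ql w)]
  obtain ⟨T, hTsym, hTpsd, hTT⟩ := exists_sqrt Tsq hTsqsym hTsqpsd
  obtain ⟨S, hSsym, hSpsd, hSS⟩ := exists_sqrt Ssq hSsqsym hSsqpsd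
  have hTT' : ∀ z, T (T z) = Tsq z := fun z => LinearMap.ext_iff.mp hTT z
  have hSS' : ∀ w, S (S w) = Ssq w := fun w => LinearMap.ext_iff.mp hSS w
  have hTnormsq : ∀ z, ‖T z‖ ^ 2 = ⟪Tsq z, z⟫ := by
    intro z
    rw [← real_inner_self_eq_norm_sq]
    calc ⟪T z, T z⟫ = ⟪z, T (T z)⟫ := hTsym _ _
      _ = ⟪z, Tsq z⟫ := by rw [hTT']
      _ = ⟪Tsq z, z⟫ := real_inner_comm _ _
  have hSnormsq : ∀ w, ‖S w‖ ^ 2 = ⟪Ssq w, w⟫ := by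
    intro w
    rw [← real_inner_self_eq_norm_sq]
    calc ⟪S w, S w⟫ = ⟪w, S (S w)⟫ := hSsym _ _
      _ = ⟪w, Ssq w⟫ := by rw [hSS']
      _ = ⟪Ssq w, w⟫ := real_inner_comm _ _
  -- intertwining at the square level
  have hsq_int : ∀ z, Ssq (Ql (M₀ z)) = Ql (M₀ (Tsq z)) := by
    intro z
    have ht : Tsq z = Pl z - M₀t (Ql (M₀ z)) := hTsqa z
    rw [hSsqa, hQid, ht, map_sub, map_sub, hM₀P]
  have hST : ∀ z, S (Ql (M₀ z)) = Ql (M₀ (T z)) := by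
    have h0 : ∀ z, S (S ((Ql ∘ₗ M₀) z)) = (Ql ∘ₗ M₀) (T (T z)) := by
      intro z
      show S (S (Ql (M₀ z))) = Ql (M₀ (T (T z)))
      rw [hSS', hsq_int, hTT']
    exact sqrt_intertwine S T (Ql ∘ₗ M₀) hSsym hSpsd hTsym hTpsd h0
  -- Q fixes the range of S
  have hSQ : ∀ w, S (Ql w) = S w := by
    intro w
    have hz : Ql (w - Ql w) = 0 := by rw [map_sub, hQid, sub_self]
    have h0 : Ssq (w - Ql w) = 0 := by
      rw [hSsqa, hz]
      simp
    have h1 : ‖S (w - Ql w)‖ ^ 2 = 0 := by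
      rw [hSnormsq, h0, inner_zero_left]
    have h2 : S (w - Ql w) = 0 := by
      rw [pow_eq_zero_iff (two_ne_zero)] at h1
      exact norm_eq_zero.mp h1
    rw [map_sub, sub_eq_zero] at h2
    exact h2.symm
  have hQS : ∀ w, Ql (S w) = S w := by
    intro w
    apply ext_inner_right ℝ
    intro ζ
    rw [hQsym, hSsym, hSQ, ← hSsym]
  -- the B block
  set Bt : E₂ →ₗ[ℝ] E₁ := N₀ - Pl ∘ₗ N₀ with hBtdef
  have hBta : ∀ w, Bt w = N₀ w - Pl (N₀ w) := fun w => rfl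
  have hPN : ∀ w, Pl (N₀ w) = M₀t (Ql w) := by
    intro w
    have e2 : Pl (N₀ (Ql w)) = Pl (M₀t (Ql w)) := by
      apply ext_inner_right ℝ
      intro z
      rw [hPsym, hPsym]
      calc ⟪N₀ (Ql w), Pl z⟫ = ⟪Ql w, N₀t (Pl z)⟫ := by
            rw [real_inner_comm (Pl z) (N₀ (Ql w)), ← hN₀t_l,
              real_inner_comm (Ql w) (N₀t (Pl z))]
        _ = ⟪w, Ql (N₀t (Pl z))⟫ := by rw [← hQsym]
        _ = ⟪w, Ql (M₀ (Pl z))⟫ := by rw [← hcompat]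
        _ = ⟪Ql w, M₀ (Pl z)⟫ := by rw [hQsym]
        _ = ⟪Ql w, M₀ z⟫ := by rw [hM₀P]
        _ = ⟪M₀t (Ql w), z⟫ := (hM₀t_l _ _).symm
        _ = ⟪M₀t (Ql w), Pl z⟫ := by
            conv_lhs => rw [← hPM₀t (Ql w)]
            rw [hPsym]
    rw [← hN₀Q w, e2, hPM₀t]
  have hBtS : ∀ w, ‖Bt w‖ ≤ ‖S w‖ := by
    intro w
    have e1 : ‖N₀ w‖ ^ 2 = ‖Pl (N₀ w)‖ ^ 2 + ‖Bt w‖ ^ 2 := by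
      rw [hBta]; exact hPpyth (N₀ w)
    have e2 : ‖N₀ w‖ ≤ ‖Ql w‖ := by
      rw [← hN₀Q w]; exact hN₀c _
    have e3 : ‖S w‖ ^ 2 = ‖Ql w‖ ^ 2 - ‖M₀t (Ql w)‖ ^ 2 :=
      (hSnormsq w).trans (hSsqval w)
    have e4 : ‖Pl (N₀ w)‖ = ‖M₀t (Ql w)‖ := by rw [hPN]
    have key : ‖Bt w‖ ^ 2 ≤ ‖S w‖ ^ 2 := by
      rw [e3, ← e4]
      nlinarith [norm_nonneg (N₀ w), norm_nonneg (Ql w)]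
    nlinarith [norm_nonneg (Bt w), norm_nonneg (S w)]
  obtain ⟨R, hRc, hRS, hRperp, hRrange⟩ := lift_contraction S Bt hBtS
  set B₁ : E₁ →ₗ[ℝ] E₂ := LinearMap.adjoint R with hB₁def
  have hB₁c : ∀ z, ‖B₁ z‖ ≤ ‖z‖ := adjoint_contraction R hRc
  have hB₁_l : ∀ a b, ⟪B₁ a, b⟫ = ⟪a, R b⟫ := fun a b => by
    rw [hB₁def]; exact LinearMap.adjoint_inner_left _ _ _
  have hB₁P : ∀ ζ, B₁ (Pl ζ) = 0 := by
    intro ζ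
    have h0 : ∀ w, ⟪B₁ (Pl ζ), w⟫ = 0 := by
      intro w
      rw [hB₁_l]
      obtain ⟨w', hw'⟩ := hRrange w
      rw [hw', hBta, inner_sub_right, hPsym, hPsym, hPid, sub_self]
    exact inner_self_eq_zero.mp (h0 (B₁ (Pl ζ)))
  have hBm : ∀ z, S (B₁ z) = N₀t z - N₀t (Pl z) := by
    intro z
    apply ext_inner_right ℝ
    intro w
    calc ⟪S (B₁ z), w⟫ = ⟪B₁ z, S w⟫ := hSsym _ _
      _ = ⟪z, R (S w)⟫ := hB₁_l _ _
      _ = ⟪z, Bt w⟫ := by rw [show R (S w) = Bt w from LinearMap.ext_iff.mp hRS w]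
      _ = ⟪z, N₀ w⟫ - ⟪Pl z, N₀ w⟫ := by rw [hBta, inner_sub_right, hPsym]
      _ = ⟪N₀t z - N₀t (Pl z), w⟫ := by
          rw [inner_sub_left, hN₀t_l, hN₀t_l]
  -- the C block
  set Cm : E₁ →ₗ[ℝ] E₂ := M₀ - Ql ∘ₗ M₀ with hCmdef
  have hCma : ∀ z, Cm z = M₀ z - Ql (M₀ z) := fun z => rfl
  have hCT : ∀ z, ‖Cm z‖ ≤ ‖T z‖ := by
    intro z
    have e1 : ‖M₀ z‖ ^ 2 = ‖Ql (M₀ z)‖ ^ 2 + ‖Cm z‖ ^ 2 := by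
      rw [hCma]; exact hQpyth (M₀ z)
    have e2 : ‖M₀ z‖ ≤ ‖Pl z‖ := by rw [← hM₀P]; exact hM₀c _
    have e3 : ‖T z‖ ^ 2 = ‖Pl z‖ ^ 2 - ‖Ql (M₀ z)‖ ^ 2 :=
      (hTnormsq z).trans (hTsqval z)
    have key : ‖Cm z‖ ^ 2 ≤ ‖T z‖ ^ 2 := by
      rw [e3]
      nlinarith [norm_nonneg (M₀ z), norm_nonneg (Pl z)]
    nlinarith [norm_nonneg (Cm z), norm_nonneg (T z)]
  obtain ⟨C₁, hC₁c, hC₁T, hC₁perp, hC₁range⟩ := lift_contraction T Cm hCT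
  have hC₁T' : ∀ z, C₁ (T z) = Cm z := fun z => LinearMap.ext_iff.mp hC₁T z
  have hQC₁ : ∀ ζ, Ql (C₁ ζ) = 0 := by
    intro ζ
    obtain ⟨w', hw'⟩ := hC₁range ζ
    rw [hw', hCma, map_sub, hQid, sub_self]
  -- assemble M
  set D : E₁ →ₗ[ℝ] E₂ := -(C₁ ∘ₗ (M₀t ∘ₗ (Ql ∘ₗ B₁))) with hDdef
  have hDa : ∀ z, D z = -(C₁ (M₀t (Ql (B₁ z)))) := fun z => rfl
  set M : E₁ →ₗ[ℝ] E₂ := M₀ + S ∘ₗ B₁ + D with hMdef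
  have hMa : ∀ z, M z = M₀ z + S (B₁ z) + D z := fun z => rfl
  refine ⟨M, ?_, ?_, ?_⟩
  · -- contraction
    intro z
    obtain ⟨p, hp⟩ : ∃ p, p = Pl z := ⟨_, rfl⟩
    have hPp : Pl p = p := by rw [hp]; exact hPid z
    obtain ⟨q, hq⟩ : ∃ q, q = z - Pl z := ⟨_, rfl⟩
    obtain ⟨r, hr⟩ : ∃ r, r = B₁ q := ⟨_, rfl⟩
    have hppq : ‖z‖ ^ 2 = ‖p‖ ^ 2 + ‖q‖ ^ 2 := by
      rw [hp, hq]; exact hPpyth z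
    have hB₁z : B₁ z = r := by
      have e0 : B₁ z - B₁ (Pl z) = B₁ q := by rw [← map_sub, hq]
      rw [hB₁P, sub_zero] at e0
      rw [e0, hr]
    have hM₀z : M₀ z = M₀ p := by rw [hp, hM₀P]
    have hMz : M z = (Ql (M₀ p) + S r) + (Cm p - C₁ (M₀t (Ql r))) := by
      rw [hMa, hDa, hB₁z, hM₀z, hCma]
      abel
    obtain ⟨g₁, hg₁⟩ : ∃ g, g = Ql (M₀ p) + S r := ⟨_, rfl⟩
    obtain ⟨g₂, hg₂⟩ : ∃ g, g = Cm p - C₁ (M₀t (Ql r)) := ⟨_, rfl⟩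
    rw [← hg₁, ← hg₂] at hMz
    have hQg₁ : Ql g₁ = g₁ := by
      rw [hg₁, map_add, hQid, hQS]
    have hQg₂ : Ql g₂ = 0 := by
      rw [hg₂, map_sub, hCma, map_sub, hQid, sub_self, hQC₁, zero_sub, neg_zero]
    have horth : ⟪g₁, g₂⟫ = 0 := by
      rw [← hQg₁, hQsym, hQg₂, inner_zero_right]
    have hnorm : ‖M z‖ ^ 2 = ‖g₁‖ ^ 2 + ‖g₂‖ ^ 2 := by
      rw [hMz, norm_add_sq_real, horth]
      ring
    have hg₂bound : ‖g₂‖ ≤ ‖T p - M₀t (Ql r)‖ := by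
      have e0 : g₂ = C₁ (T p - M₀t (Ql r)) := by
        rw [map_sub, hC₁T', hg₂]
      rw [e0]
      exact hC₁c _
    have hcross : ⟪Ql (M₀ p), S r⟫ = ⟪T p, M₀t (Ql r)⟫ := by
      calc ⟪Ql (M₀ p), S r⟫ = ⟪S (Ql (M₀ p)), r⟫ := by rw [← hSsym]
        _ = ⟪Ql (M₀ (T p)), r⟫ := by rw [hST]
        _ = ⟪M₀ (T p), Ql r⟫ := by rw [hQsym]
        _ = ⟪T p, M₀t (Ql r)⟫ := by rw [hM₀t_r]
    have hATp : ‖Ql (M₀ p)‖ ^ 2 + ‖T p‖ ^ 2 = ‖p‖ ^ 2 := by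
      have e1 : ‖T p‖ ^ 2 = ‖Pl p‖ ^ 2 - ‖Ql (M₀ p)‖ ^ 2 :=
        (hTnormsq p).trans (hTsqval p)
      rw [e1, hPp]
      ring
    have hSr : ‖S r‖ ^ 2 + ‖M₀t (Ql r)‖ ^ 2 = ‖Ql r‖ ^ 2 := by
      have e3 : ‖S r‖ ^ 2 = ‖Ql r‖ ^ 2 - ‖M₀t (Ql r)‖ ^ 2 :=
        (hSnormsq r).trans (hSsqval r)
      rw [e3]
      ring
    have hrq : ‖r‖ ≤ ‖q‖ := by rw [hr]; exact hB₁c q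
    have e5 : ‖g₁‖ ^ 2 = ‖Ql (M₀ p)‖ ^ 2 + 2 * ⟪Ql (M₀ p), S r⟫ + ‖S r‖ ^ 2 := by
      rw [hg₁]
      exact norm_add_sq_real _ _
    have e6 : ‖T p - M₀t (Ql r)‖ ^ 2
        = ‖T p‖ ^ 2 - 2 * ⟪T p, M₀t (Ql r)⟫ + ‖M₀t (Ql r)‖ ^ 2 :=
      norm_sub_sq_real _ _
    have e7 : ‖g₂‖ ^ 2 ≤ ‖T p - M₀t (Ql r)‖ ^ 2 := by
      nlinarith [norm_nonneg g₂, norm_nonneg (T p - M₀t (Ql r)), hg₂bound]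
    have e8 : ‖Ql r‖ ≤ ‖r‖ := hQcon r
    have step1 : ‖g₁‖ ^ 2 + ‖T p - M₀t (Ql r)‖ ^ 2 = ‖p‖ ^ 2 + ‖Ql r‖ ^ 2 := by
      linarith [e5, e6, hcross, hATp, hSr]
    have step2 : ‖Ql r‖ ^ 2 ≤ ‖q‖ ^ 2 := by
      nlinarith [e8, hrq, norm_nonneg (Ql r), norm_nonneg r, norm_nonneg q]
    have hfinal : ‖M z‖ ^ 2 ≤ ‖z‖ ^ 2 := by
      linarith [hnorm, e7, step1, step2, hppq]
    nlinarith [norm_nonneg (M z), norm_nonneg z, hfinal]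
  · -- M x = y
    intro c
    have hB₁x : B₁ (x c) = 0 := by rw [← hPx c, hB₁P]
    rw [hMa, hDa, hB₁x, hM₀x' c]
    simp
  · -- adjoint M u = v
    intro d
    have hQlM : ∀ z, Ql (M z) = N₀t z := by
      intro z
      rw [hMa, map_add, map_add, hDa, map_neg, hQC₁, neg_zero, add_zero]
      rw [hQS, hBm]
      rw [show Ql (M₀ z) = Ql (M₀ (Pl z)) from by rw [hM₀P], hcompat, hQN₀t]
      abel
    apply ext_inner_left ℝ
    intro z
    calc ⟪z, LinearMap.adjoint M (u d)⟫ = ⟪M z, u d⟫ := LinearMap.adjoint_inner_right _ _ _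
      _ = ⟪M z, Ql (u d)⟫ := by rw [hQu]
      _ = ⟪Ql (M z), u d⟫ := by rw [hQsym]
      _ = ⟪N₀t z, u d⟫ := by rw [hQlM]
      _ = ⟪z, N₀ (u d)⟫ := hN₀t_l _ _
      _ = ⟪z, v d⟫ := by rw [hN₀u' d]


lemma adjoint_bound {E F : Type*}
  [NormedAddCommGroup E] [InnerProductSpace ℝ E] [FiniteDimensional ℝ E]
  [NormedAddCommGroup F] [InnerProductSpace ℝ F] [FiniteDimensional ℝ F]
    (T : E →ₗ[ℝ] F) (L : ℝ) (hL : 0 ≤ L) (h : ∀ z, ‖T z‖ ≤ L * ‖z‖) :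
    ∀ w, ‖LinearMap.adjoint T w‖ ≤ L * ‖w‖ := by
  intro w
  set s := LinearMap.adjoint T w with hs
  have h1 : ‖s‖ * ‖s‖ = ⟪T s, w⟫ := by
    rw [← LinearMap.adjoint_inner_right]
    exact (real_inner_self_eq_norm_mul_norm s).symm
  have h2 : ⟪T s, w⟫ ≤ ‖T s‖ * ‖w‖ := real_inner_le_norm _ _
  have h3 : ‖T s‖ ≤ L * ‖s‖ := h s
  rcases eq_or_lt_of_le (norm_nonneg s) with h4 | h4
  · rw [← h4]; positivity
  · have h5 : ‖s‖ * ‖s‖ ≤ ‖s‖ * (L * ‖w‖) := by nlinarith [norm_nonneg w]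
    exact le_of_mul_le_mul_left h5 h4

namespace InterpGlue

noncomputable def lin {a b : ℕ} (A : Matrix (Fin a) (Fin b) ℝ) :
    EuclideanSpace ℝ (Fin b) →ₗ[ℝ] EuclideanSpace ℝ (Fin a) :=
  Matrix.toEuclideanLin A

lemma lin_inj {a b : ℕ} {A B : Matrix (Fin a) (Fin b) ℝ} (h : lin A = lin B) : A = B :=
  Matrix.toEuclideanLin.injective h

lemma lin_mul {a b c : ℕ} (A : Matrix (Fin a) (Fin b) ℝ) (B : Matrix (Fin b) (Fin c) ℝ)
    (z : EuclideanSpace ℝ (Fin c)) : lin (A * B) z = lin A (lin B z) := by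
  simp only [lin, Matrix.toEuclideanLin_apply]
  congr 1
  simp [Matrix.mulVec_mulVec]

lemma conjT {a b : ℕ} (A : Matrix (Fin a) (Fin b) ℝ) : Aᴴ = Aᵀ := by
  ext i j; simp [Matrix.conjTranspose_apply]

lemma lin_adjoint {a b : ℕ} (A : Matrix (Fin a) (Fin b) ℝ) :
    lin Aᵀ = LinearMap.adjoint (lin A) := by
  rw [lin, lin, ← conjT]
  exact Matrix.toEuclideanLin_conjTranspose_eq_adjoint A

lemma euc_inner {k : ℕ} (v w : EuclideanSpace ℝ (Fin k)) :
    ⟪v, w⟫ = ∑ i, v i * w i := by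
  simp [PiLp.inner_apply, RCLike.inner_apply, conj_trivial, mul_comm]

lemma euc_norm_sq {k : ℕ} (v : EuclideanSpace ℝ (Fin k)) :
    ‖v‖ ^ 2 = ∑ i, v i * v i := by
  rw [← real_inner_self_eq_norm_sq, euc_inner]

lemma lin_quad {a k : ℕ} (G : Matrix (Fin a) (Fin k) ℝ) (c : EuclideanSpace ℝ (Fin k)) :
    (WithLp.equiv 2 _ c) ⬝ᵥ ((Gᵀ * G) *ᵥ (WithLp.equiv 2 _ c)) = ‖lin G c‖ ^ 2 := by
  rw [euc_norm_sq]
  simp only [lin, Matrix.toEuclideanLin_apply]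
  rw [← Matrix.mulVec_mulVec, Matrix.dotProduct_mulVec, Matrix.vecMul_transpose]
  rfl

lemma gram_psd_iff {k a b : ℕ} (L : ℝ) (hL : 0 ≤ L)
    (G : Matrix (Fin a) (Fin k) ℝ) (H : Matrix (Fin b) (Fin k) ℝ) :
    (L ^ 2 • (Gᵀ * G) - Hᵀ * H).PosSemidef ↔
      ∀ c : EuclideanSpace ℝ (Fin k), ‖lin H c‖ ≤ L * ‖lin G c‖ := by
  have hGG : (Gᵀ * G).IsHermitian := by
    rw [← conjT G]; exact Matrix.isHermitian_conjTranspose_mul_self G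
  have hHH : (Hᵀ * H).IsHermitian := by
    rw [← conjT H]; exact Matrix.isHermitian_conjTranspose_mul_self H
  have hherm : (L ^ 2 • (Gᵀ * G) - Hᵀ * H).IsHermitian := by
    show _ᴴ = _
    rw [Matrix.conjTranspose_sub, Matrix.conjTranspose_smul, hGG.eq, hHH.eq, star_trivial]
  have hquad : ∀ c : EuclideanSpace ℝ (Fin k),
      star (WithLp.equiv 2 _ c) ⬝ᵥ ((L ^ 2 • (Gᵀ * G) - Hᵀ * H) *ᵥ (WithLp.equiv 2 _ c))
        = L ^ 2 * ‖lin G c‖ ^ 2 - ‖lin H c‖ ^ 2 := by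
    intro c
    rw [Matrix.sub_mulVec, dotProduct_sub, Matrix.smul_mulVec, dotProduct_smul]
    rw [show star (WithLp.equiv 2 _ c) = WithLp.equiv 2 _ c from rfl]
    rw [lin_quad, lin_quad]
    simp [smul_eq_mul]
  constructor
  · intro hpsd c
    have h0 := hpsd.dotProduct_mulVec_nonneg (WithLp.equiv 2 _ c)
    rw [hquad c] at h0
    nlinarith [norm_nonneg (lin H c), norm_nonneg (lin G c), hL,
      mul_nonneg hL (norm_nonneg (lin G c)),
      sq_nonneg (‖lin H c‖ + L * ‖lin G c‖)]
  · intro hc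
    refine Matrix.PosSemidef.of_dotProduct_mulVec_nonneg hherm ?_
    intro xx
    have h0 := hquad ((WithLp.equiv 2 _).symm xx)
    have h1 := hc ((WithLp.equiv 2 _).symm xx)
    have h2 : 0 ≤ L ^ 2 * ‖lin G ((WithLp.equiv 2 _).symm xx)‖ ^ 2
        - ‖lin H ((WithLp.equiv 2 _).symm xx)‖ ^ 2 := by
      nlinarith [norm_nonneg (lin H ((WithLp.equiv 2 _).symm xx)),
        norm_nonneg (lin G ((WithLp.equiv 2 _).symm xx)),
        mul_nonneg hL (norm_nonneg (lin G ((WithLp.equiv 2 _).symm xx)))]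
    exact le_of_le_of_eq h2 h0.symm

lemma eq_gram_iff {k l a b : ℕ} (X : Matrix (Fin a) (Fin k) ℝ) (V : Matrix (Fin a) (Fin l) ℝ)
    (Y : Matrix (Fin b) (Fin k) ℝ) (U : Matrix (Fin b) (Fin l) ℝ) :
    Xᵀ * V = Yᵀ * U ↔
      ∀ (c : EuclideanSpace ℝ (Fin k)) (d : EuclideanSpace ℝ (Fin l)),
        ⟪lin X c, lin V d⟫ = ⟪lin Y c, lin U d⟫ := by
  have key : ∀ (c : EuclideanSpace ℝ (Fin k)) (d : EuclideanSpace ℝ (Fin l)),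
      ⟪lin X c, lin V d⟫ = ⟪c, lin (Xᵀ * V) d⟫ := by
    intro c d
    rw [lin_mul, lin_adjoint, LinearMap.adjoint_inner_right]
  have key2 : ∀ (c : EuclideanSpace ℝ (Fin k)) (d : EuclideanSpace ℝ (Fin l)),
      ⟪lin Y c, lin U d⟫ = ⟪c, lin (Yᵀ * U) d⟫ := by
    intro c d
    rw [lin_mul, lin_adjoint, LinearMap.adjoint_inner_right]
  constructor
  · intro h c d
    rw [key, key2, h]
  · intro h
    apply lin_inj
    apply LinearMap.ext
    intro d
    apply ext_inner_left ℝ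
    intro c
    rw [← key, ← key2, h]

lemma one_gram {n : ℕ} : ((1 : Matrix (Fin n) (Fin n) ℝ))ᵀ * 1 = 1 := by simp

lemma lin_one {n : ℕ} (z : EuclideanSpace ℝ (Fin n)) : lin (1 : Matrix (Fin n) (Fin n) ℝ) z = z := by
  simp only [lin, Matrix.toEuclideanLin_apply, Matrix.one_mulVec]

lemma sigma_psd_iff {n m : ℕ} (L : ℝ) (hL : 0 ≤ L) (M : Matrix (Fin m) (Fin n) ℝ) :
    (L ^ 2 • (1 : Matrix (Fin n) (Fin n) ℝ) - Mᵀ * M).PosSemidef ↔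
      ∀ z : EuclideanSpace ℝ (Fin n), ‖lin M z‖ ≤ L * ‖z‖ := by
  have h0 : (L ^ 2 • (1 : Matrix (Fin n) (Fin n) ℝ) - Mᵀ * M)
      = L ^ 2 • ((1 : Matrix (Fin n) (Fin n) ℝ)ᵀ * 1) - Mᵀ * M := by rw [one_gram]
  rw [h0, gram_psd_iff L hL 1 M]
  constructor
  · intro h z; have := h z; rwa [lin_one] at this
  · intro h z; rw [lin_one]; exact h z

end InterpGlue

open InterpGlue


/-- `L₀,L`-interpolation conditions (Theorem 3.2): existence of a linear operator `M`
with largest singular value at most `L` (i.e. `MᵀM ⪯ L²·I`) mapping the columns of `X`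
to those of `Y` and (via `Mᵀ`) the columns of `U` to those of `V`, if and only if the
three Gram conditions hold. -/
theorem linear_operator_interpolation
    (n m N₁ N₂ : ℕ) (L : ℝ) (hL : 0 ≤ L)
    (X : Matrix (Fin n) (Fin N₁) ℝ) (Y : Matrix (Fin m) (Fin N₁) ℝ)
    (U : Matrix (Fin m) (Fin N₂) ℝ) (V : Matrix (Fin n) (Fin N₂) ℝ) :
    (∃ M : Matrix (Fin m) (Fin n) ℝ,
        (L ^ 2 • (1 : Matrix (Fin n) (Fin n) ℝ) - Mᵀ * M).PosSemidef ∧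
        Y = M * X ∧ V = Mᵀ * U) ↔
      (Xᵀ * V = Yᵀ * U ∧
        (L ^ 2 • (Xᵀ * X) - Yᵀ * Y).PosSemidef ∧
        (L ^ 2 • (Uᵀ * U) - Vᵀ * V).PosSemidef) := by
  constructor
  · rintro ⟨M, hpsd, hY, hV⟩
    have hMc : ∀ z, ‖lin M z‖ ≤ L * ‖z‖ := (sigma_psd_iff L hL M).mp hpsd
    have hMtc : ∀ w, ‖LinearMap.adjoint (lin M) w‖ ≤ L * ‖w‖ :=
      adjoint_bound (lin M) L hL hMc
    have hYlin : ∀ c, lin Y c = lin M (lin X c) := by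
      intro c; rw [hY, lin_mul]
    have hVlin : ∀ d, lin V d = LinearMap.adjoint (lin M) (lin U d) := by
      intro d; rw [hV, lin_mul, lin_adjoint]
    refine ⟨?_, ?_, ?_⟩
    · rw [eq_gram_iff]
      intro c d
      rw [hYlin, hVlin, LinearMap.adjoint_inner_right]
    · rw [gram_psd_iff L hL]
      intro c
      rw [hYlin]
      exact hMc _
    · rw [gram_psd_iff L hL]
      intro d
      rw [hVlin]
      exact hMtc _
  · rintro ⟨heq, hYpsd, hVpsd⟩
    have hYc : ∀ c, ‖lin Y c‖ ≤ L * ‖lin X c‖ := (gram_psd_iff L hL X Y).mp hYpsd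
    have hVc : ∀ d, ‖lin V d‖ ≤ L * ‖lin U d‖ := (gram_psd_iff L hL U V).mp hVpsd
    have heq' := (eq_gram_iff X V Y U).mp heq
    rcases eq_or_lt_of_le hL with h0 | hLpos
    · -- L = 0
      have hY0 : Y = 0 := by
        apply lin_inj
        rw [show lin (0 : Matrix (Fin m) (Fin N₁) ℝ) = 0 from map_zero _]
        apply LinearMap.ext
        intro c
        have hc := hYc c
        rw [← h0, zero_mul] at hc
        simpa using le_antisymm hc (norm_nonneg _)
      have hV0 : V = 0 := by
        apply lin_inj
        rw [show lin (0 : Matrix (Fin n) (Fin N₂) ℝ) = 0 from map_zero _]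
        apply LinearMap.ext
        intro d
        have hd := hVc d
        rw [← h0, zero_mul] at hd
        simpa using le_antisymm hd (norm_nonneg _)
      refine ⟨0, ?_, ?_, ?_⟩
      · rw [sigma_psd_iff L hL]
        intro z
        rw [show lin (0 : Matrix (Fin m) (Fin n) ℝ) = 0 from map_zero _]
        simpa using mul_nonneg hL (norm_nonneg z)
      · rw [hY0]; simp
      · rw [hV0]; simp
    · -- L > 0
      obtain ⟨Mlin, hMc, hMx, hMu⟩ := core_interpolation
        (lin X) (L⁻¹ • lin Y) (lin U) (L⁻¹ • lin V)
        (by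
          intro c d
          simp only [LinearMap.smul_apply]
          rw [real_inner_smul_right, real_inner_smul_left, heq' c d])
        (by
          intro c
          simp only [LinearMap.smul_apply, norm_smul]
          have := hYc c
          rw [norm_inv, Real.norm_eq_abs, abs_of_pos hLpos]
          calc L⁻¹ * ‖lin Y c‖ ≤ L⁻¹ * (L * ‖lin X c‖) := by
                apply mul_le_mul_of_nonneg_left this (by positivity)
            _ = ‖lin X c‖ := by field_simp)
        (by
          intro d
          simp only [LinearMap.smul_apply, norm_smul]
          have := hVc d
          rw [norm_inv, Real.norm_eq_abs, abs_of_pos hLpos]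
          calc L⁻¹ * ‖lin V d‖ ≤ L⁻¹ * (L * ‖lin U d‖) := by
                apply mul_le_mul_of_nonneg_left this (by positivity)
            _ = ‖lin U d‖ := by field_simp)
      set M : Matrix (Fin m) (Fin n) ℝ := Matrix.toEuclideanLin.symm (L • Mlin) with hM
      have hlinM : lin M = L • Mlin := by
        rw [lin, hM, LinearEquiv.apply_symm_apply]
      refine ⟨M, ?_, ?_, ?_⟩
      · rw [sigma_psd_iff L hL]
        intro z
        rw [hlinM]
        simp only [LinearMap.smul_apply, norm_smul, Real.norm_eq_abs, abs_of_pos hLpos]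
        exact mul_le_mul_of_nonneg_left (hMc z) hL
      · apply lin_inj
        apply LinearMap.ext
        intro c
        rw [show lin (M * X) c = lin M (lin X c) from lin_mul M X c, hlinM]
        simp only [LinearMap.smul_apply]
        rw [hMx c]
        simp only [LinearMap.smul_apply, smul_smul]
        rw [mul_inv_cancel₀ (ne_of_gt hLpos), one_smul]
      · apply lin_inj
        apply LinearMap.ext
        intro d
        rw [show lin (Mᵀ * U) d = lin Mᵀ (lin U d) from lin_mul Mᵀ U d, lin_adjoint, hlinM]
        have hadj : ∀ w, LinearMap.adjoint (L • Mlin) w = L • LinearMap.adjoint Mlin w := by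
          intro w
          apply ext_inner_right ℝ
          intro z
          rw [LinearMap.adjoint_inner_left, LinearMap.smul_apply, real_inner_smul_right,
            real_inner_smul_left, LinearMap.adjoint_inner_left]
        rw [hadj (lin U d), hMu d, LinearMap.smul_apply, smul_smul, mul_inv_cancel₀ (ne_of_gt hLpos), one_smul]
end

section
/- Let X and Y be real d×N matrices and L ≥ 0. There exists a real skew-symmetric d×d matrix Q (i.e., Qᵀ = −Q) with σ_max(Q) ≤ L such that Y = Q·X if and only if Xᵀ·Y = −Yᵀ·X and Yᵀ·Y ⪯ L²·Xᵀ·X. -/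
set_option linter.unusedSectionVars false
set_option linter.unusedVariables false

open Matrix Polynomial

namespace SkewInterp

variable {n : Type*} [Fintype n] [DecidableEq n]

lemma ct_eq {m k : Type*} (A : Matrix m k ℝ) : Aᴴ = Aᵀ :=
  Matrix.conjTranspose_eq_transpose_of_trivial A

/-- representation of polynomial evaluation at a hermitian matrix -/
lemma aeval_repr {A : Matrix n n ℝ} (hA : A.IsHermitian) (p : ℝ[X]) :
    aeval A p = (Matrix.IsHermitian.eigenvectorUnitary hA : Matrix n n ℝ) *
      diagonal (fun i => p.eval (hA.eigenvalues i)) *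
      (star (Matrix.IsHermitian.eigenvectorUnitary hA : Matrix n n ℝ)) := by
  set U : Matrix n n ℝ := (Matrix.IsHermitian.eigenvectorUnitary hA : Matrix n n ℝ) with hU
  have hUU : star U * U = 1 :=
    (Matrix.mem_unitaryGroup_iff').mp (Matrix.IsHermitian.eigenvectorUnitary hA).2
  have hUU' : U * star U = 1 :=
    (Matrix.mem_unitaryGroup_iff).mp (Matrix.IsHermitian.eigenvectorUnitary hA).2
  have hAeq : A = U * diagonal (fun i => hA.eigenvalues i) * star U := by
    simpa using Matrix.IsHermitian.spectral_theorem hA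
  induction p using Polynomial.induction_on' with
  | add p q hp hq =>
      rw [map_add, hp, hq]
      have : (diagonal fun i => eval (hA.eigenvalues i) (p + q))
          = (diagonal fun i => eval (hA.eigenvalues i) p)
            + (diagonal fun i => eval (hA.eigenvalues i) q) := by
        ext i j; by_cases h : i = j <;> simp [Matrix.diagonal, h]
      rw [this, Matrix.mul_add, Matrix.add_mul]
  | monomial k a =>
      have hpow : ∀ j : ℕ, A ^ j = U * (diagonal (fun i => hA.eigenvalues i ^ j)) * star U := by
        intro j
        induction j with
        | zero =>
            have h1 : (diagonal (fun i : n => (hA.eigenvalues i : ℝ) ^ 0)) = (1 : Matrix n n ℝ) := by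
              simp
            rw [pow_zero, h1, Matrix.mul_one, hUU']
        | succ j ih =>
            calc A ^ (j+1) = A ^ j * A := pow_succ A j
            _ = U * diagonal (fun i => hA.eigenvalues i ^ j) * star U *
                  (U * diagonal (fun i => hA.eigenvalues i) * star U) := by rw [ih, ← hAeq]
            _ = U * diagonal (fun i => hA.eigenvalues i ^ j) * (star U * U) *
                  diagonal (fun i => hA.eigenvalues i) * star U := by
                  simp only [Matrix.mul_assoc]
            _ = U * (diagonal (fun i => hA.eigenvalues i ^ j) *
                  diagonal (fun i => hA.eigenvalues i)) * star U := by
                  rw [hUU, Matrix.mul_one]; simp only [Matrix.mul_assoc]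
            _ = U * diagonal (fun i => hA.eigenvalues i ^ (j+1)) * star U := by
                  rw [Matrix.diagonal_mul_diagonal]
                  simp [pow_succ]
      rw [Polynomial.aeval_monomial, hpow k]
      have hd : (diagonal fun i => eval (hA.eigenvalues i) ((monomial k) a))
          = a • diagonal (fun i => hA.eigenvalues i ^ k) := by
        ext i j; by_cases h : i = j <;> simp [Matrix.diagonal, h, mul_comm]
      rw [hd]
      have : (algebraMap ℝ (Matrix n n ℝ)) a = a • (1 : Matrix n n ℝ) :=
        Algebra.algebraMap_eq_smul_one a
      rw [this, Matrix.smul_mul, Matrix.one_mul, Matrix.mul_smul, Matrix.smul_mul]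
section FC
variable {A : Matrix n n ℝ} (hA : A.IsHermitian)

/-- nodes for interpolation: eigenvalues plus 0 -/
noncomputable def nodes (hA : A.IsHermitian) : Finset ℝ :=
  insert 0 (Finset.image hA.eigenvalues Finset.univ)

/-- interpolation polynomial of f on the eigenvalues (and 0) -/
noncomputable def fpoly (hA : A.IsHermitian) (f : ℝ → ℝ) : ℝ[X] :=
  Lagrange.interpolate (nodes hA) id f

/-- matrix functional calculus via interpolation polynomial -/
noncomputable def fapp (hA : A.IsHermitian) (f : ℝ → ℝ) : Matrix n n ℝ :=
  aeval A (fpoly hA f)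

lemma fpoly_eval_mem (f : ℝ → ℝ) {x : ℝ} (hx : x ∈ nodes hA) :
    (fpoly hA f).eval x = f x := by
  have := Lagrange.eval_interpolate_at_node f (Set.injOn_id _) hx
  simpa [fpoly] using this

lemma fpoly_eval_eig (f : ℝ → ℝ) (i : n) :
    (fpoly hA f).eval (hA.eigenvalues i) = f (hA.eigenvalues i) :=
  fpoly_eval_mem hA f (Finset.mem_insert_of_mem (Finset.mem_image_of_mem _ (Finset.mem_univ i)))

lemma fpoly_eval_zero (f : ℝ → ℝ) : (fpoly hA f).eval 0 = f 0 :=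
  fpoly_eval_mem hA f (Finset.mem_insert_self _ _)

lemma fapp_repr (f : ℝ → ℝ) :
    fapp hA f = (Matrix.IsHermitian.eigenvectorUnitary hA : Matrix n n ℝ) *
      diagonal (fun i => f (hA.eigenvalues i)) *
      (star (Matrix.IsHermitian.eigenvectorUnitary hA : Matrix n n ℝ)) := by
  have h : (fun i => (fpoly hA f).eval (hA.eigenvalues i)) = (fun i => f (hA.eigenvalues i)) :=
    funext (fpoly_eval_eig hA f)
  rw [fapp, aeval_repr hA, h]

lemma fapp_mul (f g : ℝ → ℝ) :
    fapp hA f * fapp hA g = fapp hA (fun x => f x * g x) := by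
  set U : Matrix n n ℝ := (Matrix.IsHermitian.eigenvectorUnitary hA : Matrix n n ℝ)
  have hUU : star U * U = 1 :=
    (Matrix.mem_unitaryGroup_iff').mp (Matrix.IsHermitian.eigenvectorUnitary hA).2
  rw [fapp_repr hA f, fapp_repr hA g, fapp_repr hA (fun x => f x * g x)]
  calc U * diagonal (fun i => f (hA.eigenvalues i)) * star U *
        (U * diagonal (fun i => g (hA.eigenvalues i)) * star U)
      = U * diagonal (fun i => f (hA.eigenvalues i)) * (star U * U) *
        diagonal (fun i => g (hA.eigenvalues i)) * star U := by simp only [Matrix.mul_assoc]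
    _ = U * (diagonal (fun i => f (hA.eigenvalues i)) *
        diagonal (fun i => g (hA.eigenvalues i))) * star U := by
        rw [hUU, Matrix.mul_one]; simp only [Matrix.mul_assoc]
    _ = U * diagonal (fun i => f (hA.eigenvalues i) * g (hA.eigenvalues i)) * star U := by
        rw [Matrix.diagonal_mul_diagonal]

lemma fapp_transpose (f : ℝ → ℝ) : (fapp hA f)ᵀ = fapp hA f := by
  rw [← ct_eq, fapp_repr hA f]
  simp only [Matrix.conjTranspose_mul, Matrix.star_eq_conjTranspose,
    Matrix.conjTranspose_conjTranspose, Matrix.diagonal_conjTranspose]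
  have h : star (fun i => f (hA.eigenvalues i)) = (fun i => f (hA.eigenvalues i)) := by
    funext i; simp
  rw [h]
  simp only [Matrix.mul_assoc]

lemma fapp_congr {f g : ℝ → ℝ} (h : ∀ i, f (hA.eigenvalues i) = g (hA.eigenvalues i)) :
    fapp hA f = fapp hA g := by
  have h2 : (fun i => f (hA.eigenvalues i)) = (fun i => g (hA.eigenvalues i)) := funext h
  rw [fapp_repr hA f, fapp_repr hA g, h2]

lemma fapp_id : fapp hA (fun x => x) = A := by
  rw [fapp_repr]
  exact (Matrix.IsHermitian.spectral_theorem hA).symm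

lemma fapp_one : fapp hA (fun _ => 1) = 1 := by
  rw [fapp_repr]
  have : diagonal (fun _ : n => (1:ℝ)) = 1 := by simp
  rw [this, Matrix.mul_one]
  exact (Matrix.mem_unitaryGroup_iff).mp (Matrix.IsHermitian.eigenvectorUnitary hA).2

lemma fapp_posSemidef {f : ℝ → ℝ} (h : ∀ i, 0 ≤ f (hA.eigenvalues i)) :
    (fapp hA f).PosSemidef := by
  rw [fapp_repr]
  have hd : (diagonal (fun i => f (hA.eigenvalues i))).PosSemidef :=
    Matrix.PosSemidef.diagonal h
  have := hd.mul_mul_conjTranspose_same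
    (Matrix.IsHermitian.eigenvectorUnitary hA : Matrix n n ℝ)
  simpa [Matrix.star_eq_conjTranspose] using this

lemma fapp_eq_zero {f : ℝ → ℝ} (h : ∀ i, f (hA.eigenvalues i) = 0) :
    fapp hA f = 0 := by
  rw [fapp_repr]
  have : diagonal (fun i => f (hA.eigenvalues i)) = 0 := by
    ext i j; by_cases hij : i = j <;> simp [Matrix.diagonal, hij, h]
  rw [this]
  simp

lemma fapp_isHermitian (f : ℝ → ℝ) : (fapp hA f).IsHermitian := by
  rw [Matrix.IsHermitian, ct_eq]
  exact fapp_transpose hA f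

lemma commute_aeval_poly {A B : Matrix n n ℝ} (h : B * A = A * B) (p : ℝ[X]) :
    B * aeval A p = aeval A p * B := by
  induction p using Polynomial.induction_on' with
  | add p q hp hq => rw [map_add, Matrix.mul_add, Matrix.add_mul, hp, hq]
  | monomial k a =>
      rw [Polynomial.aeval_monomial]
      have h1 : B * A ^ k = A ^ k * B := ((show Commute B A from h).pow_right k).eq
      calc B * ((algebraMap ℝ (Matrix n n ℝ)) a * A ^ k)
          = ((algebraMap ℝ (Matrix n n ℝ)) a) * (B * A ^ k) := by
            rw [← Matrix.mul_assoc, ← Algebra.commutes a B, Matrix.mul_assoc]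
        _ = ((algebraMap ℝ (Matrix n n ℝ)) a) * (A ^ k * B) := by rw [h1]
        _ = ((algebraMap ℝ (Matrix n n ℝ)) a * A ^ k) * B := by rw [Matrix.mul_assoc]

lemma commute_fapp {B : Matrix n n ℝ} (h : B * A = A * B) (f : ℝ → ℝ) :
    B * fapp hA f = fapp hA f * B :=
  commute_aeval_poly h (fpoly hA f)

/-- if f 0 = 0 and A * P = A, then fapp f * P = fapp f -/
lemma fapp_mul_of_zero {f : ℝ → ℝ} (hf : f 0 = 0) {P : Matrix n n ℝ}
    (hAP : A * P = A) : fapp hA f * P = fapp hA f := by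
  have hdvd : X ∣ fpoly hA f := by
    rw [Polynomial.X_dvd_iff, Polynomial.coeff_zero_eq_eval_zero, fpoly_eval_zero hA f, hf]
  obtain ⟨q, hq⟩ := hdvd
  rw [fapp, hq, _root_.map_mul, Polynomial.aeval_X]
  have hcomm : A * aeval A q = aeval A q * A := commute_aeval_poly rfl q
  rw [hcomm, Matrix.mul_assoc, hAP]

lemma mul_fapp_of_zero {f : ℝ → ℝ} (hf : f 0 = 0) {P : Matrix n n ℝ}
    (hPA : P * A = A) : P * fapp hA f = fapp hA f := by
  have hdvd : X ∣ fpoly hA f := by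
    rw [Polynomial.X_dvd_iff, Polynomial.coeff_zero_eq_eval_zero, fpoly_eval_zero hA f, hf]
  obtain ⟨q, hq⟩ := hdvd
  rw [fapp, hq, _root_.map_mul, Polynomial.aeval_X, ← Matrix.mul_assoc, hPA]

end FC
lemma fapp_mul_self {A : Matrix n n ℝ} (hA : A.IsHermitian) (f : ℝ → ℝ) :
    fapp hA f * A = fapp hA (fun x => f x * x) :=
  (congrArg (fun Z => fapp hA f * Z) (fapp_id hA).symm).trans (fapp_mul hA f (fun x => x))

lemma self_mul_fapp {A : Matrix n n ℝ} (hA : A.IsHermitian) (f : ℝ → ℝ) :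
    A * fapp hA f = fapp hA (fun x => x * f x) :=
  (congrArg (fun Z => Z * fapp hA f) (fapp_id hA).symm).trans (fapp_mul hA (fun x => x) f)

section PSD

variable {m : Type*} [Fintype m]

lemma psd_smul {A : Matrix n n ℝ} (hA : A.PosSemidef) {c : ℝ} (hc : 0 ≤ c) :
    (c • A).PosSemidef := by
  refine Matrix.PosSemidef.of_dotProduct_mulVec_nonneg ?_ fun x => ?_
  · rw [Matrix.IsHermitian, ct_eq, Matrix.transpose_smul, ← ct_eq, hA.1]
  · rw [Matrix.smul_mulVec, dotProduct_smul, smul_eq_mul]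
    exact mul_nonneg hc (hA.dotProduct_mulVec_nonneg x)

lemma psd_conj {A : Matrix n n ℝ} (hA : A.PosSemidef) (B : Matrix n m ℝ) :
    (Bᵀ * A * B).PosSemidef := by
  have := hA.conjTranspose_mul_mul_same B
  rwa [ct_eq] at this

lemma psd_conj' {A : Matrix n n ℝ} (hA : A.PosSemidef) (B : Matrix m n ℝ) :
    (B * A * Bᵀ).PosSemidef := by
  have := hA.mul_mul_conjTranspose_same B
  rwa [ct_eq] at this

lemma psd_tmul {k : Type*} [Fintype k] (B : Matrix m k ℝ) : (Bᵀ * B).PosSemidef := by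
  have := Matrix.posSemidef_conjTranspose_mul_self B
  rwa [ct_eq] at this

lemma psd_tmul' {k : Type*} [Fintype k] (B : Matrix m k ℝ) : (B * Bᵀ).PosSemidef := by
  have := Matrix.posSemidef_self_mul_conjTranspose B
  rwa [ct_eq] at this

lemma dotProduct_self_nonneg (v : m → ℝ) : 0 ≤ v ⬝ᵥ v :=
  Finset.sum_nonneg fun i _ => mul_self_nonneg _

lemma eq_zero_of_neg_psd {k : Type*} [Fintype k] [DecidableEq k] {Z : Matrix m k ℝ}
    (h : (-(Zᵀ * Z)).PosSemidef) : Z = 0 := by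
  have hz : ∀ x : k → ℝ, Z *ᵥ x = 0 := by
    intro x
    have h2 := h.dotProduct_mulVec_nonneg x
    have : star x ⬝ᵥ ((-(Zᵀ * Z)) *ᵥ x) = -((Z *ᵥ x) ⬝ᵥ (Z *ᵥ x)) := by
      rw [Matrix.neg_mulVec, dotProduct_neg, star_trivial, ← Matrix.mulVec_mulVec,
        Matrix.dotProduct_mulVec, Matrix.vecMul_transpose]
    rw [this] at h2
    have h3 : (Z *ᵥ x) ⬝ᵥ (Z *ᵥ x) = 0 :=
      le_antisymm (by linarith) (dotProduct_self_nonneg _)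
    exact dotProduct_self_eq_zero.mp h3
  ext i j
  have := congrFun (hz (Pi.single j 1)) i
  simpa [Matrix.mulVec_single] using this

lemma fapp_sub {A : Matrix n n ℝ} (hA : A.IsHermitian) (f g : ℝ → ℝ) :
    fapp hA f - fapp hA g = fapp hA (fun x => f x - g x) := by
  rw [fapp_repr hA f, fapp_repr hA g, fapp_repr hA (fun x => f x - g x)]
  have h : (diagonal fun i => f (hA.eigenvalues i) - g (hA.eigenvalues i))
      = (diagonal fun i => f (hA.eigenvalues i)) - (diagonal fun i => g (hA.eigenvalues i)) := by
    ext i j; by_cases hij : i = j <;> simp [Matrix.diagonal, hij]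
  rw [h, Matrix.mul_sub, Matrix.sub_mul]

lemma psd_one_sub_of_sq {M : Matrix n n ℝ} (hM : M.PosSemidef)
    (h : (M - M * M).PosSemidef) : ((1 : Matrix n n ℝ) - M).PosSemidef := by
  have hherm := hM.1
  have hev : ∀ i, hherm.eigenvalues i ≤ 1 := by
    intro i
    set v := ⇑(hherm.eigenvectorBasis i) with hv
    set μ := hherm.eigenvalues i with hμ
    have hMv : M *ᵥ v = μ • v := hherm.mulVec_eigenvectorBasis i
    have hMMv : (M * M) *ᵥ v = (μ * μ) • v := by
      rw [← Matrix.mulVec_mulVec, hMv, Matrix.mulVec_smul, hMv, smul_smul]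
    have h2 := h.dotProduct_mulVec_nonneg v
    have hsub : (M - M * M) *ᵥ v = (μ - μ * μ) • v := by
      rw [Matrix.sub_mulVec, hMv, hMMv, sub_smul]
    rw [hsub, star_trivial, dotProduct_smul, smul_eq_mul] at h2
    have hvnz : v ⬝ᵥ v ≠ 0 := by
      intro h0
      have hv0 : v = 0 := dotProduct_self_eq_zero.mp h0
      have : hherm.eigenvectorBasis i = 0 := by
        apply PiLp.ext
        intro j
        exact congrFun hv0 j
      exact hherm.eigenvectorBasis.orthonormal.ne_zero i this
    have hvpos : 0 < v ⬝ᵥ v := lt_of_le_of_ne (dotProduct_self_nonneg v) (Ne.symm hvnz)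
    have hμ0 : 0 ≤ μ := hM.eigenvalues_nonneg i
    have h4 : 0 ≤ μ - μ * μ := by
      by_contra hlt
      push_neg at hlt
      have := mul_neg_of_neg_of_pos hlt hvpos
      linarith
    nlinarith
  have heq : (1 : Matrix n n ℝ) - M = fapp hherm (fun x => 1 - x) := by
    rw [← fapp_sub hherm, fapp_one hherm, fapp_id hherm]
  rw [heq]
  refine fapp_posSemidef hherm fun i => ?_
  have := hev i
  show (0:ℝ) ≤ 1 - hherm.eigenvalues i
  linarith

lemma psd_one_sub_flip {C : Matrix n n ℝ} (h : ((1 : Matrix n n ℝ) - Cᵀ * C).PosSemidef) :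
    ((1 : Matrix n n ℝ) - C * Cᵀ).PosSemidef := by
  have hM : (C * Cᵀ).PosSemidef := psd_tmul' C
  have key : (C * Cᵀ - (C * Cᵀ) * (C * Cᵀ)).PosSemidef := by
    have h2 := psd_conj' h C
    have h3 : C * ((1 : Matrix n n ℝ) - Cᵀ * C) * Cᵀ = C * Cᵀ - (C * Cᵀ) * (C * Cᵀ) := by
      noncomm_ring
    rwa [h3] at h2
  exact psd_one_sub_of_sq hM key

end PSD
section Main

lemma mul_assoc_rw {a b c d : Type*} [Fintype b] [Fintype c]
    {A : Matrix a b ℝ} {B : Matrix b c ℝ} {C : Matrix a c ℝ} (h : A * B = C)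
    (Z : Matrix c d ℝ) : A * (B * Z) = C * Z := by
  rw [← Matrix.mul_assoc, h]

theorem exists_skew {m : Type*} [Fintype m] [DecidableEq m]
    (L : ℝ) (X : Matrix n m ℝ) (Y : Matrix n m ℝ)
    (h1 : Xᵀ * Y = -(Yᵀ * X))
    (h2 : (L ^ 2 • (Xᵀ * X) - Yᵀ * Y).PosSemidef) :
    ∃ Q : Matrix n n ℝ, Qᵀ = -Q ∧
      (L ^ 2 • (1 : Matrix n n ℝ) - Qᵀ * Q).PosSemidef ∧ Y = Q * X := by
  classical
  have hYtX : Yᵀ * X = -(Xᵀ * Y) := by rw [h1, neg_neg]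
  obtain ⟨G, hGdef⟩ : ∃ G' : Matrix m m ℝ, G' = Xᵀ * X := ⟨_, rfl⟩
  have hGpsd : G.PosSemidef := hGdef ▸ psd_tmul X
  rw [← hGdef] at h2
  set pinv : ℝ → ℝ := fun x => if x = 0 then 0 else x⁻¹ with hpinvdef
  set indf : ℝ → ℝ := fun x => if x = 0 then 0 else 1 with hinddef
  obtain ⟨W, hWdef⟩ : ∃ W' : Matrix m m ℝ, W' = fapp hGpsd.1 pinv := ⟨_, rfl⟩
  obtain ⟨Pi0, hPi0def⟩ : ∃ P' : Matrix m m ℝ, P' = fapp hGpsd.1 indf := ⟨_, rfl⟩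
  have hWt : Wᵀ = W := by rw [hWdef]; exact fapp_transpose _ _
  have hPi0t : Pi0ᵀ = Pi0 := by rw [hPi0def]; exact fapp_transpose _ _
  have hWG : W * G = Pi0 := by
    rw [hWdef, hPi0def]
    refine (fapp_mul_self hGpsd.1 pinv).trans (fapp_congr hGpsd.1 fun i => ?_)
    by_cases h : hGpsd.1.eigenvalues i = 0 <;>
      simp [hpinvdef, hinddef, h, inv_mul_cancel₀]
  have hWGW : W * G * W = W := by
    rw [hWG, hWdef, hPi0def]
    refine (fapp_mul hGpsd.1 indf pinv).trans (fapp_congr hGpsd.1 fun i => ?_)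
    by_cases h : hGpsd.1.eigenvalues i = 0 <;> simp [hpinvdef, hinddef, h]
  have hGPi0 : G * Pi0 = G := by
    rw [hPi0def]
    refine (self_mul_fapp hGpsd.1 indf).trans
      ((fapp_congr hGpsd.1 fun i => ?_).trans (fapp_id hGpsd.1))
    by_cases h : hGpsd.1.eigenvalues i = 0 <;> simp [hinddef, h]
  obtain ⟨J, hJdef⟩ : ∃ J' : Matrix m m ℝ, J' = 1 - Pi0 := ⟨_, rfl⟩
  have hJt : Jᵀ = J := by
    rw [hJdef, Matrix.transpose_sub, Matrix.transpose_one, hPi0t]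
  have hK : G * J = 0 := by
    rw [hJdef, Matrix.mul_sub, Matrix.mul_one, hGPi0, sub_self]
  have hXPi0 : X * Pi0 = X := by
    have hz : X * J = 0 := by
      apply Matrix.conjTranspose_mul_self_eq_zero.mp
      rw [ct_eq, Matrix.transpose_mul, hJt, Matrix.mul_assoc,
        mul_assoc_rw hGdef.symm, hK, Matrix.mul_zero]
    rw [hJdef, Matrix.mul_sub, Matrix.mul_one, sub_eq_zero] at hz
    exact hz.symm
  have hYPi0 : Y * Pi0 = Y := by
    have hpsd0 : (-((Y * J)ᵀ * (Y * J))).PosSemidef := by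
      have hc := psd_conj h2 J
      have he : Jᵀ * (L ^ 2 • G - Yᵀ * Y) * J = -((Y * J)ᵀ * (Y * J)) := by
        rw [hJt, Matrix.mul_sub, Matrix.sub_mul, Matrix.mul_smul, Matrix.smul_mul,
          Matrix.mul_assoc J G J, hK, Matrix.mul_zero, smul_zero, zero_sub,
          Matrix.transpose_mul, hJt]
        simp only [Matrix.mul_assoc]
      rwa [he] at hc
    have hz := eq_zero_of_neg_psd hpsd0
    rw [hJdef, Matrix.mul_sub, Matrix.mul_one, sub_eq_zero] at hz
    exact hz.symm
  -- the projection onto the range of X, and approximate operator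
  obtain ⟨P, hPdef⟩ : ∃ P' : Matrix n n ℝ, P' = X * W * Xᵀ := ⟨_, rfl⟩
  obtain ⟨M, hMdef⟩ : ∃ M' : Matrix n n ℝ, M' = Y * W * Xᵀ := ⟨_, rfl⟩
  have hPt : Pᵀ = P := by
    rw [hPdef, Matrix.transpose_mul, Matrix.transpose_mul, hWt, Matrix.transpose_transpose,
      Matrix.mul_assoc]
  have hMt : Mᵀ = X * W * Yᵀ := by
    rw [hMdef, Matrix.transpose_mul, Matrix.transpose_mul, hWt, Matrix.transpose_transpose,
      Matrix.mul_assoc]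
  have hWGW' : ∀ (Z : Matrix m n ℝ), W * (G * (W * Z)) = W * Z := by
    intro Z
    rw [← Matrix.mul_assoc, ← Matrix.mul_assoc, hWGW]
  have hPX : P * X = X := by
    rw [hPdef]
    simp only [Matrix.mul_assoc]
    rw [← hGdef, hWG, hXPi0]
  have hMX : M * X = Y := by
    rw [hMdef]
    simp only [Matrix.mul_assoc]
    rw [← hGdef, hWG, hYPi0]
  have hPP : P * P = P := by
    rw [hPdef]
    simp only [Matrix.mul_assoc]
    rw [mul_assoc_rw hGdef.symm, hWGW']
  have hMP : M * P = M := by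
    rw [hMdef, hPdef]
    simp only [Matrix.mul_assoc]
    rw [mul_assoc_rw hGdef.symm, hWGW']
  obtain ⟨A, hAdef⟩ : ∃ A' : Matrix n n ℝ, A' = P * M := ⟨_, rfl⟩
  obtain ⟨B, hBdef⟩ : ∃ B' : Matrix n n ℝ, B' = M - A := ⟨_, rfl⟩
  have hAtform : Aᵀ = Mᵀ * P := by rw [hAdef, Matrix.transpose_mul, hPt]
  have hAt : Aᵀ = -A := by
    rw [hAtform, hMt, hAdef, hPdef, hMdef]
    simp only [Matrix.mul_assoc]
    rw [mul_assoc_rw hYtX]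
    simp only [Matrix.neg_mul, Matrix.mul_neg, Matrix.mul_assoc]
  have hAP : A * P = A := by rw [hAdef, Matrix.mul_assoc, hMP]
  have hPA : P * A = A := by rw [hAdef, ← Matrix.mul_assoc, hPP]
  have hPAt : P * Aᵀ = Aᵀ := by
    have e : P * Aᵀ = (A * Pᵀ)ᵀ := by
      rw [Matrix.transpose_mul, Matrix.transpose_transpose]
    rw [e, hPt, hAP]
  have hPB : P * B = 0 := by rw [hBdef, Matrix.mul_sub, ← hAdef, hPA, sub_self]
  have hBP : B * P = B := by rw [hBdef, Matrix.sub_mul, hMP, hAP]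
  have hAtB : Aᵀ * B = 0 := by rw [hAtform, Matrix.mul_assoc, hPB, Matrix.mul_zero]
  have hBtA : Bᵀ * A = 0 := by
    have e : Bᵀ * A = (Aᵀ * B)ᵀ := by
      rw [Matrix.transpose_mul, Matrix.transpose_transpose]
    rw [e, hAtB, Matrix.transpose_zero]
  obtain ⟨T, hTdef⟩ : ∃ T' : Matrix n n ℝ, T' = L ^ 2 • P - Aᵀ * A := ⟨_, rfl⟩
  have hMtM : (L ^ 2 • P - Mᵀ * M).PosSemidef := by
    have hc := psd_conj h2 (W * Xᵀ)
    have he : (W * Xᵀ)ᵀ * (L ^ 2 • G - Yᵀ * Y) * (W * Xᵀ) = L ^ 2 • P - Mᵀ * M := by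
      have hZt : (W * Xᵀ)ᵀ = X * W := by
        rw [Matrix.transpose_mul, hWt, Matrix.transpose_transpose]
      rw [hZt, Matrix.mul_sub, Matrix.sub_mul, Matrix.mul_smul, Matrix.smul_mul, hMt, hMdef,
        hPdef]
      congr 1
      · congr 1
        simp only [Matrix.mul_assoc]
        rw [hWGW']
      · simp only [Matrix.mul_assoc]
    rwa [he] at hc
  have hMsplit : Mᵀ * M = Aᵀ * A + Bᵀ * B := by
    have hM' : M = A + B := by rw [hBdef]; abel
    calc Mᵀ * M = (A + B)ᵀ * (A + B) := by rw [← hM']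
    _ = Aᵀ * A + Bᵀ * B := by
        simp only [Matrix.transpose_add, Matrix.add_mul, Matrix.mul_add, hAtB, hBtA,
          add_zero, zero_add]
  have hTsplit : T - Bᵀ * B = L ^ 2 • P - Mᵀ * M := by rw [hTdef, hMsplit]; abel
  have hTpsd : T.PosSemidef := by
    have e : T = (L ^ 2 • P - Mᵀ * M) + Bᵀ * B := by rw [hTdef, hMsplit]; abel
    rw [e]
    exact hMtM.add (psd_tmul B)
  have hBtBleT : (T - Bᵀ * B).PosSemidef := by rw [hTsplit]; exact hMtM
  have hT2 : T = L ^ 2 • P + A * A := by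
    rw [hTdef, hAt, Matrix.neg_mul, sub_neg_eq_add]
  have hTP : T * P = T := by
    rw [hTdef, Matrix.sub_mul, Matrix.smul_mul, hPP, Matrix.mul_assoc, hAP]
  have hPT : P * T = T := by
    rw [hTdef, Matrix.mul_sub, Matrix.mul_smul, hPP, ← Matrix.mul_assoc, hPAt]
  have hTA : T * A = A * T := by
    rw [hT2]
    simp only [Matrix.add_mul, Matrix.mul_add, Matrix.smul_mul, Matrix.mul_smul, hPA, hAP,
      Matrix.mul_assoc]
  -- square root machinery for T
  set rsq : ℝ → ℝ := Real.sqrt with hrsqdef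
  set rsqi : ℝ → ℝ := fun x => if x = 0 then 0 else (Real.sqrt x)⁻¹ with hrsqidef
  obtain ⟨S, hSdef⟩ : ∃ S' : Matrix n n ℝ, S' = fapp hTpsd.1 rsq := ⟨_, rfl⟩
  obtain ⟨Si, hSidef⟩ : ∃ S' : Matrix n n ℝ, S' = fapp hTpsd.1 rsqi := ⟨_, rfl⟩
  obtain ⟨PiT, hPiTdef⟩ : ∃ S' : Matrix n n ℝ, S' = fapp hTpsd.1 indf := ⟨_, rfl⟩
  have hSt : Sᵀ = S := by rw [hSdef]; exact fapp_transpose _ _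
  have hSit : Siᵀ = Si := by rw [hSidef]; exact fapp_transpose _ _
  have hSS : S * S = T := by
    rw [hSdef]
    refine (fapp_mul hTpsd.1 rsq rsq).trans
      ((fapp_congr hTpsd.1 fun i => ?_).trans (fapp_id hTpsd.1))
    exact Real.mul_self_sqrt (hTpsd.eigenvalues_nonneg i)
  have hSiS : Si * S = PiT := by
    rw [hSidef, hSdef, hPiTdef]
    refine (fapp_mul hTpsd.1 rsqi rsq).trans (fapp_congr hTpsd.1 fun i => ?_)
    by_cases h : hTpsd.1.eigenvalues i = 0
    · simp [hrsqidef, hrsqdef, hinddef, h]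
    · have hpos : 0 < hTpsd.1.eigenvalues i :=
        lt_of_le_of_ne (hTpsd.eigenvalues_nonneg i) (Ne.symm h)
      have hsq : Real.sqrt (hTpsd.1.eigenvalues i) ≠ 0 :=
        ne_of_gt (Real.sqrt_pos.mpr hpos)
      simp [hrsqidef, hrsqdef, hinddef, h, inv_mul_cancel₀ hsq]
  have hSiP : Si * P = Si := by
    rw [hSidef]
    exact fapp_mul_of_zero _ (by simp [hrsqidef]) hTP
  have hAS : A * S = S * A := by
    rw [hSdef]
    exact commute_fapp _ hTA.symm rsq
  have hTPiT : T * PiT = T := by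
    rw [hPiTdef]
    refine (self_mul_fapp hTpsd.1 indf).trans
      ((fapp_congr hTpsd.1 fun i => ?_).trans (fapp_id hTpsd.1))
    by_cases h : hTpsd.1.eigenvalues i = 0 <;> simp [hinddef, h]
  obtain ⟨JT, hJTdef⟩ : ∃ J' : Matrix n n ℝ, J' = 1 - PiT := ⟨_, rfl⟩
  have hJTt : JTᵀ = JT := by
    rw [hJTdef, Matrix.transpose_sub, Matrix.transpose_one, hPiTdef]
    rw [fapp_transpose]
  have hKT : T * JT = 0 := by
    rw [hJTdef, Matrix.mul_sub, Matrix.mul_one, hTPiT, sub_self]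
  have hBPiT : B * PiT = B := by
    have hpsd0 : (-((B * JT)ᵀ * (B * JT))).PosSemidef := by
      have hc := psd_conj hBtBleT JT
      have he : JTᵀ * (T - Bᵀ * B) * JT = -((B * JT)ᵀ * (B * JT)) := by
        rw [hJTt, Matrix.mul_sub, Matrix.sub_mul, Matrix.mul_assoc JT T JT, hKT,
          Matrix.mul_zero, zero_sub, Matrix.transpose_mul, hJTt]
        simp only [Matrix.mul_assoc]
      rwa [he] at hc
    have hz := eq_zero_of_neg_psd hpsd0
    rw [hJTdef, Matrix.mul_sub, Matrix.mul_one, sub_eq_zero] at hz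
    exact hz.symm
  obtain ⟨C, hCdef⟩ : ∃ C' : Matrix n n ℝ, C' = B * Si := ⟨_, rfl⟩
  have hCS : C * S = B := by rw [hCdef, Matrix.mul_assoc, hSiS, hBPiT]
  have hCP : C * P = C := by rw [hCdef, Matrix.mul_assoc, hSiP]
  have hPC : P * C = 0 := by rw [hCdef, ← Matrix.mul_assoc, hPB, Matrix.zero_mul]
  have hCt : Cᵀ = Si * Bᵀ := by rw [hCdef, Matrix.transpose_mul, hSit]
  have hCtP : Cᵀ * P = 0 := by
    have e : Cᵀ * P = (Pᵀ * C)ᵀ := by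
      rw [Matrix.transpose_mul, Matrix.transpose_transpose]
    rw [e, hPt, hPC, Matrix.transpose_zero]
  have hSiTSi : Si * T * Si = PiT := by
    have e1 : Si * T = fapp hTpsd.1 (fun x => rsqi x * x) := by
      rw [hSidef]
      exact fapp_mul_self hTpsd.1 rsqi
    rw [e1, hSidef, hPiTdef]
    refine (fapp_mul hTpsd.1 _ rsqi).trans (fapp_congr hTpsd.1 fun i => ?_)
    by_cases h : hTpsd.1.eigenvalues i = 0
    · simp [hrsqidef, hinddef, h]
    · have hpos : 0 < hTpsd.1.eigenvalues i :=
        lt_of_le_of_ne (hTpsd.eigenvalues_nonneg i) (Ne.symm h)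
      have hsqr : Real.sqrt (hTpsd.1.eigenvalues i) * Real.sqrt (hTpsd.1.eigenvalues i)
          = hTpsd.1.eigenvalues i := Real.mul_self_sqrt hpos.le
      have hsq : Real.sqrt (hTpsd.1.eigenvalues i) ≠ 0 :=
        ne_of_gt (Real.sqrt_pos.mpr hpos)
      simp only [hrsqidef, hinddef, if_neg h]
      rw [← hsqr]
      field_simp
      rw [Real.sqrt_sq (Real.sqrt_nonneg _)]
  obtain ⟨E, hEdef⟩ : ∃ E' : Matrix n n ℝ, E' = 1 - Cᵀ * C := ⟨_, rfl⟩
  have hEpsd : E.PosSemidef := by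
    have e : E = ((1 : Matrix n n ℝ) - PiT) + Si * (T - Bᵀ * B) * Si := by
      rw [hEdef, hCt, hCdef]
      have e2 : Si * (T - Bᵀ * B) * Si = PiT - Si * Bᵀ * (B * Si) := by
        rw [Matrix.mul_sub, Matrix.sub_mul, hSiTSi]
        simp only [Matrix.mul_assoc]
      rw [e2]
      abel
    rw [e]
    have hp1 : ((1 : Matrix n n ℝ) - PiT).PosSemidef := by
      have e3 : (1 : Matrix n n ℝ) - PiT = fapp hTpsd.1 (fun x => 1 - indf x) := by
        rw [hPiTdef, ← fapp_sub hTpsd.1, fapp_one]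
      rw [e3]
      refine fapp_posSemidef _ fun i => ?_
      by_cases h : hTpsd.1.eigenvalues i = 0 <;> simp [hinddef, h]
    have hp2 : (Si * (T - Bᵀ * B) * Si).PosSemidef := by
      have := psd_conj hBtBleT Si
      rwa [hSit] at this
    exact hp1.add hp2
  obtain ⟨F, hFdef⟩ : ∃ F' : Matrix n n ℝ, F' = fapp hEpsd.1 rsq := ⟨_, rfl⟩
  have hFt : Fᵀ = F := by rw [hFdef]; exact fapp_transpose _ _
  have hFF : F * F = E := by
    rw [hFdef]
    refine (fapp_mul hEpsd.1 rsq rsq).trans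
      ((fapp_congr hEpsd.1 fun i => ?_).trans (fapp_id hEpsd.1))
    exact Real.mul_self_sqrt (hEpsd.eigenvalues_nonneg i)
  have hCCt1 : ((1 : Matrix n n ℝ) - C * Cᵀ).PosSemidef := by
    apply psd_one_sub_flip
    rw [← hEdef]
    exact hEpsd
  have hIPC : (((1 : Matrix n n ℝ) - P) - C * Cᵀ).PosSemidef := by
    obtain ⟨JP, hJPdef⟩ : ∃ J' : Matrix n n ℝ, J' = 1 - P := ⟨_, rfl⟩
    have hJPt : JPᵀ = JP := by
      rw [hJPdef, Matrix.transpose_sub, Matrix.transpose_one, hPt]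
    have hc := psd_conj' hCCt1 JP
    have hJPC : JP * C = C := by
      rw [hJPdef, Matrix.sub_mul, Matrix.one_mul, hPC, sub_zero]
    have hCtJP : Cᵀ * JP = Cᵀ := by
      rw [hJPdef, Matrix.mul_sub, Matrix.mul_one, hCtP, sub_zero]
    have hJPJP : JP * JP = JP := by
      rw [hJPdef, Matrix.sub_mul, Matrix.one_mul, Matrix.mul_sub, Matrix.mul_one, hPP]
      abel
    have he : JP * ((1 : Matrix n n ℝ) - C * Cᵀ) * JPᵀ
        = ((1 : Matrix n n ℝ) - P) - C * Cᵀ := by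
      rw [hJPt, Matrix.mul_sub, Matrix.mul_one, Matrix.sub_mul, hJPJP,
        ← Matrix.mul_assoc JP C, hJPC, Matrix.mul_assoc, hCtJP, hJPdef]
    rwa [he] at hc
  -- the skew-symmetric interpolating operator
  obtain ⟨D, hDdef⟩ : ∃ D' : Matrix n n ℝ, D' = -(C * A * Cᵀ) := ⟨_, rfl⟩
  obtain ⟨Q, hQdef⟩ : ∃ Q' : Matrix n n ℝ, Q' = A + B - Bᵀ + D := ⟨_, rfl⟩
  obtain ⟨R, hRdef⟩ : ∃ R' : Matrix n n ℝ, R' = F * (S - A * Cᵀ) := ⟨_, rfl⟩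
  have hBt : Bᵀ = S * Cᵀ := by
    have h := congrArg Matrix.transpose hCS
    rw [Matrix.transpose_mul, hSt] at h
    exact h.symm
  have hDt : Dᵀ = -D := by
    rw [hDdef, Matrix.transpose_neg, Matrix.transpose_mul, Matrix.transpose_mul,
      Matrix.transpose_transpose, hAt]
    simp only [Matrix.neg_mul, Matrix.mul_neg, neg_neg, Matrix.mul_assoc]
  have hQt : Qᵀ = -Q := by
    rw [hQdef]
    simp only [Matrix.transpose_add, Matrix.transpose_sub, hAt, hDt,
      Matrix.transpose_transpose]
    abel
  have hQX : Q * X = Y := by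
    have hAX : A * X = P * Y := by rw [hAdef, Matrix.mul_assoc, hMX]
    have hBX : B * X = Y - P * Y := by rw [hBdef, Matrix.sub_mul, hMX, hAX]
    have hBtX : Bᵀ * X = 0 := by
      rw [hBdef, Matrix.transpose_sub, Matrix.sub_mul, hAtform, Matrix.mul_assoc, hPX,
        sub_self]
    have hCtX : Cᵀ * X = 0 := by rw [hCt, Matrix.mul_assoc, hBtX, Matrix.mul_zero]
    have hDX : D * X = 0 := by
      rw [hDdef, Matrix.neg_mul, Matrix.mul_assoc, Matrix.mul_assoc, hCtX]
      simp
    rw [hQdef]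
    simp only [Matrix.add_mul, Matrix.sub_mul]
    rw [hAX, hBX, hBtX, hDX]
    abel
  -- vanishing products
  have hAA' : A * A = A * M := by
    nth_rewrite 2 [hAdef]
    rw [← Matrix.mul_assoc, hAP]
  have hAB0 : A * B = 0 := by rw [hBdef, Matrix.mul_sub, hAA', sub_self]
  have hBA' : B * A = B * M := by
    rw [hAdef, ← Matrix.mul_assoc, hBP]
  have hBB0 : B * B = 0 := by
    nth_rewrite 2 [hBdef]
    rw [Matrix.mul_sub, hBA', sub_self]
  have hAC0 : A * C = 0 := by rw [hCdef, ← Matrix.mul_assoc, hAB0, Matrix.zero_mul]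
  have hBC0 : B * C = 0 := by rw [hCdef, ← Matrix.mul_assoc, hBB0, Matrix.zero_mul]
  have hAD0 : A * D = 0 := by
    rw [hDdef, Matrix.mul_neg, ← Matrix.mul_assoc, ← Matrix.mul_assoc, hAC0,
      Matrix.zero_mul, Matrix.zero_mul, neg_zero]
  have hBD0 : B * D = 0 := by
    rw [hDdef, Matrix.mul_neg, ← Matrix.mul_assoc, ← Matrix.mul_assoc, hBC0,
      Matrix.zero_mul, Matrix.zero_mul, neg_zero]
  have hBtBt0 : Bᵀ * Bᵀ = 0 := by
    have e : Bᵀ * Bᵀ = (B * B)ᵀ := by rw [Matrix.transpose_mul]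
    rw [e, hBB0, Matrix.transpose_zero]
  have hCtA : Cᵀ * A = 0 := by
    have e : Cᵀ * A = (Aᵀ * C)ᵀ := by
      rw [Matrix.transpose_mul, Matrix.transpose_transpose]
    rw [e, hAt, Matrix.neg_mul, hAC0, neg_zero, Matrix.transpose_zero]
  have hCtBt : Cᵀ * Bᵀ = 0 := by
    have e : Cᵀ * Bᵀ = (B * C)ᵀ := by rw [Matrix.transpose_mul]
    rw [e, hBC0, Matrix.transpose_zero]
  have hDA0 : D * A = 0 := by
    rw [hDdef, Matrix.neg_mul]
    simp only [Matrix.mul_assoc]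
    rw [hCtA]
    simp
  have hDBt0 : D * Bᵀ = 0 := by
    rw [hDdef, Matrix.neg_mul]
    simp only [Matrix.mul_assoc]
    rw [hCtBt]
    simp
  -- the 8 surviving terms of Q * Q
  have exp : Q * Q = A * A - A * Bᵀ + B * A - B * Bᵀ - Bᵀ * B - Bᵀ * D + D * B + D * D := by
    rw [hQdef]
    simp only [Matrix.add_mul, Matrix.mul_add, Matrix.sub_mul, Matrix.mul_sub, hAB0, hAD0,
      hBB0, hBD0, hBtA, hBtBt0, hDA0, hDBt0]
    abel
  -- rewrite each surviving term into canonical right-associated form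
  have tABt : A * Bᵀ = S * (A * Cᵀ) := by
    rw [hBt, ← Matrix.mul_assoc, hAS, Matrix.mul_assoc]
  have tBA : B * A = C * (A * S) := by
    rw [← hCS, Matrix.mul_assoc, ← hAS, ← Matrix.mul_assoc, Matrix.mul_assoc]
  have tBBt : B * Bᵀ = L ^ 2 • (C * Cᵀ) + C * (A * (A * Cᵀ)) := by
    rw [hBt, ← hCS, Matrix.mul_assoc, ← Matrix.mul_assoc S S, hSS, hT2]
    rw [Matrix.add_mul, Matrix.mul_add, Matrix.smul_mul, Matrix.mul_smul,
      ← Matrix.mul_assoc C P, hCP]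
    simp only [Matrix.mul_assoc]
  have tBtB : Bᵀ * B = S * (Cᵀ * (C * S)) := by
    rw [hBt, ← hCS]
    simp only [Matrix.mul_assoc]
  have tBtD : Bᵀ * D = -(S * (Cᵀ * (C * (A * Cᵀ)))) := by
    rw [hBt, hDdef, Matrix.mul_neg]
    simp only [Matrix.mul_assoc]
  have tDB : D * B = -(C * (A * (Cᵀ * (C * S)))) := by
    rw [← hCS, hDdef, Matrix.neg_mul]
    simp only [Matrix.mul_assoc]
  have tDD : D * D = C * (A * (Cᵀ * (C * (A * Cᵀ)))) := by
    rw [hDdef, Matrix.neg_mul, Matrix.mul_neg, neg_neg]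
    simp only [Matrix.mul_assoc]
  have eQQ : Q * Q = A * A - S * (A * Cᵀ) + C * (A * S)
      - (L ^ 2 • (C * Cᵀ) + C * (A * (A * Cᵀ)))
      - S * (Cᵀ * (C * S)) + S * (Cᵀ * (C * (A * Cᵀ)))
      - C * (A * (Cᵀ * (C * S))) + C * (A * (Cᵀ * (C * (A * Cᵀ)))) := by
    rw [exp, tABt, tBA, tBBt, tBtB, tBtD, tDB, tDD]
    abel
  -- the square of R
  have hRt : Rᵀ = (S + C * A) * F := by
    rw [hRdef, Matrix.transpose_mul, hFt, Matrix.transpose_sub, hSt, Matrix.transpose_mul,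
      Matrix.transpose_transpose, hAt, Matrix.mul_neg, sub_neg_eq_add]
  have eRR : Rᵀ * R = (L ^ 2 • P + A * A) - S * (A * Cᵀ) + C * (A * S)
      - C * (A * (A * Cᵀ))
      - S * (Cᵀ * (C * S)) + S * (Cᵀ * (C * (A * Cᵀ)))
      - C * (A * (Cᵀ * (C * S))) + C * (A * (Cᵀ * (C * (A * Cᵀ)))) := by
    rw [hRt, hRdef]
    rw [Matrix.mul_assoc, ← Matrix.mul_assoc F F, hFF, hEdef]
    simp only [Matrix.mul_add, Matrix.add_mul, Matrix.mul_sub, Matrix.sub_mul,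
      Matrix.mul_one, Matrix.one_mul, Matrix.mul_assoc]
    rw [hSS, hT2]
    abel
  -- the key identity
  have key : L ^ 2 • (1 : Matrix n n ℝ) - Qᵀ * Q
      = Rᵀ * R + L ^ 2 • (((1 : Matrix n n ℝ) - P) - C * Cᵀ) := by
    rw [hQt, Matrix.neg_mul, sub_neg_eq_add, eQQ, eRR, smul_sub, smul_sub]
    abel
  refine ⟨Q, hQt, ?_, hQX.symm⟩
  rw [key]
  exact (psd_tmul R).add (psd_smul hIPC (sq_nonneg L))




end Main
end SkewInterp

open SkewInterp

/-- Skew-symmetric operator interpolation conditions (Corollary 3.3): there exists a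
skew-symmetric `Q` with `σ_max(Q) ≤ L` (i.e. `QᵀQ ⪯ L²·I`) such that `Y = Q·X` if and
only if `XᵀY = −YᵀX` and `YᵀY ⪯ L²·XᵀX`. -/
theorem skew_symmetric_operator_interpolation
    (d N : ℕ) (L : ℝ) (hL : 0 ≤ L)
    (X Y : Matrix (Fin d) (Fin N) ℝ) :
    (∃ Q : Matrix (Fin d) (Fin d) ℝ,
        Qᵀ = -Q ∧
        (L ^ 2 • (1 : Matrix (Fin d) (Fin d) ℝ) - Qᵀ * Q).PosSemidef ∧
        Y = Q * X) ↔
      (Xᵀ * Y = -(Yᵀ * X) ∧ (L ^ 2 • (Xᵀ * X) - Yᵀ * Y).PosSemidef) := by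
  constructor
  · rintro ⟨Q, hQt, hQpsd, rfl⟩
    constructor
    · rw [Matrix.transpose_mul, hQt]
      simp only [Matrix.neg_mul, Matrix.mul_neg, neg_neg, Matrix.mul_assoc]
    · have hc := psd_conj hQpsd X
      have he : Xᵀ * (L ^ 2 • (1 : Matrix (Fin d) (Fin d) ℝ) - Qᵀ * Q) * X
          = L ^ 2 • (Xᵀ * X) - (Q * X)ᵀ * (Q * X) := by
        rw [Matrix.mul_sub, Matrix.sub_mul, Matrix.mul_smul, Matrix.smul_mul,
          Matrix.mul_one, Matrix.transpose_mul]
        simp only [Matrix.mul_assoc]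
      rwa [he] at hc
  · rintro ⟨h1, h2⟩
    obtain ⟨Q, hQt, hQpsd, hYQX⟩ := exists_skew L X Y h1 h2
    exact ⟨Q, hQt, hQpsd, hYQX⟩
end

section
/- Let X and Y be real d×N matrices and let μ, L be real numbers with −∞ < μ ≤ L < ∞. There exists a real symmetric d×d matrix Q with μ·I ⪯ Q ⪯ L·I such that Y = Q·X if and only if Xᵀ·Y = Yᵀ·X and (Y − μ·X)ᵀ·(L·X − Y) ⪰ 0. -/
open Matrix

namespace SymOpInterp

variable {d : ℕ} {M : Matrix (Fin d) (Fin d) ℝ}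

private lemma conj_conj {U A B : Matrix (Fin d) (Fin d) ℝ} (h : star U * U = 1) :
    (U * A * star U) * (U * B * star U) = U * (A * B) * star U := by
  calc (U * A * star U) * (U * B * star U)
      = U * (A * ((star U * U) * (B * star U))) := by simp only [mul_assoc]
    _ = U * (A * (B * star U)) := by rw [h, one_mul]
    _ = U * (A * B) * star U := by simp only [mul_assoc]

/-- functional calculus for a real hermitian matrix -/
noncomputable def fcal (hM : M.IsHermitian) (f : ℝ → ℝ) : Matrix (Fin d) (Fin d) ℝ :=
  (hM.eigenvectorUnitary : Matrix (Fin d) (Fin d) ℝ) * diagonal (f ∘ hM.eigenvalues) *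
    star (hM.eigenvectorUnitary : Matrix (Fin d) (Fin d) ℝ)

lemma fcal_mul (hM : M.IsHermitian) (f g : ℝ → ℝ) :
    fcal hM f * fcal hM g = fcal hM (fun x => f x * g x) := by
  unfold fcal
  rw [conj_conj (UnitaryGroup.star_mul_self _), diagonal_mul_diagonal]
  rfl

lemma fcal_congr (hM : M.IsHermitian) {f g : ℝ → ℝ}
    (h : ∀ i, f (hM.eigenvalues i) = g (hM.eigenvalues i)) : fcal hM f = fcal hM g := by
  unfold fcal
  congr 2
  exact congrArg diagonal (funext fun i => h i)

lemma fcal_id (hM : M.IsHermitian) : fcal hM id = M := by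
  conv_rhs => rw [hM.spectral_theorem]
  unfold fcal
  rw [RCLike.ofReal_real_eq_id, Function.id_comp]
  rfl

lemma fcal_one (hM : M.IsHermitian) : fcal hM (fun _ => 1) = 1 := by
  unfold fcal
  have h1 : diagonal ((fun _ => (1:ℝ)) ∘ hM.eigenvalues) = 1 := by
    rw [← diagonal_one]; rfl
  rw [h1, mul_one]
  exact hM.eigenvectorUnitary.2.2

lemma fcal_transpose (hM : M.IsHermitian) (f : ℝ → ℝ) : (fcal hM f)ᵀ = fcal hM f := by
  rw [← conjTranspose_eq_transpose_of_trivial]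
  unfold fcal
  rw [star_eq_conjTranspose, conjTranspose_mul, conjTranspose_mul, conjTranspose_conjTranspose,
    diagonal_conjTranspose]
  have h1 : star (f ∘ hM.eigenvalues) = f ∘ hM.eigenvalues := by
    funext i; simp
  rw [h1, mul_assoc]

lemma fcal_sub (hM : M.IsHermitian) (f g : ℝ → ℝ) :
    fcal hM f - fcal hM g = fcal hM (fun x => f x - g x) := by
  unfold fcal
  rw [← sub_mul, ← mul_sub, diagonal_sub]
  rfl

lemma fcal_posSemidef (hM : M.IsHermitian) {f : ℝ → ℝ}
    (h : ∀ i, 0 ≤ f (hM.eigenvalues i)) : (fcal hM f).PosSemidef := by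
  have hd : (diagonal (f ∘ hM.eigenvalues) : Matrix (Fin d) (Fin d) ℝ).PosSemidef :=
    PosSemidef.diagonal (fun i => h i)
  have h2 := hd.mul_mul_conjTranspose_same (hM.eigenvectorUnitary : Matrix (Fin d) (Fin d) ℝ)
  rwa [← star_eq_conjTranspose] at h2

lemma fcal_commute (hM : M.IsHermitian) {A : Matrix (Fin d) (Fin d) ℝ}
    (hAM : A * M = M * A) (f : ℝ → ℝ) : A * fcal hM f = fcal hM f * A := by
  set U : Matrix (Fin d) (Fin d) ℝ := (hM.eigenvectorUnitary : Matrix (Fin d) (Fin d) ℝ) with hU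
  have hU'U : star U * U = 1 := UnitaryGroup.star_mul_self _
  have hUU' : U * star U = 1 := hM.eigenvectorUnitary.2.2
  set A' : Matrix (Fin d) (Fin d) ℝ := star U * A * U with hA'
  have hdiag : star U * M * U = diagonal (hM.eigenvalues) := by
    have h2 := hM.spectral_theorem
    rw [RCLike.ofReal_real_eq_id, Function.id_comp] at h2
    have h3 : star U * M * U = star U * (U * diagonal hM.eigenvalues * star U) * U :=
      congrArg (fun Z => star U * Z * U) h2
    rw [h3]
    calc star U * (U * diagonal hM.eigenvalues * star U) * U
        = (star U * U) * diagonal hM.eigenvalues * (star U * U) := by simp only [mul_assoc]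
      _ = diagonal hM.eigenvalues := by rw [hU'U, one_mul, mul_one]
  have hMU : M = U * diagonal (hM.eigenvalues) * star U := by
    rw [← hdiag]
    calc M = (U * star U) * M * (U * star U) := by rw [hUU', one_mul, mul_one]
      _ = U * (star U * M * U) * star U := by simp only [mul_assoc]
  have hA : A = U * A' * star U := by
    rw [hA']
    calc A = (U * star U) * A * (U * star U) := by rw [hUU', one_mul, mul_one]
      _ = U * (star U * A * U) * star U := by simp only [mul_assoc]
  have step1 : A' * diagonal (hM.eigenvalues) = diagonal (hM.eigenvalues) * A' := by
    have h3 : (U * A' * star U) * (U * diagonal (hM.eigenvalues) * star U)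
        = (U * diagonal (hM.eigenvalues) * star U) * (U * A' * star U) := by
      rw [← hA, ← hMU, hAM]
    rw [conj_conj hU'U, conj_conj hU'U] at h3
    have h4 := congrArg (fun Z => star U * Z * U) h3
    calc A' * diagonal hM.eigenvalues
        = (star U * U) * (A' * diagonal hM.eigenvalues) * (star U * U) := by
          rw [hU'U, one_mul, mul_one]
      _ = star U * (U * (A' * diagonal hM.eigenvalues) * star U) * U := by
          simp only [mul_assoc]
      _ = star U * (U * (diagonal hM.eigenvalues * A') * star U) * U := by rw [h4]
      _ = (star U * U) * (diagonal hM.eigenvalues * A') * (star U * U) := by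
          simp only [mul_assoc]
      _ = diagonal hM.eigenvalues * A' := by rw [hU'U, one_mul, mul_one]
  have step2 : A' * diagonal (f ∘ hM.eigenvalues) = diagonal (f ∘ hM.eigenvalues) * A' := by
    ext i j
    have h1 : A' i j * hM.eigenvalues j = hM.eigenvalues i * A' i j := by
      have h5 := congrFun (congrFun step1 i) j
      simpa [mul_diagonal, diagonal_mul] using h5
    rw [mul_diagonal, diagonal_mul]
    by_cases hij : hM.eigenvalues i = hM.eigenvalues j
    · rw [Function.comp_apply, Function.comp_apply, hij, mul_comm]
    · have hz : A' i j = 0 := by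
        have h2 : A' i j * (hM.eigenvalues j - hM.eigenvalues i) = 0 := by
          linear_combination h1
        rcases mul_eq_zero.mp h2 with h | h
        · exact h
        · exact absurd ((sub_eq_zero.mp h).symm) hij
      simp [hz]
  conv_lhs => rw [hA]
  conv_rhs => rw [hA]
  unfold fcal
  rw [← hU, conj_conj hU'U, conj_conj hU'U, step2]



lemma fcal_mul_base (hM : M.IsHermitian) (f : ℝ → ℝ) :
    fcal hM f * M = fcal hM (fun x => f x * x) := by
  have h := fcal_mul hM f id
  rw [fcal_id hM] at h
  exact h

lemma fcal_base_mul (hM : M.IsHermitian) (f : ℝ → ℝ) :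
    M * fcal hM f = fcal hM (fun x => x * f x) := by
  have h := fcal_mul hM id f
  rw [fcal_id hM] at h
  exact h

end SymOpInterp
namespace SymOpInterp

open Matrix

lemma herm_of_t {n : ℕ} {W : Matrix (Fin n) (Fin n) ℝ} (h : Wᵀ = W) : W.IsHermitian := by
  rwa [Matrix.IsHermitian, conjTranspose_eq_transpose_of_trivial]

lemma dot_mulVec_t {m n : ℕ} (M : Matrix (Fin m) (Fin n) ℝ) (x : Fin m → ℝ) (y : Fin n → ℝ) :
    x ⬝ᵥ (M *ᵥ y) = (Mᵀ *ᵥ x) ⬝ᵥ y := by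
  rw [dotProduct_mulVec, mulVec_transpose]

lemma dot_self_nonneg {n : ℕ} (v : Fin n → ℝ) : 0 ≤ v ⬝ᵥ v :=
  Finset.sum_nonneg (fun i _ => mul_self_nonneg _)

lemma tmul_psd {m n : ℕ} (A : Matrix (Fin m) (Fin n) ℝ) : (Aᵀ * A).PosSemidef := by
  have h := posSemidef_conjTranspose_mul_self A
  rwa [conjTranspose_eq_transpose_of_trivial] at h

lemma psd_conj {n m : ℕ} {A : Matrix (Fin n) (Fin n) ℝ} (hA : A.PosSemidef)
    (B : Matrix (Fin n) (Fin m) ℝ) : (Bᵀ * A * B).PosSemidef := by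
  have h := hA.conjTranspose_mul_mul_same B
  rwa [conjTranspose_eq_transpose_of_trivial] at h

lemma psd_smul {n : ℕ} {A : Matrix (Fin n) (Fin n) ℝ} (hA : A.PosSemidef) {c : ℝ} (hc : 0 ≤ c) :
    (c • A).PosSemidef := by
  refine .of_dotProduct_mulVec_nonneg ?_ (fun x => ?_)
  · rw [Matrix.IsHermitian, conjTranspose_eq_transpose_of_trivial, transpose_smul,
      ← conjTranspose_eq_transpose_of_trivial, hA.1]
  · rw [smul_mulVec, dotProduct_smul, smul_eq_mul]
    exact mul_nonneg hc (hA.dotProduct_mulVec_nonneg x)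

lemma eq_zero_of_transpose_mul_self {m n : ℕ} {A : Matrix (Fin m) (Fin n) ℝ}
    (h : Aᵀ * A = 0) : A = 0 := by
  have h2 : Aᴴ * A = 0 := by rwa [conjTranspose_eq_transpose_of_trivial]
  exact conjTranspose_mul_self_eq_zero.mp h2

lemma eq_zero_of_mul_transpose_self {m n : ℕ} {A : Matrix (Fin m) (Fin n) ℝ}
    (h : A * Aᵀ = 0) : A = 0 := by
  have h2 : (Aᵀ)ᵀ * Aᵀ = 0 := by rwa [transpose_transpose]
  have h3 : Aᵀ = 0 := eq_zero_of_transpose_mul_self h2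
  rwa [transpose_eq_zero] at h3

lemma psd_and_neg_eq_zero {n : ℕ} {W : Matrix (Fin n) (Fin n) ℝ}
    (h1 : W.PosSemidef) (h2 : (-W).PosSemidef) : W = 0 := by
  obtain ⟨B, rfl⟩ : ∃ B : Matrix (Fin n) (Fin n) ℝ, W = Bᴴ * B :=
    ⟨fcal h1.1 Real.sqrt, by
      rw [conjTranspose_eq_transpose_of_trivial, fcal_transpose, fcal_mul,
        fcal_congr h1.1 (g := id) (fun i => Real.mul_self_sqrt (h1.eigenvalues_nonneg i)), fcal_id]⟩
  rw [conjTranspose_eq_transpose_of_trivial] at h2 ⊢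
  suffices hB : B = 0 by rw [hB, Matrix.mul_zero]
  ext i j
  have hq := h2.dotProduct_mulVec_nonneg (Pi.single j 1)
  rw [show star (Pi.single j 1 : Fin n → ℝ) = Pi.single j 1 by simp] at hq
  set x : Fin n → ℝ := Pi.single j 1 with hx
  have he : (x : Fin n → ℝ) ⬝ᵥ ((-(Bᵀ * B)) *ᵥ x) = -((B *ᵥ x) ⬝ᵥ (B *ᵥ x)) := by
    rw [neg_mulVec, dotProduct_neg, ← mulVec_mulVec, dot_mulVec_t, transpose_transpose]
  rw [he] at hq
  have hz : (B *ᵥ x) ⬝ᵥ (B *ᵥ x) = 0 := le_antisymm (by linarith) (dot_self_nonneg _)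
  have hv : B *ᵥ x = 0 := dotProduct_self_eq_zero.mp hz
  have : B i j = (B *ᵥ x) i := by rw [hx, mulVec_single_one]; rfl
  rw [this, hv]; rfl

lemma flip_contraction {n : ℕ} {C : Matrix (Fin n) (Fin n) ℝ}
    (h : (1 - Cᵀ * C).PosSemidef) : (1 - C * Cᵀ).PosSemidef := by
  have hkey : ∀ v : Fin n → ℝ, (C *ᵥ v) ⬝ᵥ (C *ᵥ v) ≤ v ⬝ᵥ v := by
    intro v
    have hq := h.dotProduct_mulVec_nonneg v
    rw [show star v = v by simp, sub_mulVec, one_mulVec, dotProduct_sub, ← mulVec_mulVec,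
      dot_mulVec_t, transpose_transpose] at hq
    linarith
  refine Matrix.PosSemidef.of_dotProduct_mulVec_nonneg ?_ ?_
  · apply herm_of_t
    rw [transpose_sub, transpose_one, transpose_mul, transpose_transpose]
  intro x
  rw [show star x = x by simp, sub_mulVec, one_mulVec, dotProduct_sub, ← mulVec_mulVec,
    dot_mulVec_t]
  set u : Fin n → ℝ := Cᵀ *ᵥ x with hu
  have h1 : u ⬝ᵥ u = x ⬝ᵥ (C *ᵥ u) := (dot_mulVec_t C x u).symm
  have cs : (x ⬝ᵥ (C *ᵥ u))^2 ≤ (x ⬝ᵥ x) * ((C *ᵥ u) ⬝ᵥ (C *ᵥ u)) := by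
    have e1 : ∀ (v w : Fin n → ℝ), v ⬝ᵥ w = ∑ i, v i * w i := fun _ _ => rfl
    have e2 : ∀ (v : Fin n → ℝ), v ⬝ᵥ v = ∑ i, v i ^ 2 := by
      intro v; rw [e1]; exact Finset.sum_congr rfl (fun i _ => (sq (v i)).symm ▸ (pow_two (v i)).symm ▸ rfl)
    rw [e1, e2, e2]
    exact Finset.sum_mul_sq_le_sq_mul_sq Finset.univ x (C *ᵥ u)
  have h3 : (u ⬝ᵥ u)^2 ≤ (x ⬝ᵥ x) * (u ⬝ᵥ u) := by
    calc (u ⬝ᵥ u)^2 = (x ⬝ᵥ (C *ᵥ u))^2 := by rw [h1]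
      _ ≤ (x ⬝ᵥ x) * ((C *ᵥ u) ⬝ᵥ (C *ᵥ u)) := cs
      _ ≤ (x ⬝ᵥ x) * (u ⬝ᵥ u) := mul_le_mul_of_nonneg_left (hkey u) (dot_self_nonneg x)
  have hun : 0 ≤ u ⬝ᵥ u := dot_self_nonneg u
  rcases eq_or_lt_of_le hun with heq | hlt
  · rw [← heq]; simpa using dot_self_nonneg x
  · have : u ⬝ᵥ u ≤ x ⬝ᵥ x := by nlinarith
    linarith

end SymOpInterp
namespace SymOpInterp

open Matrix

private lemma rfact1 (t : ℝ) : (t * t⁻¹) * t = t := by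
  rcases eq_or_ne t 0 with h | h
  · simp [h]
  · field_simp

private lemma rfact2 (t : ℝ) : t * (t * t⁻¹) = t := by
  rcases eq_or_ne t 0 with h | h
  · simp [h]
  · field_simp

private lemma rfact3 (t : ℝ) : (t * t⁻¹) * (t * t⁻¹) = t * t⁻¹ := by
  rcases eq_or_ne t 0 with h | h
  · simp [h]
  · field_simp

private lemma sfact1 {x : ℝ} (hx : 0 ≤ x) : x * (Real.sqrt x * (Real.sqrt x)⁻¹) = x := by
  rcases eq_or_lt_of_le hx with h | h
  · simp [← h]
  · rw [mul_inv_cancel₀ (ne_of_gt (Real.sqrt_pos.mpr h)), mul_one]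

private lemma sfact1' {x : ℝ} (hx : 0 ≤ x) : (Real.sqrt x * (Real.sqrt x)⁻¹) * x = x := by
  rw [mul_comm]; exact sfact1 hx

private lemma sfact2 {x : ℝ} (hx : 0 ≤ x) :
    ((Real.sqrt x)⁻¹ * x) * (Real.sqrt x)⁻¹ = Real.sqrt x * (Real.sqrt x)⁻¹ := by
  rcases eq_or_lt_of_le hx with h | h
  · simp [← h]
  · have ht : Real.sqrt x ≠ 0 := ne_of_gt (Real.sqrt_pos.mpr h)
    rw [← Real.mul_self_sqrt (le_of_lt h)]
    field_simp
    rw [Real.sqrt_sq (Real.sqrt_nonneg x)]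

private lemma sfact3 {x : ℝ} (hx : 0 ≤ x) : x * (Real.sqrt x * x⁻¹) = Real.sqrt x := by
  rcases eq_or_lt_of_le hx with h | h
  · simp [← h]
  · rw [mul_comm (Real.sqrt x) x⁻¹, ← mul_assoc, mul_inv_cancel₀ (ne_of_gt h), one_mul]

private lemma sfact3' {x : ℝ} (hx : 0 ≤ x) : (Real.sqrt x * x⁻¹) * x = Real.sqrt x := by
  rw [mul_comm]; exact sfact3 hx

private lemma sfact4 {x : ℝ} (hx : 0 ≤ x) :
    x * ((Real.sqrt x)⁻¹ * x⁻¹) = (Real.sqrt x)⁻¹ := by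
  rcases eq_or_lt_of_le hx with h | h
  · simp [← h]
  · rw [mul_comm ((Real.sqrt x)⁻¹) x⁻¹, ← mul_assoc, mul_inv_cancel₀ (ne_of_gt h), one_mul]

private lemma sfact4' {x : ℝ} (hx : 0 ≤ x) :
    ((Real.sqrt x)⁻¹ * x⁻¹) * x = (Real.sqrt x)⁻¹ := by
  rw [mul_comm]; exact sfact4 hx

lemma ext_sym {d : ℕ} (P T : Matrix (Fin d) (Fin d) ℝ)
    (hPt : Pᵀ = P) (hPP : P * P = P) (hTP : T * P = T) (hPT : (P * T)ᵀ = P * T)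
    (hcon : (P - Tᵀ * T).PosSemidef) :
    ∃ S : Matrix (Fin d) (Fin d) ℝ,
      Sᵀ = S ∧ (1 - S).PosSemidef ∧ (1 + S).PosSemidef ∧ S * P = T := by
  obtain ⟨A, hA⟩ : ∃ A' : Matrix (Fin d) (Fin d) ℝ, A' = P * T := ⟨_, rfl⟩
  have hAt : Aᵀ = A := by rw [hA]; exact hPT
  have hAtP : A = Tᵀ * P := by rw [← hAt, hA, transpose_mul, hPt]
  have hPA : P * A = A := by rw [hA, ← mul_assoc, hPP]
  have hAP : A * P = A := by rw [hA, mul_assoc, hTP]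
  have hAA : A * A = Tᵀ * (P * T) := by
    nth_rewrite 1 [hAtP]
    rw [hA, mul_assoc, ← mul_assoc P P T, hPP]
  obtain ⟨E, hE⟩ : ∃ E' : Matrix (Fin d) (Fin d) ℝ, E' = P - A * A := ⟨_, rfl⟩
  have hEt : Eᵀ = E := by rw [hE, transpose_sub, hPt, transpose_mul, hAt]
  have hAE : A * E = E * A := by
    rw [hE, mul_sub, sub_mul, hAP, hPA, mul_assoc]
  -- E is PSD
  have h1p : (1 - P) * (1 - P) = 1 - P := by
    rw [sub_mul, one_mul, mul_sub, mul_one, hPP]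
    abel
  have h1pt : (1 - P)ᵀ = 1 - P := by rw [transpose_sub, transpose_one, hPt]
  have h0 : Tᵀ * T - A * A = ((1 - P) * T)ᵀ * ((1 - P) * T) := by
    have h' : ((1 - P) * T)ᵀ * ((1 - P) * T) = Tᵀ * T - A * A := by
      calc ((1 - P) * T)ᵀ * ((1 - P) * T)
          = Tᵀ * (1 - P) * ((1 - P) * T) := by rw [transpose_mul, h1pt]
        _ = Tᵀ * ((1 - P) * ((1 - P) * T)) := by rw [mul_assoc]
        _ = Tᵀ * (((1 - P) * (1 - P)) * T) := by rw [← mul_assoc (1 - P) (1 - P) T]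
        _ = Tᵀ * ((1 - P) * T) := by rw [h1p]
        _ = Tᵀ * (T - P * T) := by rw [sub_mul, one_mul]
        _ = Tᵀ * T - Tᵀ * (P * T) := by rw [mul_sub]
        _ = Tᵀ * T - A * A := by rw [hAA]
    exact h'.symm
  have hE_psd : E.PosSemidef := by
    have h2 : E = (P - Tᵀ * T) + (Tᵀ * T - A * A) := by rw [hE]; abel
    rw [h2, h0]
    exact hcon.add (tmul_psd _)
  have hEherm : E.IsHermitian := hE_psd.1
  have hEev : ∀ i, 0 ≤ hEherm.eigenvalues i := fun i => hE_psd.eigenvalues_nonneg i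
  -- functional calculus pieces
  obtain ⟨D, hD⟩ : ∃ D' : Matrix (Fin d) (Fin d) ℝ, D' = fcal hEherm Real.sqrt := ⟨_, rfl⟩
  obtain ⟨D', hD'⟩ : ∃ Z : Matrix (Fin d) (Fin d) ℝ,
    Z = fcal hEherm (fun x => (Real.sqrt x)⁻¹) := ⟨_, rfl⟩
  obtain ⟨Pi, hPi⟩ : ∃ Z : Matrix (Fin d) (Fin d) ℝ,
    Z = fcal hEherm (fun x => Real.sqrt x * (Real.sqrt x)⁻¹) := ⟨_, rfl⟩
  have hDt : Dᵀ = D := by rw [hD]; exact fcal_transpose _ _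
  have hD't : D'ᵀ = D' := by rw [hD']; exact fcal_transpose _ _
  have hPit : Piᵀ = Pi := by rw [hPi]; exact fcal_transpose _ _
  have hDD : D * D = E := by
    rw [hD, fcal_mul, fcal_congr hEherm (g := id) (fun i => Real.mul_self_sqrt (hEev i)), fcal_id]
  have hD'D : D' * D = Pi := by
    rw [hD, hD', hPi, fcal_mul]
    exact fcal_congr hEherm (fun i => mul_comm _ _)
  have hPiD : Pi * D = D := by
    rw [hPi, hD, fcal_mul]
    exact fcal_congr hEherm (fun i => rfact1 _)
  have hPiE : Pi * E = E := by
    rw [← hDD, ← mul_assoc, hPiD]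
  have hD'ED' : D' * E * D' = Pi := by
    rw [hD', hPi, fcal_mul_base, fcal_mul]
    exact fcal_congr hEherm (fun i => sfact2 (hEev i))
  -- support of D, D' inside range of P
  have hPE : P * E = E := by rw [hE, mul_sub, hPP, ← mul_assoc, hPA]
  have hEP : E * P = E := by rw [hE, sub_mul, hPP, mul_assoc, hAP]
  have hEG : E * fcal hEherm (fun x => Real.sqrt x * x⁻¹) = D := by
    rw [fcal_base_mul, hD]
    exact fcal_congr hEherm (fun i => sfact3 (hEev i))
  have hGE : fcal hEherm (fun x => Real.sqrt x * x⁻¹) * E = D := by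
    rw [fcal_mul_base, hD]
    exact fcal_congr hEherm (fun i => sfact3' (hEev i))
  have hEG' : E * fcal hEherm (fun x => (Real.sqrt x)⁻¹ * x⁻¹) = D' := by
    rw [fcal_base_mul, hD']
    exact fcal_congr hEherm (fun i => sfact4 (hEev i))
  have hG'E : fcal hEherm (fun x => (Real.sqrt x)⁻¹ * x⁻¹) * E = D' := by
    rw [fcal_mul_base, hD']
    exact fcal_congr hEherm (fun i => sfact4' (hEev i))
  have hPD : P * D = D := by rw [← hEG, ← mul_assoc, hPE]
  have hDP : D * P = D := by rw [← hGE, mul_assoc, hEP]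
  have hPD' : P * D' = D' := by rw [← hEG', ← mul_assoc, hPE]
  have hD'P : D' * P = D' := by rw [← hG'E, mul_assoc, hEP]
  have hAD : A * D = D * A := by rw [hD]; exact fcal_commute hEherm hAE Real.sqrt
  -- B
  obtain ⟨B, hB⟩ : ∃ B' : Matrix (Fin d) (Fin d) ℝ, B' = T - A := ⟨_, rfl⟩
  have hBP : B * P = B := by rw [hB, sub_mul, hTP, hAP]
  have hPB : P * B = 0 := by
    rw [hB, mul_sub, ← hA, hPA]; exact sub_self A
  have hBtP : Bᵀ * P = 0 := by
    rw [← hPt, ← transpose_mul, hPB, transpose_zero]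
  have hTA : Tᵀ * A = A * A := by
    conv_lhs => rw [hA]
    rw [← hAA]
  have hAT : A * T = A * A := by
    conv_lhs => rw [hAtP]
    rw [mul_assoc, ← hAA]
  have hBtB : Bᵀ * B = E - (P - Tᵀ * T) := by
    rw [hB, transpose_sub, hAt, sub_mul, mul_sub, mul_sub, hTA, hAT, hE]
    abel
  -- B is supported on range of Pi
  have hBPi : B * Pi = B := by
    have h1 : (1 - Pi) * E = 0 := by
      rw [sub_mul, one_mul, hPiE]; exact sub_self E
    have h1pit : (1 - Pi)ᵀ = 1 - Pi := by rw [transpose_sub, transpose_one, hPit]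
    have h3 : (B * (1 - Pi))ᵀ * (B * (1 - Pi)) = -((1 - Pi) * (P - Tᵀ * T) * (1 - Pi)) := by
      rw [transpose_mul, h1pit]
      calc (1 - Pi) * Bᵀ * (B * (1 - Pi))
          = (1 - Pi) * (Bᵀ * B) * (1 - Pi) := by
            rw [mul_assoc (1 - Pi) Bᵀ, ← mul_assoc Bᵀ B, ← mul_assoc]
        _ = ((1 - Pi) * E - (1 - Pi) * (P - Tᵀ * T)) * (1 - Pi) := by
            rw [hBtB, mul_sub (1 - Pi) E (P - Tᵀ * T)]
        _ = (0 - (1 - Pi) * (P - Tᵀ * T)) * (1 - Pi) := by rw [h1]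
        _ = -((1 - Pi) * (P - Tᵀ * T) * (1 - Pi)) := by
            rw [zero_sub, Matrix.neg_mul]
    have h4 : (B * (1 - Pi))ᵀ * (B * (1 - Pi)) = 0 := by
      refine psd_and_neg_eq_zero (tmul_psd _) ?_
      rw [h3, neg_neg]
      have h := psd_conj hcon (1 - Pi)
      rwa [h1pit] at h
    have h5 : B * (1 - Pi) = 0 := eq_zero_of_transpose_mul_self h4
    rw [mul_sub, mul_one] at h5
    exact (sub_eq_zero.mp h5).symm
  -- C
  obtain ⟨C, hC⟩ : ∃ C' : Matrix (Fin d) (Fin d) ℝ, C' = B * D' := ⟨_, rfl⟩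
  have hCt : Cᵀ = D' * Bᵀ := by rw [hC, transpose_mul, hD't]
  have hCD : C * D = B := by rw [hC, mul_assoc, hD'D, hBPi]
  have hBt' : Bᵀ = D * Cᵀ := by
    have h := congrArg Matrix.transpose hCD
    rw [transpose_mul, hDt] at h
    exact h.symm
  have hPC : P * C = 0 := by rw [hC, ← mul_assoc, hPB, Matrix.zero_mul]
  have hCP : C * P = C := by rw [hC, mul_assoc, hD'P]
  have hCtP : Cᵀ * P = 0 := by rw [hCt, mul_assoc, hBtP, Matrix.mul_zero]
  -- contraction property of C
  have hCtC : Cᵀ * C = Pi - D' * (P - Tᵀ * T) * D' := by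
    calc Cᵀ * C = D' * Bᵀ * (B * D') := by rw [hCt, hC]
      _ = D' * (Bᵀ * B) * D' := by rw [mul_assoc D' Bᵀ, ← mul_assoc Bᵀ B, ← mul_assoc]
      _ = (D' * E - D' * (P - Tᵀ * T)) * D' := by rw [hBtB, mul_sub]
      _ = D' * E * D' - D' * (P - Tᵀ * T) * D' := by rw [sub_mul]
      _ = Pi - D' * (P - Tᵀ * T) * D' := by rw [hD'ED']
  have hPiLe : (1 - Pi).PosSemidef := by
    rw [hPi, ← fcal_one hEherm, fcal_sub]
    apply fcal_posSemidef
    intro i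
    rcases eq_or_ne (Real.sqrt (hEherm.eigenvalues i)) 0 with h | h
    · simp [h]
    · rw [mul_inv_cancel₀ h]; norm_num
  have h1mCtC : (1 - Cᵀ * C).PosSemidef := by
    have hid : (1 : Matrix (Fin d) (Fin d) ℝ) - Cᵀ * C
        = (1 - Pi) + D' * (P - Tᵀ * T) * D' := by
      rw [hCtC]; abel
    rw [hid]
    refine hPiLe.add ?_
    have h := psd_conj hcon D'
    rwa [hD't] at h
  have hflip : (1 - C * Cᵀ).PosSemidef := flip_contraction h1mCtC
  -- S
  obtain ⟨S, hS⟩ : ∃ S' : Matrix (Fin d) (Fin d) ℝ, S' = A + B + Bᵀ - C * A * Cᵀ := ⟨_, rfl⟩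
  have hSt : Sᵀ = S := by
    rw [hS, transpose_sub, transpose_add, transpose_add, transpose_transpose, hAt,
      transpose_mul, transpose_mul, transpose_transpose, hAt, ← mul_assoc]
    abel
  have hSP : S * P = T := by
    rw [hS, sub_mul, add_mul, add_mul, hAP, hBP, hBtP, mul_assoc, hCtP, Matrix.mul_zero, hB]
    abel
  -- algebraic monomial lemmas
  have hm1 : P * (D * Cᵀ) = D * Cᵀ := by rw [← mul_assoc, hPD]
  have hm2 : A * (D * Cᵀ) = D * (A * Cᵀ) := by rw [← mul_assoc, hAD, mul_assoc]
  have hm3 : C * D * P = C * D := by rw [mul_assoc, hDP]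
  have hm4 : C * D * A = C * A * D := by rw [mul_assoc, ← hAD, ← mul_assoc]
  have hm5 : C * D * (D * Cᵀ) = C * E * Cᵀ := by
    rw [mul_assoc C D (D * Cᵀ), ← mul_assoc D D Cᵀ, hDD, ← mul_assoc]
  have hm6 : C * (A * Cᵀ) = C * A * Cᵀ := (mul_assoc _ _ _).symm
  have hm7 : C * A * (A * Cᵀ) = C * (A * A) * Cᵀ := by
    rw [mul_assoc C A (A * Cᵀ), ← mul_assoc A A Cᵀ, ← mul_assoc]
  have hY : A * A = P - E := by rw [hE]; abel
  have hX : C * (A * A) * Cᵀ = C * Cᵀ - C * E * Cᵀ := by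
    have h : C * (A * A) * Cᵀ + C * E * Cᵀ = C * Cᵀ := by
      rw [← add_mul, ← mul_add]
      have hPE2 : A * A + E = P := by rw [hE]; abel
      rw [hPE2, hCP]
    exact eq_sub_of_add_eq h
  have hD2 : D * D = E := hDD
  -- conjugated contraction
  have hconj : (1 - P) * (1 - C * Cᵀ) * (1 - P) = 1 - P - C * Cᵀ := by
    have e1 : (1 - P) * (1 - C * Cᵀ) = 1 - P - C * Cᵀ := by
      rw [mul_sub, mul_one, sub_mul, one_mul, ← mul_assoc, hPC, Matrix.zero_mul]
      abel
    have e2 : (1 - P - C * Cᵀ) * (1 - P) = 1 - P - C * Cᵀ := by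
      rw [mul_sub, mul_one, sub_mul, sub_mul, one_mul, hPP, mul_assoc, hCtP, Matrix.mul_zero]
      abel
    rw [e1, e2]
  have hhalf : ∀ V : Matrix (Fin d) (Fin d) ℝ, (1/2 : ℝ) • (V + V) = V := by
    intro V
    rw [← two_smul ℝ V, smul_smul]
    norm_num
  -- transposes of the factors
  have ht1 : (P - A - D * Cᵀ)ᵀ = P - A - C * D := by
    rw [transpose_sub, transpose_sub, hPt, hAt, transpose_mul, transpose_transpose, hDt]
  have ht2 : (Cᵀ + A * Cᵀ - D)ᵀ = C + C * A - D := by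
    rw [transpose_sub, transpose_add, transpose_transpose, transpose_mul, transpose_transpose,
      hAt, hDt]
  have ht1' : (P + A + D * Cᵀ)ᵀ = P + A + C * D := by
    rw [transpose_add, transpose_add, hPt, hAt, transpose_mul, transpose_transpose, hDt]
  have ht2' : (Cᵀ - A * Cᵀ + D)ᵀ = C - C * A + D := by
    rw [transpose_add, transpose_sub, transpose_transpose, transpose_mul, transpose_transpose,
      hAt, hDt]
  -- flat expansions
  have hflat1 : (P - A - C * D) * (P - A - D * Cᵀ) + (C + C * A - D) * (Cᵀ + A * Cᵀ - D)
      = (P - A - D * Cᵀ - C * D + C * Cᵀ + C * A * Cᵀ)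
        + (P - A - D * Cᵀ - C * D + C * Cᵀ + C * A * Cᵀ) := by
    simp only [sub_mul, mul_sub, add_mul, mul_add]
    rw [hPP, hPA, hAP, hm1, hm2, hm3, hm4, hm5, hm6, hm7, hD2, hX, hY]
    abel
  have hflat2 : (P + A + C * D) * (P + A + D * Cᵀ) + (C - C * A + D) * (Cᵀ - A * Cᵀ + D)
      = (P + A + D * Cᵀ + C * D + C * Cᵀ - C * A * Cᵀ)
        + (P + A + D * Cᵀ + C * D + C * Cᵀ - C * A * Cᵀ) := by
    simp only [sub_mul, mul_sub, add_mul, mul_add]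
    rw [hPP, hPA, hAP, hm1, hm2, hm3, hm4, hm5, hm6, hm7, hD2, hX, hY]
    abel
  -- key identities
  have hkey1 : 1 - S = (1/2 : ℝ) • ((P - A - D * Cᵀ)ᵀ * (P - A - D * Cᵀ))
      + ((1/2 : ℝ) • ((Cᵀ + A * Cᵀ - D)ᵀ * (Cᵀ + A * Cᵀ - D))
        + (1 - P) * (1 - C * Cᵀ) * (1 - P)) := by
    rw [ht1, ht2, hconj, ← add_assoc, ← smul_add, hflat1, hhalf, hS, hBt', ← hCD]
    abel
  have hkey2 : 1 + S = (1/2 : ℝ) • ((P + A + D * Cᵀ)ᵀ * (P + A + D * Cᵀ))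
      + ((1/2 : ℝ) • ((Cᵀ - A * Cᵀ + D)ᵀ * (Cᵀ - A * Cᵀ + D))
        + (1 - P) * (1 - C * Cᵀ) * (1 - P)) := by
    rw [ht1', ht2', hconj, ← add_assoc, ← smul_add, hflat2, hhalf, hS, hBt', ← hCD]
    abel
  have hpsd3 : ((1 - P) * (1 - C * Cᵀ) * (1 - P)).PosSemidef := by
    have h := psd_conj hflip (1 - P)
    rwa [h1pt] at h
  have hpsd1 : (1 - S).PosSemidef := by
    rw [hkey1]
    exact (psd_smul (tmul_psd _) (by norm_num)).add
      ((psd_smul (tmul_psd _) (by norm_num)).add hpsd3)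
  have hpsd2 : (1 + S).PosSemidef := by
    rw [hkey2]
    exact (psd_smul (tmul_psd _) (by norm_num)).add
      ((psd_smul (tmul_psd _) (by norm_num)).add hpsd3)
  exact ⟨S, hSt, hpsd1, hpsd2, hSP⟩

end SymOpInterp
namespace SymOpInterp

open Matrix

private lemma rfact4 (t : ℝ) : t⁻¹ * (t * t⁻¹) = t⁻¹ := by
  rcases eq_or_ne t 0 with h | h
  · simp [h]
  · field_simp

lemma core {d N : ℕ} (X Y : Matrix (Fin d) (Fin N) ℝ)
    (h1 : Xᵀ * Y = Yᵀ * X) (h2 : (Xᵀ * X - Yᵀ * Y).PosSemidef) :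
    ∃ S : Matrix (Fin d) (Fin d) ℝ,
      Sᵀ = S ∧ (1 - S).PosSemidef ∧ (1 + S).PosSemidef ∧ S * X = Y := by
  obtain ⟨K, hK⟩ : ∃ K' : Matrix (Fin d) (Fin d) ℝ, K' = X * Xᵀ := ⟨_, rfl⟩
  have hKt : Kᵀ = K := by rw [hK, transpose_mul, transpose_transpose]
  have hKherm : K.IsHermitian := herm_of_t hKt
  obtain ⟨Kp, hKp⟩ : ∃ Z : Matrix (Fin d) (Fin d) ℝ,
    Z = fcal hKherm (fun x => x⁻¹) := ⟨_, rfl⟩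
  obtain ⟨P, hP⟩ : ∃ Z : Matrix (Fin d) (Fin d) ℝ,
    Z = fcal hKherm (fun x => x * x⁻¹) := ⟨_, rfl⟩
  have hKpt : Kpᵀ = Kp := by rw [hKp]; exact fcal_transpose _ _
  have hPt : Pᵀ = P := by rw [hP]; exact fcal_transpose _ _
  have hPP : P * P = P := by
    rw [hP, fcal_mul]; exact fcal_congr hKherm (fun i => rfact3 _)
  have hKKp : K * Kp = P := by rw [hKp, hP, fcal_base_mul]
  have hKpK : Kp * K = P := by
    rw [hKp, hP, fcal_mul_base]
    exact fcal_congr hKherm (fun i => mul_comm _ _)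
  have hPK : P * K = K := by
    rw [hP, fcal_mul_base]
    have h := fcal_congr hKherm (f := fun x => x * x⁻¹ * x) (g := id) (fun i => rfact1 _)
    rw [h, fcal_id]
  have hKP : K * P = K := by
    rw [hP, fcal_base_mul]
    have h := fcal_congr hKherm (f := fun x => x * (x * x⁻¹)) (g := id) (fun i => rfact2 _)
    rw [h, fcal_id]
  have hKpP : Kp * P = Kp := by
    rw [hKp, hP, fcal_mul]
    exact fcal_congr hKherm (fun i => rfact4 _)
  -- P X = X
  have hz0 : (X - P * X) * (X - P * X)ᵀ = 0 := by
    rw [transpose_sub, transpose_mul, hPt]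
    rw [Matrix.sub_mul, Matrix.mul_sub X Xᵀ (Xᵀ * P), Matrix.mul_sub (P * X) Xᵀ (Xᵀ * P)]
    have e2 : X * (Xᵀ * P) = K := by rw [← Matrix.mul_assoc, ← hK, hKP]
    have e3 : P * X * Xᵀ = K := by rw [Matrix.mul_assoc, ← hK, hPK]
    have e4 : P * X * (Xᵀ * P) = K := by
      rw [Matrix.mul_assoc, ← Matrix.mul_assoc X Xᵀ P, ← hK, hKP, hPK]
    rw [e2, e3, e4, ← hK]
    abel
  have hPX : P * X = X := by
    have h := eq_zero_of_mul_transpose_self hz0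
    exact (sub_eq_zero.mp h).symm
  -- T
  obtain ⟨T, hT⟩ : ∃ Z : Matrix (Fin d) (Fin d) ℝ, Z = Y * Xᵀ * Kp := ⟨_, rfl⟩
  have hTP : T * P = T := by rw [hT, Matrix.mul_assoc (Y * Xᵀ) Kp P, hKpP]
  have hTt : Tᵀ = Kp * (X * Yᵀ) := by
    rw [hT, transpose_mul, transpose_mul, transpose_transpose, hKpt]
  -- symmetry of P T
  have h1' : Xᵀ * (Y * (Xᵀ * Kp)) = Yᵀ * (X * (Xᵀ * Kp)) := by
    have h := congrArg (fun Z => Z * (Xᵀ * Kp)) h1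
    simpa only [Matrix.mul_assoc] using h
  have lhs_eq : Tᵀ * P = Kp * (X * (Yᵀ * (X * (Xᵀ * Kp)))) := by
    rw [hTt, ← hKKp, hK]
    simp only [Matrix.mul_assoc]
  have rhs_eq : P * T = Kp * (X * (Xᵀ * (Y * (Xᵀ * Kp)))) := by
    rw [hT, ← hKpK, hK]
    simp only [Matrix.mul_assoc]
  have hTtP : Tᵀ * P = P * T := by
    rw [lhs_eq, rhs_eq, ← h1']
  have hPT : (P * T)ᵀ = P * T := by
    rw [transpose_mul, hPt, hTtP]
  -- the contraction hypothesis
  have e1 : Kp * X * (Xᵀ * X) * (Xᵀ * Kp) = P := by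
    simp only [Matrix.mul_assoc]
    rw [← Matrix.mul_assoc X Xᵀ Kp, ← hK, hKKp, ← Matrix.mul_assoc X Xᵀ P, ← hK, hKP, hKpK]
  have e2 : Kp * X * (Yᵀ * Y) * (Xᵀ * Kp) = Tᵀ * T := by
    rw [hTt, hT]
    simp only [Matrix.mul_assoc]
  have hconP : (P - Tᵀ * T).PosSemidef := by
    have hpsd := psd_conj h2 (Xᵀ * Kp)
    have heq : (Xᵀ * Kp)ᵀ * (Xᵀ * X - Yᵀ * Y) * (Xᵀ * Kp) = P - Tᵀ * T := by
      rw [transpose_mul, transpose_transpose, hKpt]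
      rw [Matrix.mul_sub (Kp * X) (Xᵀ * X) (Yᵀ * Y), Matrix.sub_mul]
      rw [e1, e2]
    rw [← heq]
    exact hpsd
  obtain ⟨S, hSt, hps1, hps2, hSP⟩ := ext_sym P T hPt hPP hTP hPT hconP
  -- S X = Y
  have hSX : S * X = T * X := by
    calc S * X = S * (P * X) := by rw [hPX]
      _ = (S * P) * X := by rw [Matrix.mul_assoc]
      _ = T * X := by rw [hSP]
  obtain ⟨Pi2, hPi2⟩ : ∃ Z : Matrix (Fin N) (Fin N) ℝ, Z = Xᵀ * (Kp * X) := ⟨_, rfl⟩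
  have hPi2t : Pi2ᵀ = Pi2 := by
    rw [hPi2, transpose_mul, transpose_mul, transpose_transpose, hKpt, Matrix.mul_assoc]
  have hXPi2 : X * Pi2 = X := by
    rw [hPi2, ← Matrix.mul_assoc, ← Matrix.mul_assoc, ← hK, hKKp, hPX]
  have hX0 : X * (1 - Pi2) = 0 := by
    rw [Matrix.mul_sub, Matrix.mul_one, hXPi2]; exact sub_self X
  have h1Pi2t : (1 - Pi2)ᵀ = 1 - Pi2 := by rw [transpose_sub, transpose_one, hPi2t]
  have hq : (Y * (1 - Pi2))ᵀ * (Y * (1 - Pi2))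
      = -((1 - Pi2)ᵀ * (Xᵀ * X - Yᵀ * Y) * (1 - Pi2)) := by
    have hexp : (1 - Pi2)ᵀ * (Xᵀ * X - Yᵀ * Y) * (1 - Pi2)
        = (X * (1 - Pi2))ᵀ * (X * (1 - Pi2)) - (Y * (1 - Pi2))ᵀ * (Y * (1 - Pi2)) := by
      rw [transpose_mul, transpose_mul, h1Pi2t]
      rw [Matrix.mul_sub (1 - Pi2) (Xᵀ * X) (Yᵀ * Y), Matrix.sub_mul]
      simp only [Matrix.mul_assoc]
    rw [hX0, transpose_zero, Matrix.zero_mul, zero_sub] at hexp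
    rw [hexp, neg_neg]
  have hz : (Y * (1 - Pi2))ᵀ * (Y * (1 - Pi2)) = 0 := by
    refine psd_and_neg_eq_zero (tmul_psd _) ?_
    rw [hq, neg_neg]
    exact psd_conj h2 (1 - Pi2)
  have hY0 : Y * (1 - Pi2) = 0 := eq_zero_of_transpose_mul_self hz
  have hYPi2 : Y * Pi2 = Y := by
    rw [Matrix.mul_sub, Matrix.mul_one] at hY0
    exact (sub_eq_zero.mp hY0).symm
  have hTX : T * X = Y := by
    rw [hT]
    simp only [Matrix.mul_assoc]
    rw [← hPi2, hYPi2]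
  exact ⟨S, hSt, hps1, hps2, hSX.trans hTX⟩

end SymOpInterp

open Matrix SymOpInterp

/-- Symmetric operator interpolation conditions (Theorem 3.4): there exists a symmetric
`Q` with `μ·I ⪯ Q ⪯ L·I` such that `Y = Q·X` if and only if `XᵀY = YᵀX` and
`(Y − μX)ᵀ(LX − Y) ⪰ 0`. -/
theorem symmetric_operator_interpolation
    (d N : ℕ) (μ L : ℝ) (hμL : μ ≤ L)
    (X Y : Matrix (Fin d) (Fin N) ℝ) :
    (∃ Q : Matrix (Fin d) (Fin d) ℝ,
        Qᵀ = Q ∧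
        (Q - μ • (1 : Matrix (Fin d) (Fin d) ℝ)).PosSemidef ∧
        (L • (1 : Matrix (Fin d) (Fin d) ℝ) - Q).PosSemidef ∧
        Y = Q * X) ↔
      (Xᵀ * Y = Yᵀ * X ∧ ((Y - μ • X)ᵀ * (L • X - Y)).PosSemidef) := by
  constructor
  · rintro ⟨Q, hQt, hF, hG, hYQX⟩
    constructor
    · rw [hYQX, transpose_mul, hQt, Matrix.mul_assoc]
    · -- PSD part
      have hFt : (Q - μ • (1 : Matrix (Fin d) (Fin d) ℝ))ᵀ = Q - μ • 1 := by
        rw [transpose_sub, hQt, transpose_smul, transpose_one]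
      obtain ⟨R, hR⟩ : ∃ R : Matrix (Fin d) (Fin d) ℝ, R = fcal hF.1 Real.sqrt := ⟨_, rfl⟩
      have hsqt : Rᵀ = R := by
        rw [hR]; exact fcal_transpose _ _
      have hsq : R * R = Q - μ • 1 := by rw [hR, fcal_mul,
        fcal_congr hF.1 (g := id) (fun i => Real.mul_self_sqrt (hF.eigenvalues_nonneg i)), fcal_id]
      have hGF : L • (1 : Matrix (Fin d) (Fin d) ℝ) - Q
          = (L - μ) • 1 - (Q - μ • 1) := by
        rw [sub_smul]; abel
      have hsqF : R * (Q - μ • 1) = (Q - μ • 1) * R := by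
        rw [← hsq, ← Matrix.mul_assoc]
      have hcomm : R * (L • (1 : Matrix (Fin d) (Fin d) ℝ) - Q)
          = (L • (1 : Matrix (Fin d) (Fin d) ℝ) - Q) * R := by
        rw [hGF, Matrix.mul_sub, Matrix.sub_mul, Matrix.mul_smul, Matrix.smul_mul,
          Matrix.mul_one, Matrix.one_mul, hsqF]
      have key1 : Y - μ • X = (Q - μ • 1) * X := by
        rw [Matrix.sub_mul, Matrix.smul_mul, Matrix.one_mul, ← hYQX]
      have key2 : L • X - Y = (L • (1 : Matrix (Fin d) (Fin d) ℝ) - Q) * X := by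
        rw [Matrix.sub_mul, Matrix.smul_mul, Matrix.one_mul, ← hYQX]
      have hc' : R * ((L • (1 : Matrix (Fin d) (Fin d) ℝ) - Q) * X)
          = (L • (1 : Matrix (Fin d) (Fin d) ℝ) - Q) * (R * X) := by
        rw [← Matrix.mul_assoc, hcomm, Matrix.mul_assoc]
      have heq : (Y - μ • X)ᵀ * (L • X - Y)
          = (R * X)ᵀ * (L • (1 : Matrix (Fin d) (Fin d) ℝ) - Q) * (R * X) := by
        rw [key1, key2, transpose_mul, hFt, transpose_mul, hsqt, ← hsq]
        simp only [Matrix.mul_assoc]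
        rw [hc']
      rw [heq]
      exact psd_conj hG (R * X)
  · rintro ⟨h1, h2⟩
    rcases eq_or_lt_of_le hμL with heq | hlt
    · -- μ = L forces Y = μ X
      have hneg : L • X - Y = -(Y - μ • X) := by rw [← heq]; abel
      rw [hneg, Matrix.mul_neg] at h2
      have hz : (Y - μ • X)ᵀ * (Y - μ • X) = 0 :=
        psd_and_neg_eq_zero (tmul_psd _) h2
      have hYX : Y - μ • X = 0 := eq_zero_of_transpose_mul_self hz
      have hY : Y = μ • X := by
        have := sub_eq_zero.mp hYX; exact this
      refine ⟨μ • 1, ?_, ?_, ?_, ?_⟩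
      · rw [transpose_smul, transpose_one]
      · rw [sub_self]; exact Matrix.PosSemidef.zero
      · rw [← heq, sub_self]; exact Matrix.PosSemidef.zero
      · rw [Matrix.smul_mul, Matrix.one_mul]; exact hY
    · -- μ < L
      have h1'' : (((L - μ)/2) • X)ᵀ * (Y - ((L + μ)/2) • X)
          = (Y - ((L + μ)/2) • X)ᵀ * (((L - μ)/2) • X) := by
        simp only [transpose_smul, transpose_sub, Matrix.smul_mul, Matrix.mul_smul,
          Matrix.mul_sub, Matrix.sub_mul]
        rw [h1]
        module
      have h2'' : ((((L - μ)/2) • X)ᵀ * (((L - μ)/2) • X)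
          - (Y - ((L + μ)/2) • X)ᵀ * (Y - ((L + μ)/2) • X)).PosSemidef := by
        have hid : (((L - μ)/2) • X)ᵀ * (((L - μ)/2) • X)
            - (Y - ((L + μ)/2) • X)ᵀ * (Y - ((L + μ)/2) • X)
            = (Y - μ • X)ᵀ * (L • X - Y) := by
          simp only [transpose_smul, transpose_sub, Matrix.smul_mul, Matrix.mul_smul,
            Matrix.mul_sub, Matrix.sub_mul]
          rw [h1]
          module
        rw [hid]
        exact h2
      obtain ⟨S, hSt, hps1, hps2, hSX⟩ :=
        core (((L - μ)/2) • X) (Y - ((L + μ)/2) • X) h1'' h2''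
      have hc0 : (0:ℝ) ≤ (L - μ)/2 := by linarith
      refine ⟨((L + μ)/2) • 1 + ((L - μ)/2) • S, ?_, ?_, ?_, ?_⟩
      · rw [transpose_add, transpose_smul, transpose_smul, transpose_one, hSt]
      · have hqid : (((L + μ)/2) • (1 : Matrix (Fin d) (Fin d) ℝ)
            + ((L - μ)/2) • S) - μ • 1 = ((L - μ)/2) • (1 + S) := by module
        rw [hqid]
        exact psd_smul hps2 hc0
      · have hqid : L • (1 : Matrix (Fin d) (Fin d) ℝ)
            - (((L + μ)/2) • 1 + ((L - μ)/2) • S) = ((L - μ)/2) • (1 - S) := by module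
        rw [hqid]
        exact psd_smul hps1 hc0
      · have hSX' : ((L - μ)/2) • (S * X) = Y - ((L + μ)/2) • X := by
          rw [← Matrix.mul_smul]; exact hSX
        rw [Matrix.add_mul, Matrix.smul_mul, Matrix.smul_mul, Matrix.one_mul, hSX']
        abel
end

section
/- Let X be a real n×N₁ matrix, Y a real m×N₁ matrix, U a real m×N₂ matrix, and V a real n×N₂ matrix. There exists a real m×n matrix M (with no bound on its singular values) such that Y = M·X and V = Mᵀ·U if and only if there exists L > 0 such that: Xᵀ·V = Yᵀ·U, the 2N₁×2N₁ block matrix [[Xᵀ·X, Yᵀ·Y],[Yᵀ·Y, L²·I]] is positive semidefinite, and the 2N₂×2N₂ block matrix [[Uᵀ·U, Vᵀ·V],[Vᵀ·V, L²·I]] is positive semidefinite. -/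
open Matrix

/-- Factor `f` through `g` when `ker g ≤ ker f`. -/
lemma my_exists_factor {K V V' W : Type*} [Field K] [AddCommGroup V] [Module K V]
    [AddCommGroup V'] [Module K V'] [AddCommGroup W] [Module K W]
    (g : V →ₗ[K] V') (f : V →ₗ[K] W) (h : LinearMap.ker g ≤ LinearMap.ker f) :
    ∃ h' : V' →ₗ[K] W, f = h' ∘ₗ g := by
  obtain ⟨l, hl⟩ := (LinearMap.range g).subtype.exists_leftInverse_of_injective
    (Submodule.ker_subtype _)
  let fbar : (V ⧸ LinearMap.ker g) →ₗ[K] W := (LinearMap.ker g).liftQ f h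
  let e := g.quotKerEquivRange
  refine ⟨fbar ∘ₗ e.symm.toLinearMap ∘ₗ l, ?_⟩
  ext v
  have h1 : l (g v) = ⟨g v, LinearMap.mem_range_self g v⟩ := by
    have := LinearMap.congr_fun hl (⟨g v, LinearMap.mem_range_self g v⟩ : LinearMap.range g)
    simpa using this
  have h2 : e.symm ⟨g v, LinearMap.mem_range_self g v⟩ = Submodule.Quotient.mk v := by
    rw [LinearEquiv.symm_apply_eq]
    rfl
  simp only [LinearMap.comp_apply, LinearEquiv.coe_toLinearMap, h1, h2]
  rfl

open Matrix
open scoped RealInnerProductSpace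

lemma my_interp {E F E₁ E₂ : Type*}
    [NormedAddCommGroup E] [InnerProductSpace ℝ E] [FiniteDimensional ℝ E]
    [NormedAddCommGroup F] [InnerProductSpace ℝ F] [FiniteDimensional ℝ F]
    [NormedAddCommGroup E₁] [InnerProductSpace ℝ E₁] [FiniteDimensional ℝ E₁]
    [NormedAddCommGroup E₂] [InnerProductSpace ℝ E₂] [FiniteDimensional ℝ E₂]
    (fX : E₁ →ₗ[ℝ] E) (fY : E₁ →ₗ[ℝ] F) (fU : E₂ →ₗ[ℝ] F) (fV : E₂ →ₗ[ℝ] E)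
    (M₁ : E →ₗ[ℝ] F) (hM₁ : fY = M₁ ∘ₗ fX)
    (N₁ : F →ₗ[ℝ] E) (hN₁ : fV = N₁ ∘ₗ fU)
    (hcompat : ∀ a u, ⟪fY a, fU u⟫ = ⟪fX a, fV u⟫) :
    ∃ Mf : E →ₗ[ℝ] F, fY = Mf ∘ₗ fX ∧ fV = (LinearMap.adjoint Mf) ∘ₗ fU := by
  set K := LinearMap.range fX with hK
  let P : E →ₗ[ℝ] E := K.subtype ∘ₗ (K.orthogonalProjectionOnto : E →L[ℝ] K).toLinearMap
  have hPapply : ∀ v, P v = (K.orthogonalProjectionOnto v : E) := fun v => rfl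
  have hPX : ∀ a, P (fX a) = fX a := by
    intro a
    have := Submodule.orthogonalProjectionOnto_mem_subspace_eq_self
      (⟨fX a, LinearMap.mem_range_self fX a⟩ : K)
    rw [hPapply, this]
  have hPmem : ∀ w, P w ∈ K := fun w => SetLike.coe_mem _
  refine ⟨M₁ ∘ₗ P + (LinearMap.adjoint N₁) ∘ₗ (LinearMap.id - P), ?_, ?_⟩
  · ext a
    simp only [LinearMap.add_apply, LinearMap.comp_apply, LinearMap.sub_apply,
      LinearMap.id_apply, hPX, sub_self, map_zero, add_zero]
    exact LinearMap.congr_fun hM₁ a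
  · ext u
    simp only [LinearMap.comp_apply]
    apply ext_inner_left ℝ
    intro w
    have hNu : N₁ (fU u) = fV u := (LinearMap.congr_fun hN₁ u).symm
    rw [LinearMap.adjoint_inner_right]
    simp only [LinearMap.add_apply, LinearMap.comp_apply, LinearMap.sub_apply,
      LinearMap.id_apply]
    rw [inner_add_left, LinearMap.adjoint_inner_left, hNu]
    obtain ⟨a, ha⟩ := hPmem w
    have h1 : ⟪M₁ (P w), fU u⟫ = ⟪P w, fV u⟫ := by
      rw [← ha]
      have h2 : M₁ (fX a) = fY a := (LinearMap.congr_fun hM₁ a).symm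
      rw [h2]
      exact hcompat a u
    rw [h1, inner_sub_left]
    ring

lemma my_ker_incl {p r q : ℕ} (A : Matrix (Fin p) (Fin q) ℝ) (B : Matrix (Fin r) (Fin q) ℝ)
    (L : ℝ) (hL : 0 < L)
    (h : (fromBlocks (Aᵀ * A) (Bᵀ * B) (Bᵀ * B) (L ^ 2 • (1 : Matrix (Fin q) (Fin q) ℝ))).PosSemidef) :
    ∀ a, A *ᵥ a = 0 → B *ᵥ a = 0 := by
  intro a ha
  set S := Bᵀ * B with hS
  have hSsymm : Sᵀ = S := by rw [hS, transpose_mul, transpose_transpose]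
  set w := S *ᵥ a with hw
  set s : ℝ := -(1 / L ^ 2) with hs
  have key := (posSemidef_iff_dotProduct_mulVec.mp h).2 (Sum.elim a (s • w))
  rw [fromBlocks_mulVec] at key
  have hstar : star (Sum.elim a (s • w)) = Sum.elim a (s • w) := by
    simp [star_trivial]
  rw [hstar, sumElim_dotProduct_sumElim] at key
  simp only [Sum.elim_comp_inl, Sum.elim_comp_inr] at key
  have e1 : a ⬝ᵥ ((Aᵀ * A) *ᵥ a + S *ᵥ (s • w)) = s * (w ⬝ᵥ w) := by
    rw [dotProduct_add]
    have t1 : (Aᵀ * A) *ᵥ a = 0 := by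
      rw [← mulVec_mulVec, ha, mulVec_zero]
    have t2 : a ⬝ᵥ (S *ᵥ (s • w)) = s * (w ⬝ᵥ w) := by
      rw [mulVec_smul, dotProduct_smul, dotProduct_mulVec, ← hSsymm, vecMul_transpose, ← hw]
      rfl
    rw [t1, dotProduct_zero, zero_add, t2]
  have e2 : (s • w) ⬝ᵥ (S *ᵥ a + (L ^ 2 • (1 : Matrix (Fin q) (Fin q) ℝ)) *ᵥ (s • w))
      = s * (w ⬝ᵥ w) + s * s * L ^ 2 * (w ⬝ᵥ w) := by
    rw [dotProduct_add, smul_dotProduct, ← hw]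
    have t3 : (L ^ 2 • (1 : Matrix (Fin q) (Fin q) ℝ)) *ᵥ (s • w) = (L ^ 2 * s) • w := by
      rw [smul_mulVec, one_mulVec, smul_smul]
    rw [t3, smul_dotProduct, dotProduct_smul, smul_eq_mul, smul_eq_mul, smul_eq_mul]
    ring
  rw [e1, e2] at key
  have hc : 0 ≤ w ⬝ᵥ w := Finset.sum_nonneg fun i _ => mul_self_nonneg (w i)
  have hL2 : (0:ℝ) < L ^ 2 := by positivity
  have hcz : w ⬝ᵥ w = 0 := by
    rw [hs] at key
    have keq : -(1 / L ^ 2) * (w ⬝ᵥ w) + (-(1 / L ^ 2) * (w ⬝ᵥ w)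
        + -(1 / L ^ 2) * -(1 / L ^ 2) * L ^ 2 * (w ⬝ᵥ w)) = -(1 / L ^ 2) * (w ⬝ᵥ w) := by
      field_simp
      ring
    rw [keq] at key
    have ht : (0:ℝ) < 1 / L ^ 2 := by positivity
    have hcle : w ⬝ᵥ w ≤ 0 := by nlinarith [key, ht]
    linarith
  have hwz : w = 0 := by
    rwa [dotProduct_self_eq_zero] at hcz
  have hBa : (B *ᵥ a) ⬝ᵥ (B *ᵥ a) = 0 := by
    have e : a ⬝ᵥ w = (B *ᵥ a) ⬝ᵥ (B *ᵥ a) := by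
      rw [hw, hS, ← mulVec_mulVec, dotProduct_mulVec, vecMul_transpose]
    rw [← e, hwz, dotProduct_zero]
  rwa [dotProduct_self_eq_zero] at hBa

/-- crude quadratic bound for mulVec -/
lemma my_bound {p q : ℕ} (M : Matrix (Fin p) (Fin q) ℝ) :
    ∃ c : ℝ, 0 ≤ c ∧ ∀ z, (M *ᵥ z) ⬝ᵥ (M *ᵥ z) ≤ c * (z ⬝ᵥ z) := by
  refine ⟨∑ i, ∑ j, M i j ^ 2, by positivity, fun z => ?_⟩
  have hrow : ∀ i, (M *ᵥ z) i ^ 2 ≤ (∑ j, M i j ^ 2) * (z ⬝ᵥ z) := by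
    intro i
    have := Finset.sum_mul_sq_le_sq_mul_sq Finset.univ (fun j => M i j) z
    simpa [mulVec, dotProduct, pow_two] using this
  calc (M *ᵥ z) ⬝ᵥ (M *ᵥ z) = ∑ i, (M *ᵥ z) i ^ 2 := by
        simp [dotProduct, pow_two]
    _ ≤ ∑ i, (∑ j, M i j ^ 2) * (z ⬝ᵥ z) := Finset.sum_le_sum fun i _ => hrow i
    _ = (∑ i, ∑ j, M i j ^ 2) * (z ⬝ᵥ z) := by rw [Finset.sum_mul]

lemma my_psd_block {p r q : ℕ} (A : Matrix (Fin p) (Fin q) ℝ) (B : Matrix (Fin r) (Fin q) ℝ)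
    (L c d : ℝ) (hc : 0 ≤ c) (hd : 0 ≤ d)
    (h1 : ∀ v, (B *ᵥ v) ⬝ᵥ (B *ᵥ v) ≤ c * ((A *ᵥ v) ⬝ᵥ (A *ᵥ v)))
    (h2 : ∀ v, (B *ᵥ v) ⬝ᵥ (B *ᵥ v) ≤ d * (v ⬝ᵥ v))
    (hL : c * d ≤ L ^ 2) :
    (fromBlocks (Aᵀ * A) (Bᵀ * B) (Bᵀ * B) (L ^ 2 • (1 : Matrix (Fin q) (Fin q) ℝ))).PosSemidef := by
  rw [posSemidef_iff_dotProduct_mulVec]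
  constructor
  · -- Hermitian
    have hAA : (Aᵀ * A).IsHermitian := by simpa using isHermitian_conjTranspose_mul_self A
    have hBB : (Bᵀ * B).IsHermitian := by simpa using isHermitian_conjTranspose_mul_self B
    have hI : (L ^ 2 • (1 : Matrix (Fin q) (Fin q) ℝ))ᴴ = L ^ 2 • 1 := by
      simp
    show _ᴴ = _
    rw [fromBlocks_conjTranspose, hI]
    rw [Matrix.IsHermitian] at hAA hBB
    rw [hAA, hBB]
  · intro x
    -- decompose x
    have hx : x = Sum.elim (x ∘ Sum.inl) (x ∘ Sum.inr) := by
      funext i; cases i <;> rfl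
    set a := x ∘ Sum.inl
    set b := x ∘ Sum.inr
    rw [hx]
    rw [fromBlocks_mulVec]
    have hstar : star (Sum.elim a b) = Sum.elim a b := by simp [star_trivial]
    rw [hstar, sumElim_dotProduct_sumElim]
    simp only [Sum.elim_comp_inl, Sum.elim_comp_inr]
    have eAA : a ⬝ᵥ ((Aᵀ * A) *ᵥ a) = (A *ᵥ a) ⬝ᵥ (A *ᵥ a) := by
      rw [← mulVec_mulVec, dotProduct_mulVec, vecMul_transpose]
    have eBB1 : a ⬝ᵥ ((Bᵀ * B) *ᵥ b) = (B *ᵥ a) ⬝ᵥ (B *ᵥ b) := by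
      rw [← mulVec_mulVec, dotProduct_mulVec, vecMul_transpose]
    have eBB2 : b ⬝ᵥ ((Bᵀ * B) *ᵥ a) = (B *ᵥ a) ⬝ᵥ (B *ᵥ b) := by
      rw [← mulVec_mulVec, dotProduct_mulVec, vecMul_transpose, dotProduct_comm]
    have eI : b ⬝ᵥ ((L ^ 2 • (1 : Matrix (Fin q) (Fin q) ℝ)) *ᵥ b) = L ^ 2 * (b ⬝ᵥ b) := by
      rw [smul_mulVec, one_mulVec, dotProduct_smul, smul_eq_mul]
    rw [dotProduct_add, dotProduct_add, eAA, eBB1, eBB2, eI]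
    -- now pure real inequality
    set α := (A *ᵥ a) ⬝ᵥ (A *ᵥ a) with hα
    set β := b ⬝ᵥ b with hβ
    set s := (B *ᵥ a) ⬝ᵥ (B *ᵥ b) with hs
    have hα0 : 0 ≤ α := Finset.sum_nonneg fun i _ => mul_self_nonneg _
    have hβ0 : 0 ≤ β := Finset.sum_nonneg fun i _ => mul_self_nonneg _
    have hBa : (B *ᵥ a) ⬝ᵥ (B *ᵥ a) ≤ c * α := h1 a
    have hBb : (B *ᵥ b) ⬝ᵥ (B *ᵥ b) ≤ d * β := h2 b
    have hBa0 : 0 ≤ (B *ᵥ a) ⬝ᵥ (B *ᵥ a) := Finset.sum_nonneg fun i _ => mul_self_nonneg _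
    have hBb0 : 0 ≤ (B *ᵥ b) ⬝ᵥ (B *ᵥ b) := Finset.sum_nonneg fun i _ => mul_self_nonneg _
    have hCS : s ^ 2 ≤ ((B *ᵥ a) ⬝ᵥ (B *ᵥ a)) * ((B *ᵥ b) ⬝ᵥ (B *ᵥ b)) := by
      have := Finset.sum_mul_sq_le_sq_mul_sq Finset.univ (B *ᵥ a) (B *ᵥ b)
      simpa [dotProduct, pow_two, hs] using this
    have hs2 : s ^ 2 ≤ c * α * (d * β) :=
      hCS.trans (by
        have := mul_le_mul hBa hBb hBb0 (by nlinarith)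
        linarith)
    have ht : 0 ≤ α + L ^ 2 * β := by
      have := mul_nonneg (sq_nonneg L) hβ0
      linarith
    have habs : 4 * s ^ 2 ≤ (α + L ^ 2 * β) ^ 2 := by
      nlinarith [hs2, mul_le_mul_of_nonneg_right hL (mul_nonneg hα0 hβ0),
        sq_nonneg (α - L ^ 2 * β)]
    nlinarith [habs, ht, sq_nonneg (α + 2 * s + L ^ 2 * β)]

lemma my_dot_helper {k l j : ℕ} (P : Matrix (Fin k) (Fin l) ℝ) (Q : Matrix (Fin k) (Fin j) ℝ)
    (a : Fin l → ℝ) (u : Fin j → ℝ) :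
    (P *ᵥ a) ⬝ᵥ (Q *ᵥ u) = a ⬝ᵥ ((Pᵀ * Q) *ᵥ u) := by
  rw [← mulVec_mulVec, dotProduct_mulVec a Pᵀ, vecMul_transpose]

lemma my_inner_dot {k : ℕ} (x y : EuclideanSpace ℝ (Fin k)) :
    ⟪x, y⟫ = (WithLp.equiv 2 (Fin k → ℝ) x) ⬝ᵥ (WithLp.equiv 2 (Fin k → ℝ) y) := by
  simp only [PiLp.inner_apply, RCLike.inner_apply, conj_trivial]
  exact Finset.sum_congr rfl fun i _ => mul_comm _ _

lemma my_toEuclideanLin_mul {a b c : ℕ} (P : Matrix (Fin a) (Fin b) ℝ)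
    (Q : Matrix (Fin b) (Fin c) ℝ) :
    Matrix.toEuclideanLin (P * Q) = Matrix.toEuclideanLin P ∘ₗ Matrix.toEuclideanLin Q := by
  apply LinearMap.ext
  intro v
  simp only [LinearMap.comp_apply, Matrix.toEuclideanLin_apply]
  congr 1
  rw [mulVec_mulVec]

lemma my_ker_le {k l : ℕ} (P : Matrix (Fin k) (Fin l) ℝ)
    (v : EuclideanSpace ℝ (Fin l)) (h : Matrix.toEuclideanLin P v = 0) :
    P *ᵥ (WithLp.equiv 2 (Fin l → ℝ) v) = 0 := by
  have := congrArg (WithLp.equiv 2 (Fin k → ℝ)) h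
  rw [Matrix.toEuclideanLin_apply] at this
  simpa using this

lemma my_ker_le' {k l : ℕ} (P : Matrix (Fin k) (Fin l) ℝ)
    (v : EuclideanSpace ℝ (Fin l)) (h : P *ᵥ (WithLp.equiv 2 (Fin l → ℝ) v) = 0) :
    Matrix.toEuclideanLin P v = 0 := by
  rw [Matrix.toEuclideanLin_apply, show P *ᵥ v.ofLp = 0 from h]
  rfl

/-- `L`-interpolation conditions with unbounded singular values (Theorem 3.6):
there exists a matrix `M` with `Y = M·X` and `V = Mᵀ·U` if and only if there exists
`L > 0` such that `XᵀV = YᵀU` and the two block matrices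
`[[XᵀX, YᵀY],[YᵀY, L²I]]` and `[[UᵀU, VᵀV],[VᵀV, L²I]]` are positive semidefinite. -/
theorem linear_operator_interpolation_unbounded
    (n m N₁ N₂ : ℕ)
    (X : Matrix (Fin n) (Fin N₁) ℝ) (Y : Matrix (Fin m) (Fin N₁) ℝ)
    (U : Matrix (Fin m) (Fin N₂) ℝ) (V : Matrix (Fin n) (Fin N₂) ℝ) :
    (∃ M : Matrix (Fin m) (Fin n) ℝ, Y = M * X ∧ V = Mᵀ * U) ↔
      (∃ L : ℝ, 0 < L ∧
        Xᵀ * V = Yᵀ * U ∧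
        (Matrix.fromBlocks (Xᵀ * X) (Yᵀ * Y) (Yᵀ * Y)
          (L ^ 2 • (1 : Matrix (Fin N₁) (Fin N₁) ℝ))).PosSemidef ∧
        (Matrix.fromBlocks (Uᵀ * U) (Vᵀ * V) (Vᵀ * V)
          (L ^ 2 • (1 : Matrix (Fin N₂) (Fin N₂) ℝ))).PosSemidef) := by
  constructor
  · rintro ⟨M, hY, hV⟩
    obtain ⟨c₁, hc₁, hb₁⟩ := my_bound M
    obtain ⟨d₁, hd₁, hb₂⟩ := my_bound Y
    obtain ⟨c₂, hc₂, hb₃⟩ := my_bound Mᵀ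
    obtain ⟨d₂, hd₂, hb₄⟩ := my_bound V
    set m₀ : ℝ := max (c₁ * d₁) (c₂ * d₂) with hm₀
    have hm₀0 : 0 ≤ m₀ := le_trans (mul_nonneg hc₁ hd₁) (le_max_left _ _)
    set L : ℝ := Real.sqrt m₀ + 1 with hLdef
    have hsq : Real.sqrt m₀ ^ 2 = m₀ := Real.sq_sqrt hm₀0
    have hsnn : 0 ≤ Real.sqrt m₀ := Real.sqrt_nonneg _
    have hL : 0 < L := by positivity
    have hL1 : c₁ * d₁ ≤ L ^ 2 := by
      have h1 : c₁ * d₁ ≤ m₀ := le_max_left _ _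
      nlinarith
    have hL2 : c₂ * d₂ ≤ L ^ 2 := by
      have h1 : c₂ * d₂ ≤ m₀ := le_max_right _ _
      nlinarith
    refine ⟨L, hL, ?_, ?_, ?_⟩
    · rw [hY, hV, transpose_mul]
      exact (Matrix.mul_assoc Xᵀ Mᵀ U).symm
    · apply my_psd_block X Y L c₁ d₁ hc₁ hd₁ ?_ hb₂ hL1
      intro v
      have : Y *ᵥ v = M *ᵥ (X *ᵥ v) := by rw [hY, mulVec_mulVec]
      rw [this]
      exact hb₁ (X *ᵥ v)
    · apply my_psd_block U V L c₂ d₂ hc₂ hd₂ ?_ hb₄ hL2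
      intro v
      have : V *ᵥ v = Mᵀ *ᵥ (U *ᵥ v) := by rw [hV, mulVec_mulVec]
      rw [this]
      exact hb₃ (U *ᵥ v)
  · rintro ⟨L, hL, hXV, hPSD1, hPSD2⟩
    have hker1 := my_ker_incl X Y L hL hPSD1
    have hker2 := my_ker_incl U V L hL hPSD2
    set fX := Matrix.toEuclideanLin X with hfX
    set fY := Matrix.toEuclideanLin Y with hfY
    set fU := Matrix.toEuclideanLin U with hfU
    set fV := Matrix.toEuclideanLin V with hfV
    have hk1 : LinearMap.ker fX ≤ LinearMap.ker fY := by
      intro v hv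
      rw [LinearMap.mem_ker] at hv ⊢
      exact my_ker_le' Y v (hker1 _ (my_ker_le X v hv))
    have hk2 : LinearMap.ker fU ≤ LinearMap.ker fV := by
      intro v hv
      rw [LinearMap.mem_ker] at hv ⊢
      exact my_ker_le' V v (hker2 _ (my_ker_le U v hv))
    obtain ⟨M₁, hM₁⟩ := my_exists_factor fX fY hk1
    obtain ⟨N₁, hN₁⟩ := my_exists_factor fU fV hk2
    have hcompat : ∀ a u, ⟪fY a, fU u⟫ = ⟪fX a, fV u⟫ := by
      intro a u
      rw [hfY, hfU, hfX, hfV]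
      rw [my_inner_dot, my_inner_dot]
      change (Y *ᵥ WithLp.equiv 2 _ a) ⬝ᵥ (U *ᵥ WithLp.equiv 2 _ u)
        = (X *ᵥ WithLp.equiv 2 _ a) ⬝ᵥ (V *ᵥ WithLp.equiv 2 _ u)
      rw [my_dot_helper, my_dot_helper, hXV]
    obtain ⟨Mf, hMf1, hMf2⟩ := my_interp fX fY fU fV M₁ hM₁ N₁ hN₁ hcompat
    refine ⟨Matrix.toEuclideanLin.symm Mf, ?_, ?_⟩
    · apply Matrix.toEuclideanLin.injective
      rw [my_toEuclideanLin_mul, LinearEquiv.apply_symm_apply, ← hfX, ← hfY]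
      exact hMf1
    · apply Matrix.toEuclideanLin.injective
      rw [my_toEuclideanLin_mul, ← hfU, ← hfV]
      have ht : Matrix.toEuclideanLin (Matrix.toEuclideanLin.symm Mf)ᵀ
          = LinearMap.adjoint Mf := by
        have h1 : ((Matrix.toEuclideanLin.symm Mf : Matrix (Fin m) (Fin n) ℝ))ᵀ
            = ((Matrix.toEuclideanLin.symm Mf : Matrix (Fin m) (Fin n) ℝ))ᴴ := by
          ext i j
          simp [conjTranspose_apply]
        rw [h1, Matrix.toEuclideanLin_conjTranspose_eq_adjoint,
          LinearEquiv.apply_symm_apply]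
      rw [ht]
      exact hMf2
end

section
/- Let x₁,…,x_N and g₁,…,g_N be vectors in ℝ^d, let f₁,…,f_N be real numbers, and let μ, L be real numbers with −∞ < μ ≤ L < ∞. Let X = (x₁ ⋯ x_N) and G = (g₁ ⋯ g_N) be the d×N matrices whose columns are these vectors. There exists a real symmetric d×d matrix Q with μ·I ⪯ Q ⪯ L·I such that g_i = Q·x_i and f_i = (1/2)·x_iᵀ·Q·x_i for all i ∈ {1,…,N} if and only if: Xᵀ·G = Gᵀ·X, (G − μ·X)ᵀ·(L·X − G) ⪰ 0, and f_i = (1/2)·x_iᵀ·g_i for all i ∈ {1,…,N}. -/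
open Matrix

private lemma psd_smul {n : ℕ} {A : Matrix (Fin n) (Fin n) ℝ} (hA : A.PosSemidef)
    {c : ℝ} (hc : 0 ≤ c) : (c • A).PosSemidef := by
  constructor
  · have := hA.1
    unfold Matrix.IsHermitian at this ⊢
    rw [conjTranspose_smul, this]
    simp
  · exact (hA.smul hc).2

private lemma neg_psd_self_mul {d N : ℕ} (C : Matrix (Fin d) (Fin N) ℝ)
    (h : (-(Cᵀ * C)).PosSemidef) : C = 0 := by
  ext i j
  have hdiag : ∑ k, C k j * C k j ≤ 0 := by
    have h2 := h.dotProduct_mulVec_nonneg (Pi.single j 1)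
    simp only [star_trivial, neg_mulVec, dotProduct_neg, le_neg, neg_zero] at h2
    calc ∑ k, C k j * C k j = Pi.single j 1 ⬝ᵥ (Cᵀ * C) *ᵥ Pi.single j 1 := by
          simp [dotProduct, mulVec, mul_apply, Pi.single_apply]
      _ ≤ 0 := h2
  have hzero : ∀ k ∈ Finset.univ, C k j * C k j = 0 := by
    rw [← Finset.sum_eq_zero_iff_of_nonneg (fun k _ => mul_self_nonneg (C k j))]
    exact le_antisymm hdiag (Finset.sum_nonneg fun k _ => mul_self_nonneg _)
  simpa using mul_self_eq_zero.mp (hzero i (Finset.mem_univ i))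

private lemma exists_pinv {n : ℕ} {M : Matrix (Fin n) (Fin n) ℝ} (hM : M.PosSemidef) :
    ∃ P : Matrix (Fin n) (Fin n) ℝ, P.PosSemidef ∧ M * P = P * M ∧ M * P * M = M := by
  set V : Matrix (Fin n) (Fin n) ℝ := (hM.1.eigenvectorUnitary : Matrix (Fin n) (Fin n) ℝ) with hV
  set ev : Fin n → ℝ := hM.1.eigenvalues with hev
  have hspec : M = V * diagonal ev * Vᴴ := by
    have := hM.1.spectral_theorem
    simpa [hV, hev, Matrix.star_eq_conjTranspose, Function.comp] using this
  have hVV : Vᴴ * V = 1 := by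
    have := Matrix.mem_unitaryGroup_iff'.mp hM.1.eigenvectorUnitary.2
    simpa [hV, Matrix.star_eq_conjTranspose] using this
  have haia : ∀ a : ℝ, a * a⁻¹ * a = a := by
    intro a
    rcases eq_or_ne a 0 with h | h
    · simp [h]
    · field_simp
  refine ⟨V * diagonal (fun i => (ev i)⁻¹) * Vᴴ, ?_, ?_, ?_⟩
  · exact (Matrix.posSemidef_diagonal_iff.mpr fun i =>
      inv_nonneg.mpr (hM.eigenvalues_nonneg i)).mul_mul_conjTranspose_same V
  · rw [hspec]
    calc V * diagonal ev * Vᴴ * (V * diagonal (fun i => (ev i)⁻¹) * Vᴴ)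
        = V * (diagonal ev * (Vᴴ * V) * diagonal (fun i => (ev i)⁻¹)) * Vᴴ := by
          simp only [Matrix.mul_assoc]
      _ = V * (diagonal (fun i => (ev i)⁻¹) * (Vᴴ * V) * diagonal ev) * Vᴴ := by
          rw [hVV]
          simp [diagonal_mul_diagonal, mul_comm]
      _ = V * diagonal (fun i => (ev i)⁻¹) * Vᴴ * (V * diagonal ev * Vᴴ) := by
          simp only [Matrix.mul_assoc]
  · rw [hspec]
    calc V * diagonal ev * Vᴴ * (V * diagonal (fun i => (ev i)⁻¹) * Vᴴ)
          * (V * diagonal ev * Vᴴ)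
        = V * (diagonal ev * (Vᴴ * V) * diagonal (fun i => (ev i)⁻¹)
            * ((Vᴴ * V) * diagonal ev)) * Vᴴ := by
          simp only [Matrix.mul_assoc]
      _ = V * diagonal ev * Vᴴ := by
          rw [hVV]
          simp only [Matrix.one_mul, diagonal_mul_diagonal, Matrix.mul_assoc]
          rw [show (fun i => ev i * (ev i)⁻¹ * ev i) = ev from funext fun i => haia (ev i)]

private lemma reduced {d N : ℕ} (X G : Matrix (Fin d) (Fin N) ℝ)
    (h1 : Xᵀ * G = Gᵀ * X)
    (h2 : (Gᵀ * X - Gᵀ * G).PosSemidef) :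
    ∃ Q : Matrix (Fin d) (Fin d) ℝ, Qᵀ = Q ∧ Q.PosSemidef ∧
      ((1 : Matrix (Fin d) (Fin d) ℝ) - Q).PosSemidef ∧ Q * X = G := by
  set M : Matrix (Fin N) (Fin N) ℝ := Gᵀ * X with hMdef
  have hGtG : (Gᵀ * G).PosSemidef := by
    have := Matrix.posSemidef_conjTranspose_mul_self G
    rwa [conjTranspose_eq_transpose_of_trivial] at this
  have hMpsd : M.PosSemidef := by
    have := h2.add hGtG
    rwa [sub_add_cancel] at this
  have hMsym : Mᵀ = M := by
    rw [hMdef, transpose_mul, transpose_transpose, h1, hMdef]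
  obtain ⟨P, hPpsd, hMP, hMPM⟩ := exists_pinv hMpsd
  have hPsym : Pᵀ = P := by
    rw [← conjTranspose_eq_transpose_of_trivial]
    exact hPpsd.1
  have hGZ : G * (1 - P * M) = 0 := by
    set Z : Matrix (Fin N) (Fin N) ℝ := 1 - P * M with hZ
    have hMZ : M * Z = 0 := by
      rw [hZ, Matrix.mul_sub, Matrix.mul_one, ← Matrix.mul_assoc, hMPM, sub_self]
    apply neg_psd_self_mul
    have hpsd := h2.conjTranspose_mul_mul_same Z
    rw [conjTranspose_eq_transpose_of_trivial] at hpsd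
    have e1 : Zᵀ * (M - Gᵀ * G) * Z = -((G * Z)ᵀ * (G * Z)) := by
      rw [Matrix.mul_sub Zᵀ M (Gᵀ * G), Matrix.sub_mul (Zᵀ * M) (Zᵀ * (Gᵀ * G)) Z,
        Matrix.mul_assoc Zᵀ M Z, hMZ, Matrix.mul_zero, zero_sub, transpose_mul]
      simp only [Matrix.mul_assoc]
    rwa [e1] at hpsd
  have hGPM : G * (P * M) = G := by
    have h' : G - G * (P * M) = 0 := by
      rw [Matrix.mul_sub, Matrix.mul_one] at hGZ
      exact hGZ
    exact (sub_eq_zero.mp h').symm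
  have hMPG : M * P * Gᵀ = Gᵀ := by
    have := congrArg Matrix.transpose hGPM
    rwa [transpose_mul, transpose_mul, hMsym, hPsym] at this
  refine ⟨G * P * Gᵀ, ?_, ?_, ?_, ?_⟩
  · rw [transpose_mul, transpose_mul, transpose_transpose, hPsym, Matrix.mul_assoc]
  · have := hPpsd.mul_mul_conjTranspose_same G
    rwa [conjTranspose_eq_transpose_of_trivial] at this
  · refine PosSemidef.of_dotProduct_mulVec_nonneg ?_ ?_
    · show (1 - G * P * Gᵀ)ᴴ = 1 - G * P * Gᵀ
      rw [conjTranspose_eq_transpose_of_trivial, transpose_sub, transpose_one, transpose_mul,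
        transpose_mul, transpose_transpose, hPsym]
      simp only [Matrix.mul_assoc]
    · intro v
      rw [star_trivial, Matrix.sub_mulVec, Matrix.one_mulVec, dotProduct_sub, sub_nonneg]
      set u : Fin N → ℝ := P *ᵥ (Gᵀ *ᵥ v) with hu
      have hQv : (G * P * Gᵀ) *ᵥ v = G *ᵥ u := by
        rw [hu, Matrix.mulVec_mulVec, Matrix.mulVec_mulVec, Matrix.mul_assoc]
      have hMu : M *ᵥ u = Gᵀ *ᵥ v := by
        rw [hu, Matrix.mulVec_mulVec, Matrix.mulVec_mulVec, hMPG]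
      set w : Fin d → ℝ := G *ᵥ u with hw
      have htw : v ⬝ᵥ w = u ⬝ᵥ M *ᵥ u := by
        rw [hw, dotProduct_mulVec, ← Matrix.mulVec_transpose, ← hMu,
          dotProduct_comm]
      have ht0 : 0 ≤ v ⬝ᵥ w := by
        rw [htw]
        have := hMpsd.dotProduct_mulVec_nonneg u
        rwa [star_trivial] at this
      have hww : w ⬝ᵥ w ≤ v ⬝ᵥ w := by
        have hq := h2.dotProduct_mulVec_nonneg u
        rw [star_trivial, Matrix.sub_mulVec, dotProduct_sub, sub_nonneg] at hq
        have e2 : u ⬝ᵥ (Gᵀ * G) *ᵥ u = w ⬝ᵥ w := by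
          rw [hw, ← Matrix.mulVec_mulVec, dotProduct_mulVec, ← Matrix.mulVec_transpose,
            transpose_transpose]
        rw [htw]
        rw [e2] at hq
        exact hq
      have hvv : 0 ≤ v ⬝ᵥ v := Finset.sum_nonneg fun i _ => mul_self_nonneg _
      have hcs : (v ⬝ᵥ w) ^ 2 ≤ (v ⬝ᵥ v) * (w ⬝ᵥ w) := by
        have := Finset.sum_mul_sq_le_sq_mul_sq Finset.univ v w
        simpa [dotProduct, sq, Finset.mul_sum, Finset.sum_mul, mul_mul_mul_comm] using this
      rw [hQv]
      rcases ht0.eq_or_lt with h0 | hpos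
      · rw [← h0]
        exact hvv
      · have h3 : (v ⬝ᵥ w) * (v ⬝ᵥ w) ≤ (v ⬝ᵥ v) * (v ⬝ᵥ w) := by
          calc (v ⬝ᵥ w) * (v ⬝ᵥ w) = (v ⬝ᵥ w) ^ 2 := (sq _).symm
            _ ≤ (v ⬝ᵥ v) * (w ⬝ᵥ w) := hcs
            _ ≤ (v ⬝ᵥ v) * (v ⬝ᵥ w) := mul_le_mul_of_nonneg_left hww hvv
        exact le_of_mul_le_mul_right h3 hpos
  · rw [Matrix.mul_assoc, Matrix.mul_assoc, ← hMdef, ← Matrix.mul_assoc G P M, Matrix.mul_assoc, hGPM]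


/-- Interpolation conditions for homogeneous quadratic functions (Theorem 3.7):
the triples `(xᵢ, gᵢ, fᵢ)` are interpolable by a quadratic `x ↦ ½ xᵀQx` with `Q`
symmetric and `μI ⪯ Q ⪯ LI` if and only if `XᵀG = GᵀX`,
`(G − μX)ᵀ(LX − G) ⪰ 0`, and `fᵢ = ½ xᵢᵀgᵢ` for all `i`. -/
theorem quadratic_interpolation
    (d N : ℕ) (μ L : ℝ) (hμL : μ ≤ L)
    (x g : Fin N → (Fin d → ℝ)) (f : Fin N → ℝ)
    (X G : Matrix (Fin d) (Fin N) ℝ)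
    (hX : X = Matrix.of fun i j => x j i)
    (hG : G = Matrix.of fun i j => g j i) :
    (∃ Q : Matrix (Fin d) (Fin d) ℝ,
        Qᵀ = Q ∧
        (Q - μ • (1 : Matrix (Fin d) (Fin d) ℝ)).PosSemidef ∧
        (L • (1 : Matrix (Fin d) (Fin d) ℝ) - Q).PosSemidef ∧
        ∀ i : Fin N, g i = Q.mulVec (x i) ∧
          f i = (1 / 2) * (x i ⬝ᵥ Q.mulVec (x i))) ↔
      (Xᵀ * G = Gᵀ * X ∧
        ((G - μ • X)ᵀ * (L • X - G)).PosSemidef ∧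
        ∀ i : Fin N, f i = (1 / 2) * (x i ⬝ᵥ g i)) := by
  subst hX hG
  set X : Matrix (Fin d) (Fin N) ℝ := of (fun i j => x j i) with hX
  set G : Matrix (Fin d) (Fin N) ℝ := of (fun i j => g j i) with hG
  constructor
  · rintro ⟨Q, hQsym, hA, hB, hfg⟩
    have hGQX : G = Q * X := by
      ext i j
      rw [hG, hX, Matrix.mul_apply, Matrix.of_apply, (hfg j).1]
      simp [Matrix.mulVec, dotProduct]
    have hAX : G - μ • X = (Q - μ • 1) * X := by
      rw [Matrix.sub_mul, Matrix.smul_mul, Matrix.one_mul, hGQX]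
    have hBX : L • X - G = (L • 1 - Q) * X := by
      rw [Matrix.sub_mul, Matrix.smul_mul, Matrix.one_mul, hGQX]
    have hAsym : (Q - μ • (1 : Matrix (Fin d) (Fin d) ℝ))ᵀ = Q - μ • 1 := by
      rw [transpose_sub, hQsym, transpose_smul, transpose_one]
    refine ⟨?_, ?_, ?_⟩
    · rw [hGQX, transpose_mul, hQsym, Matrix.mul_assoc]
    · set A : Matrix (Fin d) (Fin d) ℝ := Q - μ • 1 with hAdef
      set B : Matrix (Fin d) (Fin d) ℝ := L • 1 - Q with hBdef
      open scoped MatrixOrder in set S : Matrix (Fin d) (Fin d) ℝ := CFC.sqrt A with hSdef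
      have hSS : S * S = A := by open scoped MatrixOrder in exact CFC.sqrt_mul_sqrt_self A hA.nonneg
      have hSsym : Sᵀ = S := by
        rw [← conjTranspose_eq_transpose_of_trivial]
        open scoped MatrixOrder in exact (CFC.sqrt_nonneg A).posSemidef.1
      have hSA : S * A = A * S := by
        rw [← hSS, Matrix.mul_assoc]
      have hQAS : Q * S = S * Q := by
        have hQA : Q = A + μ • 1 := by rw [hAdef, sub_add_cancel]
        rw [hQA, Matrix.add_mul, Matrix.mul_add, hSA, Matrix.smul_mul, Matrix.mul_smul,
          Matrix.one_mul, Matrix.mul_one]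
      have hSB : S * B = B * S := by
        rw [hBdef, Matrix.mul_sub, Matrix.sub_mul, Matrix.smul_mul, Matrix.mul_smul,
          Matrix.one_mul, Matrix.mul_one, hQAS]
      have hABpsd : (A * B).PosSemidef := by
        have : A * B = Sᴴ * B * S := by
          rw [conjTranspose_eq_transpose_of_trivial, hSsym]
          calc A * B = S * S * B := by rw [hSS]
            _ = S * (S * B) := by rw [Matrix.mul_assoc]
            _ = S * (B * S) := by rw [hSB]
            _ = S * B * S := by rw [← Matrix.mul_assoc]
        rw [this]
        exact hB.conjTranspose_mul_mul_same S
      have := hABpsd.conjTranspose_mul_mul_same X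
      rw [conjTranspose_eq_transpose_of_trivial] at this
      have hfinal : (G - μ • X)ᵀ * (L • X - G) = Xᵀ * (A * B) * X := by
        rw [hAX, hBX, transpose_mul, hAsym, Matrix.mul_assoc, ← Matrix.mul_assoc A,
          ← Matrix.mul_assoc, ← Matrix.mul_assoc]
      rwa [hfinal]
    · intro i
      rw [(hfg i).2, (hfg i).1]
  · rintro ⟨h1, h2, h3⟩
    set c : ℝ := L - μ with hc
    have hc0 : 0 ≤ c := sub_nonneg.mpr hμL
    set Xh := c • X with hXh
    set Gh := G - μ • X with hGh
    have h1' : Xhᵀ * Gh = Ghᵀ * Xh := by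
      rw [hXh, hGh, transpose_smul, transpose_sub, transpose_smul, Matrix.smul_mul,
        Matrix.mul_smul, Matrix.mul_sub, Matrix.sub_mul, Matrix.smul_mul, Matrix.mul_smul, h1]
    have h2' : (Ghᵀ * Xh - Ghᵀ * Gh).PosSemidef := by
      have e : Ghᵀ * Xh - Ghᵀ * Gh = (G - μ • X)ᵀ * (L • X - G) := by
        rw [← Matrix.mul_sub, hGh]
        congr 1
        rw [hXh, hc]
        module
      rw [e]
      exact h2
    obtain ⟨Qh, hQhsym, hQhpsd, hQh1, hQhX⟩ := reduced Xh Gh h1' h2'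
    refine ⟨μ • 1 + c • Qh, ?_, ?_, ?_, ?_⟩
    · rw [transpose_add, transpose_smul, transpose_one, transpose_smul, hQhsym]
    · have e : μ • (1 : Matrix (Fin d) (Fin d) ℝ) + c • Qh - μ • 1 = c • Qh := by
        module
      rw [e]
      exact psd_smul hQhpsd hc0
    · have e : L • (1 : Matrix (Fin d) (Fin d) ℝ) - (μ • 1 + c • Qh) = c • (1 - Qh) := by
        rw [hc]
        module
      rw [e]
      exact psd_smul hQh1 hc0
    · intro i
      have hgi : g i = (μ • 1 + c • Qh) *ᵥ x i := by
        funext j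
        have hthis := congrFun (congrFun hQhX j) i
        rw [hXh, hGh, Matrix.mul_smul] at hthis
        simp only [Matrix.smul_apply, Matrix.sub_apply, Matrix.of_apply, smul_eq_mul] at hthis
        have hmv : (Qh * X) j i = (Qh *ᵥ x i) j := by
          rw [hX]
          simp [Matrix.mul_apply, Matrix.mulVec, dotProduct]
        rw [hmv, hG, hX] at hthis
        simp only [Matrix.of_apply] at hthis
        rw [Matrix.add_mulVec, Matrix.smul_mulVec, Matrix.smul_mulVec,
          Matrix.one_mulVec]
        simp only [Pi.add_apply, Pi.smul_apply, smul_eq_mul]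
        linarith [hthis]
      refine ⟨hgi, ?_⟩
      rw [← hgi]
      exact h3 i
end

section
/- Let 0 ≤ μ < L, let x₁,…,x_N and g₁,…,g_N be vectors in ℝ^d and f₁,…,f_N real numbers, and let X = (x₁ ⋯ x_N), G = (g₁ ⋯ g_N) be the corresponding d×N matrices. If Xᵀ·G = Gᵀ·X, (G − μ·X)ᵀ·(L·X − G) ⪰ 0, and f_i = (1/2)·x_iᵀ·g_i for all i, then for all pairs (i, j) ∈ {1,…,N}×{1,…,N} the smooth strongly convex interpolation inequality holds: 2·(1 − μ/L)·(f_i − f_j − g_jᵀ·(x_i − x_j)) ≥ (1/L)·‖g_i − g_j‖² + μ·‖x_i − x_j‖² − (2μ/L)·(g_i − g_j)ᵀ·(x_i − x_j). -/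
open Matrix

/-- Lemma 3.8: the quadratic interpolation conditions imply the smooth strongly convex
interpolation inequalities. Squared Euclidean norms are written as dot products. -/
theorem quadratic_implies_smooth_strongly_convex_interpolation
    (d N : ℕ) (μ L : ℝ) (hμ : 0 ≤ μ) (hμL : μ < L)
    (x g : Fin N → (Fin d → ℝ)) (f : Fin N → ℝ)
    (X G : Matrix (Fin d) (Fin N) ℝ)
    (hX : X = Matrix.of fun i j => x j i)
    (hG : G = Matrix.of fun i j => g j i)
    (hsym : Xᵀ * G = Gᵀ * X)
    (hpsd : ((G - μ • X)ᵀ * (L • X - G)).PosSemidef)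
    (hf : ∀ i : Fin N, f i = (1 / 2) * (x i ⬝ᵥ g i)) :
    ∀ i j : Fin N,
      2 * (1 - μ / L) * (f i - f j - g j ⬝ᵥ (x i - x j)) ≥
        (1 / L) * ((g i - g j) ⬝ᵥ (g i - g j)) +
        μ * ((x i - x j) ⬝ᵥ (x i - x j)) -
        (2 * μ / L) * ((g i - g j) ⬝ᵥ (x i - x j)) := by
  intro i j
  have hL : (0:ℝ) < L := lt_of_le_of_lt hμ hμL
  set v : Fin N → ℝ := Pi.single i 1 - Pi.single j 1 with hv
  have hXv : X *ᵥ v = x i - x j := by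
    funext r
    simp [hv, hX, mulVec, dotProduct, Pi.single_apply, mul_sub,
      Finset.sum_sub_distrib, mul_ite]
  have hGv : G *ᵥ v = g i - g j := by
    funext r
    simp [hv, hG, mulVec, dotProduct, Pi.single_apply, mul_sub,
      Finset.sum_sub_distrib, mul_ite]
  have h0 := hpsd.dotProduct_mulVec_nonneg v
  rw [← Matrix.mulVec_mulVec, Matrix.dotProduct_mulVec,
    Matrix.vecMul_transpose, show star v = v from star_trivial v] at h0
  rw [Matrix.sub_mulVec, Matrix.sub_mulVec, Matrix.smul_mulVec,
    Matrix.smul_mulVec, hXv, hGv] at h0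
  have key : 0 ≤ ((g i - g j) - μ • (x i - x j)) ⬝ᵥ (L • (x i - x j) - (g i - g j)) := h0
  have hsymij : x i ⬝ᵥ g j = g i ⬝ᵥ x j := by
    have := congrFun (congrFun hsym i) j
    simpa [Matrix.mul_apply, hX, hG, dotProduct, mul_comm] using this
  have e1 : ((g i - g j) - μ • (x i - x j)) ⬝ᵥ (L • (x i - x j) - (g i - g j))
      = L * ((g i - g j) ⬝ᵥ (x i - x j)) - ((g i - g j) ⬝ᵥ (g i - g j))
        - μ * L * ((x i - x j) ⬝ᵥ (x i - x j)) + μ * ((x i - x j) ⬝ᵥ (g i - g j)) := by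
    simp [sub_dotProduct, dotProduct_sub, smul_dotProduct,
      dotProduct_smul, smul_eq_mul]
    ring
  rw [e1] at key
  have hc : (x i - x j) ⬝ᵥ (g i - g j) = (g i - g j) ⬝ᵥ (x i - x j) :=
    dotProduct_comm _ _
  have hfe : 2 * (f i - f j - g j ⬝ᵥ (x i - x j)) = (g i - g j) ⬝ᵥ (x i - x j) := by
    have hxg : x i ⬝ᵥ g j = g j ⬝ᵥ x i := dotProduct_comm _ _
    have hxg2 : g i ⬝ᵥ x j = x j ⬝ᵥ g i := dotProduct_comm _ _
    simp only [hf, dotProduct_sub, sub_dotProduct]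
    have h1 : g i ⬝ᵥ x i = x i ⬝ᵥ g i := dotProduct_comm _ _
    have h2 : g j ⬝ᵥ x j = x j ⬝ᵥ g j := dotProduct_comm _ _
    have h3 : g i ⬝ᵥ x j = x j ⬝ᵥ g i := dotProduct_comm _ _
    have h4 : g j ⬝ᵥ x i = x i ⬝ᵥ g j := dotProduct_comm _ _
    rw [h1, h2, h3, h4]
    linarith [hsymij, hxg2]
  rw [hc] at key
  set a := (x i - x j) ⬝ᵥ (x i - x j) with ha
  set b := (g i - g j) ⬝ᵥ (g i - g j) with hb
  set c := (g i - g j) ⬝ᵥ (x i - x j) with hcc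
  rw [ge_iff_le, ← sub_nonneg]
  have h2 : 2 * (1 - μ / L) * (f i - f j - g j ⬝ᵥ (x i - x j)) -
      (1 / L * b + μ * a - 2 * μ / L * c) =
      (1 / L) * (L * c - b - μ * L * a + μ * c) := by
    have h3 : 2 * (f i - f j - g j ⬝ᵥ (x i - x j)) = c := hfe
    rw [dotProduct_sub] at h3
    have h4 : f i - f j - (g j ⬝ᵥ x i - g j ⬝ᵥ x j) = c / 2 := by linarith
    field_simp
    rw [dotProduct_sub, h4]
    ring
  rw [h2]
  exact mul_nonneg (by positivity) key
end
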